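/- arXiv:2207.01965 — 11 statements merged into one kernel-verified Lean document; each statement's English description precedes it below -/
import Mathlib

section
/- Let n ≥ 1 and let A, B ∈ Mₙ(ℂ) satisfy ‖A‖ = 1 = ‖B‖ in the operator norm induced by the Euclidean norm on ℂⁿ. If ‖A + λB‖² = 1 + |λ|² for all λ ∈ ℂ, then for every λ ∈ ℂ the matrix A + λB is not invertible (equivalently, det(A + λB) = 0 for all λ ∈ ℂ). -/
open scoped Matrix.Norms.L2Operator

open Matrix Polynomial in
/-- A determinant of a quadratic (in `z`) matrix family that vanishes on an infinite
set vanishes everywhere. -/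
lemma det_quad_family_eq_zero {n : ℕ} (M0 M1 M2 : Matrix (Fin n) (Fin n) ℂ)
    {S : Set ℂ} (hS : S.Infinite)
    (hv : ∀ z ∈ S, (M0 + z • M1 + (z * z) • M2).det = 0) (w : ℂ) :
    (M0 + w • M1 + (w * w) • M2).det = 0 := by
  classical
  set P : Matrix (Fin n) (Fin n) (Polynomial ℂ) :=
    M0.map C + (X : ℂ[X]) • M1.map C + ((X : ℂ[X]) * X) • M2.map C with hP
  have heval : ∀ z : ℂ, P.det.eval z = (M0 + z • M1 + (z * z) • M2).det := by
    intro z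
    have h1 : (evalRingHom z) P.det = (P.map (evalRingHom z)).det :=
      RingHom.map_det (evalRingHom z) P
    have h2 : P.map (evalRingHom z) = M0 + z • M1 + (z * z) • M2 := by
      ext i j
      simp [hP, Matrix.map_apply, Matrix.add_apply, Matrix.smul_apply, smul_eq_mul]
      ring
    rw [h2] at h1
    simpa using h1
  have hzero : P.det = 0 := by
    apply Polynomial.eq_zero_of_infinite_isRoot
    apply hS.mono
    intro z hz
    simp only [Set.mem_setOf_eq, IsRoot, heval]
    exact hv z hz
  rw [← heval w, hzero, eval_zero]

open Matrix in
/-- `‖M‖ ^ 2` is an eigenvalue of `Mᴴ * M`. -/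
lemma det_conjTranspose_mul_self_sub_sq_norm {n : ℕ} (hn : 1 ≤ n)
    (M : Matrix (Fin n) (Fin n) ℂ) :
    (Mᴴ * M - ((‖M‖ ^ 2 : ℝ) : ℂ) • 1).det = 0 := by
  classical
  set T : EuclideanSpace ℂ (Fin n) →L[ℂ] EuclideanSpace ℂ (Fin n) :=
    toEuclideanCLM (n := Fin n) (𝕜 := ℂ) M with hT
  have hnorm : ‖M‖ = ‖T‖ := Matrix.cstar_norm_def M
  have hne : (Metric.sphere (0 : EuclideanSpace ℂ (Fin n)) 1).Nonempty := by
    refine ⟨EuclideanSpace.single ⟨0, hn⟩ (1 : ℂ), ?_⟩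
    simp [mem_sphere_zero_iff_norm, EuclideanSpace.norm_single]
  obtain ⟨x, hxs, hmax⟩ := (isCompact_sphere (0 : EuclideanSpace ℂ (Fin n)) 1).exists_isMaxOn
    hne ((continuous_norm.comp T.continuous).continuousOn)
  have hx1 : ‖x‖ = 1 := mem_sphere_zero_iff_norm.mp hxs
  have hmax' : ∀ z ∈ Metric.sphere (0 : EuclideanSpace ℂ (Fin n)) 1, ‖T z‖ ≤ ‖T x‖ :=
    fun z hz => hmax hz
  -- the norm is attained at x
  have hattain : ‖T x‖ = ‖M‖ := by
    rw [hnorm]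
    have hub : ‖T x‖ ≤ ‖T‖ := by
      have h := T.le_opNorm x
      rwa [hx1, mul_one] at h
    refine le_antisymm hub ?_
    refine T.opNorm_le_bound (norm_nonneg _) fun y => ?_
    rcases eq_or_ne y 0 with rfl | hy
    · simp
    · have hyn : ‖y‖ ≠ 0 := norm_ne_zero_iff.mpr hy
      have hmem : ((‖y‖⁻¹ : ℝ) : ℂ) • y ∈ Metric.sphere (0 : EuclideanSpace ℂ (Fin n)) 1 := by
        simp [mem_sphere_zero_iff_norm, norm_smul, abs_of_nonneg (inv_nonneg.mpr (norm_nonneg y)),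
          inv_mul_cancel₀ hyn]
      have hle := hmax' _ hmem
      rw [_root_.map_smul, norm_smul] at hle
      have h2 : ‖((‖y‖⁻¹ : ℝ) : ℂ)‖ = ‖y‖⁻¹ := by
        simp [abs_of_nonneg (inv_nonneg.mpr (norm_nonneg y))]
      rw [h2] at hle
      calc ‖T y‖ = ‖y‖ * (‖y‖⁻¹ * ‖T y‖) := by field_simp
      _ ≤ ‖y‖ * ‖T x‖ := mul_le_mul_of_nonneg_left hle (norm_nonneg y)
      _ = ‖T x‖ * ‖y‖ := mul_comm _ _
  have hadj : toEuclideanCLM (n := Fin n) (𝕜 := ℂ) (Mᴴ) = ContinuousLinearMap.adjoint T := by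
    rw [← Matrix.star_eq_conjTranspose, map_star, hT, ContinuousLinearMap.star_eq_adjoint]
  set y : EuclideanSpace ℂ (Fin n) := ContinuousLinearMap.adjoint T (T x) with hy
  have hyx : (inner ℂ y x : ℂ) = ((‖M‖ ^ 2 : ℝ) : ℂ) := by
    rw [hy, ContinuousLinearMap.adjoint_inner_left, inner_self_eq_norm_sq_to_K, hattain]
    norm_num
  have hyn : ‖y‖ ≤ ‖M‖ ^ 2 := by
    calc ‖y‖ ≤ ‖ContinuousLinearMap.adjoint T‖ * ‖T x‖ := ContinuousLinearMap.le_opNorm _ _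
    _ = ‖T‖ * ‖T x‖ := by rw [ContinuousLinearMap.adjoint.norm_map]
    _ = ‖M‖ ^ 2 := by rw [hattain, ← hnorm]; ring
  have hkey : y = ((‖M‖ ^ 2 : ℝ) : ℂ) • x := by
    have hexp : ‖y - ((‖M‖ ^ 2 : ℝ) : ℂ) • x‖ ^ 2 =
        ‖y‖ ^ 2 - 2 * RCLike.re (inner ℂ y (((‖M‖ ^ 2 : ℝ) : ℂ) • x) : ℂ) +
          ‖((‖M‖ ^ 2 : ℝ) : ℂ) • x‖ ^ 2 := norm_sub_sq _ _
    have h2 : RCLike.re ((inner ℂ y (((‖M‖ ^ 2 : ℝ) : ℂ) • x)) : ℂ) = ‖M‖ ^ 2 * ‖M‖ ^ 2 := by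
      rw [inner_smul_right, hyx, ← Complex.ofReal_mul]
      exact RCLike.ofReal_re _
    have h3 : ‖((‖M‖ ^ 2 : ℝ) : ℂ) • x‖ ^ 2 = (‖M‖ ^ 2) ^ 2 := by
      rw [norm_smul, hx1]
      simp [abs_of_nonneg (sq_nonneg ‖M‖)]
    have h4 : ‖y - ((‖M‖ ^ 2 : ℝ) : ℂ) • x‖ ^ 2 ≤ 0 := by
      rw [hexp, h2, h3]
      nlinarith [hyn, norm_nonneg y, sq_nonneg ‖M‖]
    have h5 : ‖y - ((‖M‖ ^ 2 : ℝ) : ℂ) • x‖ = 0 := by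
      nlinarith [norm_nonneg (y - ((‖M‖ ^ 2 : ℝ) : ℂ) • x)]
    exact sub_eq_zero.mp (norm_eq_zero.mp h5)
  -- translate to determinant
  have hCLM : toEuclideanCLM (n := Fin n) (𝕜 := ℂ) (Mᴴ * M) x = ((‖M‖ ^ 2 : ℝ) : ℂ) • x := by
    rw [_root_.map_mul, hadj]
    rw [ContinuousLinearMap.mul_apply, ← hy, hkey]
  set v : Fin n → ℂ := WithLp.equiv 2 (Fin n → ℂ) x with hv
  have hmv : (Mᴴ * M) *ᵥ v = ((‖M‖ ^ 2 : ℝ) : ℂ) • v := by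
    have h0 := Matrix.ofLp_toEuclideanCLM (𝕜 := ℂ) (Mᴴ * M) x
    rw [hCLM] at h0
    exact h0.symm
  rw [← Matrix.exists_mulVec_eq_zero_iff]
  refine ⟨v, ?_, ?_⟩
  · intro h0
    apply one_ne_zero (α := ℝ)
    rw [← hx1]
    have hx0 : x = 0 := by
      have h1 := congrArg (WithLp.equiv 2 (Fin n → ℂ)).symm (hv ▸ h0 : WithLp.equiv 2 (Fin n → ℂ) x = 0)
      simpa using h1
    simp [hx0]
  · rw [Matrix.sub_mulVec, hmv, Matrix.smul_mulVec, Matrix.one_mulVec, sub_self]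

open Matrix in
lemma conjT_mul_expand {n : ℕ} (A B : Matrix (Fin n) (Fin n) ℂ) (c d : ℂ) :
    (Aᴴ + c • Bᴴ) * (A + d • B)
      = Aᴴ * A + d • (Aᴴ * B) + c • (Bᴴ * A) + (d * c) • (Bᴴ * B) := by
  rw [Matrix.add_mul, Matrix.mul_add, Matrix.mul_add, Matrix.smul_mul, Matrix.smul_mul,
    Matrix.mul_smul, Matrix.mul_smul, smul_smul, mul_comm c d]
  abel

open Matrix in
/-- If `A, B ∈ Mₙ(ℂ)` have operator norm one and are Pythagoras orthogonal
(`‖A + λB‖² = 1 + |λ|²` for all `λ`), then `A + λB` is singular for every `λ ∈ ℂ`. -/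
theorem pythagoras_orthogonal_not_invertible
    {n : ℕ} (hn : 1 ≤ n) (A B : Matrix (Fin n) (Fin n) ℂ)
    (hA : ‖A‖ = 1) (hB : ‖B‖ = 1)
    (h : ∀ l : ℂ, ‖A + l • B‖ ^ 2 = 1 + ‖l‖ ^ 2) :
    ∀ l : ℂ, (A + l • B).det = 0 := by
  classical
  set G : ℂ → ℂ → Matrix (Fin n) (Fin n) ℂ := fun l m =>
    Aᴴ * A + l • (Aᴴ * B) + m • (Bᴴ * A) + (l * m) • (Bᴴ * B) - (1 + l * m) • 1 with hGdef
  have hGmul : ∀ l m : ℂ, G l m = (Aᴴ + m • Bᴴ) * (A + l • B) - (1 + l * m) • 1 := by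
    intro l m
    rw [conjT_mul_expand A B m l, hGdef]
  -- the diagonal vanishing coming from the norm hypothesis
  have hdiag : ∀ l : ℂ, (G l (starRingEnd ℂ l)).det = 0 := by
    intro l
    have h0 := det_conjTranspose_mul_self_sub_sq_norm hn (A + l • B)
    rw [h l] at h0
    have hscal : (1 : ℂ) + l * starRingEnd ℂ l = ((1 + ‖l‖ ^ 2 : ℝ) : ℂ) := by
      rw [Complex.mul_conj, Complex.normSq_eq_norm_sq]
      push_cast
      ring
    have hct : (A + l • B)ᴴ = Aᴴ + starRingEnd ℂ l • Bᴴ := by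
      rw [Matrix.conjTranspose_add, Matrix.conjTranspose_smul]
      rfl
    rw [hGmul, hscal, ← hct]
    exact h0
  -- Step A : for every real t, `det (G z (z - 2 t i)) = 0` for all `z`.
  have stepA : ∀ t : ℝ, ∀ z : ℂ, (G z (z - 2 * t * Complex.I)).det = 0 := by
    intro t z
    have hfam : ∀ w : ℂ, G w (w - 2 * t * Complex.I) =
        (Aᴴ * A - (2 * t * Complex.I) • (Bᴴ * A) - 1) +
          w • (Aᴴ * B + Bᴴ * A - (2 * t * Complex.I) • (Bᴴ * B) + (2 * t * Complex.I) • 1) +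
          (w * w) • (Bᴴ * B - 1) := by
      intro w
      rw [hGdef]
      module
    rw [hfam]
    refine det_quad_family_eq_zero _ _ _ (S := {w : ℂ | w.im = t}) ?_ ?_ z
    · have hinj : Function.Injective (fun s : ℝ => Complex.mk s t) := by
        intro a b hab
        simpa using congrArg Complex.re hab
      exact Set.infinite_of_injective_forall_mem hinj (fun a => by simp [Set.mem_setOf_eq])
    · intro w hw
      rw [← hfam w]
      have hw' : w.im = t := hw
      have hwc : w - 2 * t * Complex.I = starRingEnd ℂ w := by
        apply Complex.ext
        · simp
        · simp [hw']
          ring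
      rw [hwc]
      exact hdiag w
  -- Step B : `det (G l m) = 0` for all `l m`.
  have stepB : ∀ l m : ℂ, (G l m).det = 0 := by
    intro l m
    have hfam : ∀ w : ℂ, G l (l - w) =
        (G l l) + w • (l • (1 : Matrix (Fin n) (Fin n) ℂ) - Bᴴ * A - l • (Bᴴ * B)) +
          (w * w) • (0 : Matrix (Fin n) (Fin n) ℂ) := by
      intro w
      rw [hGdef]
      module
    have h0 := det_quad_family_eq_zero (G l l)
      (l • (1 : Matrix (Fin n) (Fin n) ℂ) - Bᴴ * A - l • (Bᴴ * B)) 0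
      (S := {w : ℂ | ∃ t : ℝ, w = 2 * t * Complex.I}) ?_ ?_ (l - m)
    · rw [← hfam (l - m)] at h0
      simpa using h0
    · have hinj : Function.Injective (fun t : ℝ => 2 * (t : ℂ) * Complex.I) := by
        intro a b hab
        have := congrArg Complex.im hab
        simpa using this
      exact Set.infinite_of_injective_forall_mem hinj (fun t => ⟨t, rfl⟩)
    · rintro w ⟨t, rfl⟩
      rw [← hfam (2 * t * Complex.I)]
      exact stepA t l
  -- the determinant polynomial
  set p : Polynomial ℂ :=
    (A.map Polynomial.C + (Polynomial.X : Polynomial ℂ) • B.map Polynomial.C).det with hp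
  have hpeval : ∀ z : ℂ, p.eval z = (A + z • B).det := by
    intro z
    have h1 : (Polynomial.evalRingHom z)
        (A.map Polynomial.C + (Polynomial.X : Polynomial ℂ) • B.map Polynomial.C).det
        = ((A.map Polynomial.C + (Polynomial.X : Polynomial ℂ) • B.map Polynomial.C).map
            (Polynomial.evalRingHom z)).det :=
      RingHom.map_det (Polynomial.evalRingHom z) _
    have h2 : (A.map Polynomial.C + (Polynomial.X : Polynomial ℂ) • B.map Polynomial.C).map
        (Polynomial.evalRingHom z) = A + z • B := by
      ext i j
      simp [Matrix.map_apply, Matrix.add_apply, Matrix.smul_apply, smul_eq_mul]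
      ring
    rw [h2] at h1
    simpa using h1
  -- the factorization step
  have hfac : ∀ l : ℂ, l ≠ 0 → p.eval l = 0 ∨ p.eval (-1 / starRingEnd ℂ l) = 0 := by
    intro l hl
    have hdet := stepB l (-1 / l)
    have hz : (1 : ℂ) + l * (-1 / l) = 0 := by
      field_simp
      norm_num
    rw [hGmul, hz, zero_smul, sub_zero, Matrix.det_mul] at hdet
    rcases mul_eq_zero.mp hdet with h1 | h2
    · right
      have hstar : star (-1 / starRingEnd ℂ l) = -1 / l := by
        rw [RCLike.star_def]
        rw [_root_.map_div₀, _root_.map_neg, _root_.map_one]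
        simp
      have hct : Aᴴ + (-1 / l) • Bᴴ = (A + (-1 / starRingEnd ℂ l) • B)ᴴ := by
        rw [Matrix.conjTranspose_add, Matrix.conjTranspose_smul, hstar]
      rw [hct, Matrix.det_conjTranspose] at h1
      rw [hpeval]
      exact star_eq_zero.mp h1
    · left
      rw [hpeval]
      exact h2
  -- conclude that p vanishes identically
  have hp0 : p = 0 := by
    by_contra hne
    have hfin : {z : ℂ | p.IsRoot z}.Finite := Polynomial.finite_setOf_isRoot hne
    have hSinf : (({(0 : ℂ)} ∪ {z : ℂ | p.IsRoot z})ᶜ).Infinite :=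
      Set.Finite.infinite_compl ((Set.finite_singleton 0).union hfin)
    have himg : ∀ z ∈ (({(0 : ℂ)} ∪ {z : ℂ | p.IsRoot z})ᶜ),
        (-1 / starRingEnd ℂ z) ∈ {z : ℂ | p.IsRoot z} := by
      intro z hz
      simp only [Set.mem_compl_iff, Set.mem_union, Set.mem_singleton_iff,
        Set.mem_setOf_eq, not_or] at hz
      rcases hfac z hz.1 with h1 | h2
      · exact absurd h1 hz.2
      · exact h2
    have hinj : Set.InjOn (fun z : ℂ => -1 / starRingEnd ℂ z)
        (({(0 : ℂ)} ∪ {z : ℂ | p.IsRoot z})ᶜ) := by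
      intro a ha b hb hab
      simp only [Set.mem_compl_iff, Set.mem_union, Set.mem_singleton_iff, not_or] at ha hb
      have ha0 : starRingEnd ℂ a ≠ 0 := by simpa using ha.1
      have hb0 : starRingEnd ℂ b ≠ 0 := by simpa using hb.1
      have h1 := congrArg (fun z : ℂ => (-1 : ℂ) / z) hab
      simp only [div_div_eq_mul_div, neg_mul, neg_neg, one_mul] at h1
      have hab' : starRingEnd ℂ a = starRingEnd ℂ b := by
        simpa using h1
      simpa using congrArg (starRingEnd ℂ) hab'
    have : {z : ℂ | p.IsRoot z}.Infinite :=
      Set.Infinite.mono (Set.image_subset_iff.mpr himg) (hSinf.image hinj)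
    exact this hfin
  intro l
  rw [← hpeval l, hp0, Polynomial.eval_zero]
end

section
/- Let n ≥ 1 and let A, B ∈ Mₙ(ℂ) be Hermitian matrices with B positive semidefinite. If det(A + λB) = 0 for all λ ∈ ℂ, then ker A ∩ ker B ≠ 0, i.e. there exists a nonzero vector v ∈ ℂⁿ with Av = 0 and Bv = 0. -/
open scoped Matrix ComplexOrder

private lemma herm_flip {n : ℕ} {M : Matrix (Fin n) (Fin n) ℂ} (hM : M.IsHermitian)
    (x y : Fin n → ℂ) : star (star x ⬝ᵥ M *ᵥ y) = star y ⬝ᵥ M *ᵥ x := by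
  rw [← Matrix.star_dotProduct, Matrix.star_mulVec, ← Matrix.dotProduct_mulVec, hM.eq]

private lemma dp_sum_left {m n : ℕ} (f : Fin m → (Fin n → ℂ)) (y : Fin n → ℂ) :
    (∑ i, f i) ⬝ᵥ y = ∑ i, f i ⬝ᵥ y := by
  simp [dotProduct, Finset.sum_apply, Finset.sum_mul]
  exact Finset.sum_comm

private lemma dp_sum_right {m n : ℕ} (x : Fin n → ℂ) (f : Fin m → (Fin n → ℂ)) :
    x ⬝ᵥ (∑ i, f i) = ∑ i, x ⬝ᵥ f i := by
  simp [dotProduct, Finset.sum_apply, Finset.mul_sum]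
  exact Finset.sum_comm

private lemma mulVec_sum' {m n : ℕ} (B : Matrix (Fin n) (Fin n) ℂ) (f : Fin m → (Fin n → ℂ)) :
    B *ᵥ (∑ i, f i) = ∑ i, B *ᵥ f i :=
  map_sum B.mulVecLin f Finset.univ

/-- If `A, B ∈ Mₙ(ℂ)` are Hermitian, `B` is positive semidefinite, and
`det(A + λB) = 0` for all `λ ∈ ℂ`, then the kernels of `A` and `B` have a nonzero
common vector. -/
theorem exists_common_kernel_vector
    {n : ℕ} (hn : 1 ≤ n) (A B : Matrix (Fin n) (Fin n) ℂ)
    (hA : A.IsHermitian) (hB : B.PosSemidef)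
    (hdet : ∀ l : ℂ, (A + l • B).det = 0) :
    ∃ v : Fin n → ℂ, v ≠ 0 ∧ A *ᵥ v = 0 ∧ B *ᵥ v = 0 := by
  have hv : ∀ i : Fin (n+1), ∃ v : Fin n → ℂ, v ≠ 0 ∧ (A + ((i : ℕ) : ℂ) • B) *ᵥ v = 0 :=
    fun i => Matrix.exists_mulVec_eq_zero_iff.mpr (hdet _)
  choose v hv0 hvk using hv
  have hexp : ∀ i j : Fin (n+1),
      star (v j) ⬝ᵥ A *ᵥ v i + ((i : ℕ) : ℂ) * (star (v j) ⬝ᵥ B *ᵥ v i) = 0 := by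
    intro i j
    have h := congrArg (fun w => star (v j) ⬝ᵥ w) (hvk i)
    simpa [Matrix.add_mulVec, Matrix.smul_mulVec, dotProduct_add,
      dotProduct_smul, smul_eq_mul] using h
  have key : ∀ i j : Fin (n+1), i ≠ j → star (v j) ⬝ᵥ B *ᵥ v i = 0 := by
    intro i j hij
    have s1 := hexp i j
    have s2 := congrArg star (hexp j i)
    rw [star_add, star_mul, herm_flip hA, herm_flip hB.1, star_zero] at s2
    simp only [star_natCast] at s2
    have hsub : (((i : ℕ) : ℂ) - ((j : ℕ) : ℂ)) * (star (v j) ⬝ᵥ B *ᵥ v i) = 0 := by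
      linear_combination s1 - s2
    have hne : (((i : ℕ) : ℂ) - ((j : ℕ) : ℂ)) ≠ 0 := by
      simp only [ne_eq, sub_eq_zero, Nat.cast_inj]
      exact fun h => hij (Fin.ext h)
    exact (mul_eq_zero.mp hsub).resolve_left hne
  have hdep : ¬ LinearIndependent ℂ v := by
    intro h
    have := h.fintype_card_le_finrank
    simp [Module.finrank_fintype_fun_eq_card] at this
  obtain ⟨g, hsum, k, hk⟩ := Fintype.not_linearIndependent_iff.mp hdep
  have hQ : ∑ i : Fin (n+1), (star (g i) * g i) * (star (v i) ⬝ᵥ B *ᵥ v i) = 0 := by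
    have h0 : star (∑ i, g i • v i) ⬝ᵥ B *ᵥ (∑ i, g i • v i) = 0 := by
      rw [hsum]; simp
    rw [star_sum, dp_sum_left, mulVec_sum'] at h0
    calc ∑ i : Fin (n+1), (star (g i) * g i) * (star (v i) ⬝ᵥ B *ᵥ v i)
        = ∑ j : Fin (n+1), star (g j • v j) ⬝ᵥ ∑ i, B *ᵥ (g i • v i) := ?_
      _ = 0 := h0
    refine Finset.sum_congr rfl fun j _ => ?_
    rw [dp_sum_right]
    rw [Finset.sum_eq_single j]
    · simp [star_smul, Matrix.mulVec_smul, smul_dotProduct, dotProduct_smul,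
        smul_eq_mul]; ring
    · intro i _ hij
      simp [star_smul, Matrix.mulVec_smul, smul_dotProduct, dotProduct_smul,
        smul_eq_mul, key i j hij]
    · simp
  have hterm : ∀ i : Fin (n+1), 0 ≤ (star (g i) * g i) * (star (v i) ⬝ᵥ B *ᵥ v i) :=
    fun i => mul_nonneg (star_mul_self_nonneg _) (hB.dotProduct_mulVec_nonneg _)
  have hzero : (star (g k) * g k) * (star (v k) ⬝ᵥ B *ᵥ v k) = 0 :=
    (Finset.sum_eq_zero_iff_of_nonneg (fun i _ => hterm i)).mp hQ k (Finset.mem_univ k)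
  have hBk : B *ᵥ v k = 0 := by
    have hgk : star (g k) * g k ≠ 0 := by
      simp [mul_eq_zero, hk, star_eq_zero]
    exact (hB.dotProduct_mulVec_zero_iff _).mp ((mul_eq_zero.mp hzero).resolve_left hgk)
  refine ⟨v k, hv0 k, ?_, hBk⟩
  have := hvk k
  rw [Matrix.add_mulVec, Matrix.smul_mulVec, hBk, smul_zero, add_zero] at this
  exact this
end

section
/- Let n ≥ 1 and let A, B ∈ Mₙ(ℂ) be nonzero Hermitian matrices with B positive semidefinite. Then A and B are not Pythagoras orthogonal: there exists λ ∈ ℂ such that ‖A + λB‖² ≠ ‖A‖² + |λ|²‖B‖², where ‖·‖ is the operator norm induced by the Euclidean norm on ℂⁿ. -/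
open scoped Matrix.Norms.L2Operator ComplexOrder
open Matrix

namespace PythAux


variable {n : ℕ}

lemma toCLM_selfAdj (M : Matrix (Fin n) (Fin n) ℂ) (hM : M.IsHermitian) :
    _root_.IsSelfAdjoint (Matrix.toEuclideanCLM (𝕜 := ℂ) M) := by
  rw [_root_.IsSelfAdjoint, ← map_star]; exact congrArg _ hM

lemma heig' (M : Matrix (Fin n) (Fin n) ℂ) (hM : M.IsHermitian) (i : Fin n) :
    M *ᵥ (WithLp.equiv 2 _ (hM.eigenvectorBasis i)) =
      ((hM.eigenvalues i : ℂ)) • (WithLp.equiv 2 _ (hM.eigenvectorBasis i)) := by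
  rw [WithLp.equiv_apply, hM.mulVec_eigenvectorBasis i]
  funext j
  simp [Complex.real_smul]

lemma hTb (M : Matrix (Fin n) (Fin n) ℂ) (hM : M.IsHermitian) (i : Fin n) :
    Matrix.toEuclideanCLM (𝕜 := ℂ) M (hM.eigenvectorBasis i)
      = ((hM.eigenvalues i : ℂ)) • (hM.eigenvectorBasis i) := by
  apply (WithLp.equiv 2 _).injective
  show M *ᵥ (WithLp.equiv 2 _ (hM.eigenvectorBasis i)) = _
  rw [heig' M hM i]
  simp

lemma repr_T (M : Matrix (Fin n) (Fin n) ℂ) (hM : M.IsHermitian) (y : EuclideanSpace ℂ (Fin n)) (i : Fin n) :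
    hM.eigenvectorBasis.repr (Matrix.toEuclideanCLM (𝕜 := ℂ) M y) i
      = (hM.eigenvalues i : ℂ) * hM.eigenvectorBasis.repr y i := by
  have hsym := (ContinuousLinearMap.isSelfAdjoint_iff_isSymmetric.mp (toCLM_selfAdj M hM))
  have e1 : (inner ℂ (hM.eigenvectorBasis i) (Matrix.toEuclideanCLM (𝕜 := ℂ) M y) : ℂ)
      = inner ℂ (Matrix.toEuclideanCLM (𝕜 := ℂ) M (hM.eigenvectorBasis i)) y :=
    (hsym _ _).symm
  rw [OrthonormalBasis.repr_apply_apply, OrthonormalBasis.repr_apply_apply,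
    e1, hTb M hM i, inner_smul_left]
  simp

lemma norm_T_le (M : Matrix (Fin n) (Fin n) ℂ) (hM : M.IsHermitian) (c : ℝ) (hc0 : 0 ≤ c)
    (hc : ∀ i, |hM.eigenvalues i| ≤ c) : ‖M‖ ≤ c := by
  rw [Matrix.cstar_norm_def]
  refine ContinuousLinearMap.opNorm_le_bound _ hc0 (fun y => ?_)
  set T := Matrix.toEuclideanCLM (𝕜 := ℂ) M
  have h1 : ‖T y‖ = ‖hM.eigenvectorBasis.repr (T y)‖ := (hM.eigenvectorBasis.repr.norm_map _).symm
  have h2 : ‖y‖ = ‖hM.eigenvectorBasis.repr y‖ := (hM.eigenvectorBasis.repr.norm_map _).symm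
  rw [h1, h2, EuclideanSpace.norm_eq, EuclideanSpace.norm_eq]
  rw [← Real.sqrt_sq hc0, ← Real.sqrt_mul (by positivity)]
  apply Real.sqrt_le_sqrt
  rw [Finset.mul_sum]
  apply Finset.sum_le_sum
  intro i _
  rw [repr_T M hM y i, norm_mul]
  have : ‖((hM.eigenvalues i : ℝ) : ℂ)‖ = |hM.eigenvalues i| := by
    simp [Complex.norm_real]
  rw [this, mul_pow]
  apply mul_le_mul_of_nonneg_right _ (by positivity)
  exact pow_le_pow_left₀ (abs_nonneg _) (hc i) 2

lemma abs_eig_le_norm (M : Matrix (Fin n) (Fin n) ℂ) (hM : M.IsHermitian) (i : Fin n) :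
    |hM.eigenvalues i| ≤ ‖M‖ := by
  have h1 : ‖Matrix.toEuclideanCLM (𝕜 := ℂ) M (hM.eigenvectorBasis i)‖
      ≤ ‖M‖ * ‖hM.eigenvectorBasis i‖ := by
    rw [Matrix.cstar_norm_def]
    exact ContinuousLinearMap.le_opNorm _ _
  rw [hTb M hM i, norm_smul, hM.eigenvectorBasis.orthonormal.1 i] at h1
  simpa using h1

lemma exists_unit_eigen (hn : 1 ≤ n) (M : Matrix (Fin n) (Fin n) ℂ) (hM : M.IsHermitian) :
    ∃ (x : EuclideanSpace ℂ (Fin n)) (μ : ℝ), ‖x‖ = 1 ∧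
      M *ᵥ (WithLp.equiv 2 _ x) = (μ : ℂ) • (WithLp.equiv 2 _ x) ∧ |μ| = ‖M‖ := by
  have hne : Nonempty (Fin n) := ⟨⟨0, hn⟩⟩
  obtain ⟨i0, hi0⟩ := Finite.exists_max (fun i => |hM.eigenvalues i|)
  refine ⟨hM.eigenvectorBasis i0, hM.eigenvalues i0,
    hM.eigenvectorBasis.orthonormal.1 i0, heig' M hM i0, le_antisymm (abs_eig_le_norm M hM i0) ?_⟩
  exact norm_T_le M hM _ (abs_nonneg _) hi0

/-- the (complex-valued) quadratic form of a matrix on Euclidean space -/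
noncomputable def qf (M : Matrix (Fin n) (Fin n) ℂ) (x : EuclideanSpace ℂ (Fin n)) : ℂ :=
  star (WithLp.equiv 2 _ x) ⬝ᵥ (M *ᵥ (WithLp.equiv 2 _ x))

lemma qf_eq_inner (M : Matrix (Fin n) (Fin n) ℂ) (x : EuclideanSpace ℂ (Fin n)) :
    qf M x = inner ℂ x (Matrix.toEuclideanCLM (𝕜 := ℂ) M x) := by
  rw [qf, EuclideanSpace.inner_eq_star_dotProduct, dotProduct_comm]; rfl

lemma continuous_qf (M : Matrix (Fin n) (Fin n) ℂ) : Continuous (qf (n := n) M) := by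
  simp only [funext (qf_eq_inner M)]
  exact continuous_id.inner (Matrix.toEuclideanCLM (𝕜 := ℂ) M).continuous

lemma norm_qf_le (M : Matrix (Fin n) (Fin n) ℂ) (x : EuclideanSpace ℂ (Fin n)) :
    ‖qf M x‖ ≤ ‖M‖ * ‖x‖ ^ 2 := by
  rw [qf_eq_inner]
  calc ‖(inner ℂ x (Matrix.toEuclideanCLM (𝕜 := ℂ) M x) : ℂ)‖
      ≤ ‖x‖ * ‖Matrix.toEuclideanCLM (𝕜 := ℂ) M x‖ := norm_inner_le_norm _ _
    _ ≤ ‖x‖ * (‖M‖ * ‖x‖) := by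
        apply mul_le_mul_of_nonneg_left _ (norm_nonneg _)
        rw [Matrix.cstar_norm_def]
        exact ContinuousLinearMap.le_opNorm _ _
    _ = ‖M‖ * ‖x‖ ^ 2 := by ring

lemma qf_conj (M : Matrix (Fin n) (Fin n) ℂ) (hM : M.IsHermitian) (x : EuclideanSpace ℂ (Fin n)) :
    (starRingEnd ℂ) (qf M x) = qf M x := by
  have hsym := (ContinuousLinearMap.isSelfAdjoint_iff_isSymmetric.mp (toCLM_selfAdj M hM))
  rw [qf_eq_inner, inner_conj_symm]
  exact hsym _ _

lemma qf_im (M : Matrix (Fin n) (Fin n) ℂ) (hM : M.IsHermitian) (x : EuclideanSpace ℂ (Fin n)) :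
    (qf M x).im = 0 := Complex.conj_eq_iff_im.mp (qf_conj M hM x)

lemma qf_re_le (M : Matrix (Fin n) (Fin n) ℂ) (x : EuclideanSpace ℂ (Fin n)) :
    (qf M x).re ≤ ‖M‖ * ‖x‖ ^ 2 :=
  le_trans (Complex.re_le_norm _) (norm_qf_le M x)

lemma neg_qf_re_le (M : Matrix (Fin n) (Fin n) ℂ) (x : EuclideanSpace ℂ (Fin n)) :
    -(‖M‖ * ‖x‖ ^ 2) ≤ (qf M x).re := by
  have := le_trans (Complex.re_le_norm _) (norm_qf_le M x)
  have h1 : -(qf M x).re ≤ ‖qf M x‖ := by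
    have := Complex.abs_re_le_norm (qf M x)
    have h2 : |(qf M x).re| ≤ ‖qf M x‖ := by exact this
    linarith [neg_abs_le (qf M x).re]
  linarith [norm_qf_le M x]

end PythAux

open PythAux

/-- Nonzero Hermitian matrices `A, B ∈ Mₙ(ℂ)` with `B` positive semidefinite are never
Pythagoras orthogonal. -/
theorem hermitian_posSemidef_not_pythagoras_orthogonal
    {n : ℕ} (hn : 1 ≤ n) (A B : Matrix (Fin n) (Fin n) ℂ)
    (hA : A.IsHermitian) (hB : B.PosSemidef) (hA0 : A ≠ 0) (hB0 : B ≠ 0) :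
    ∃ l : ℂ, ‖A + l • B‖ ^ 2 ≠ ‖A‖ ^ 2 + ‖l‖ ^ 2 * ‖B‖ ^ 2 := by
  by_contra hcon
  push_neg at hcon
  have hApos : 0 < ‖A‖ := norm_pos_iff.mpr hA0
  have hBpos : 0 < ‖B‖ := norm_pos_iff.mpr hB0
  set M : ℝ → Matrix (Fin n) (Fin n) ℂ := fun r => A + (r : ℂ) • B with hMdef
  have hMherm : ∀ r : ℝ, (M r).IsHermitian := by
    intro r
    apply hA.add
    rw [Matrix.IsHermitian, conjTranspose_smul, hB.1.eq]
    simp [Complex.star_def, Complex.conj_ofReal]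
  have hnorm : ∀ r : ℝ, ‖M r‖ ^ 2 = ‖A‖ ^ 2 + r ^ 2 * ‖B‖ ^ 2 := by
    intro r
    have := hcon (r : ℂ)
    simpa [hMdef, Complex.norm_real, sq_abs] using this
  have hMge : ∀ r : ℝ, ‖A‖ ≤ ‖M r‖ := by
    intro r
    nlinarith [hnorm r, norm_nonneg (M r), norm_nonneg A, sq_nonneg r, sq_nonneg ‖B‖,
      sq_nonneg (r * ‖B‖)]
  have hMgt : ∀ r : ℝ, r ≠ 0 → ‖A‖ < ‖M r‖ := by
    intro r hr
    have h1 : 0 < r ^ 2 * ‖B‖ ^ 2 := by positivity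
    nlinarith [hnorm r, norm_nonneg (M r), norm_nonneg A]
  -- the sequence of times
  set t : ℕ → ℝ := fun k => 1 / (k + 1) with htdef
  have ht : ∀ k, 0 < t k := fun k => by positivity
  choose x μ hx1 hxe hμa using fun k => exists_unit_eigen hn (M (t k)) (hMherm (t k))
  set c : ℝ := ‖B‖ ^ 2 / ‖A‖ with hcdef
  have hc0 : 0 ≤ c := by positivity
  -- quadratic form decomposition
  have hqfM : ∀ (r : ℝ) (y : EuclideanSpace ℂ (Fin n)), qf (M r) y = qf A y + (r : ℂ) * qf B y := by
    intro r y
    simp only [hMdef]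
    simp [qf, add_mulVec, smul_mulVec, dotProduct_add, dotProduct_smul, smul_eq_mul]
  have hqfMre : ∀ (r : ℝ) (y : EuclideanSpace ℂ (Fin n)),
      (qf (M r) y).re = (qf A y).re + r * (qf B y).re := by
    intro r y
    rw [hqfM]
    simp [Complex.add_re, Complex.mul_re]
  -- eigen identity
  have hqx : ∀ k, qf (M (t k)) (x k) = ((μ k : ℝ) : ℂ) := by
    intro k
    rw [qf, hxe k, dotProduct_smul, smul_eq_mul]
    have h1 : star (WithLp.equiv 2 _ (x k)) ⬝ᵥ (WithLp.equiv 2 _ (x k)) = (inner ℂ (x k) (x k) : ℂ) := by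
      rw [EuclideanSpace.inner_eq_star_dotProduct, dotProduct_comm]; rfl
    rw [h1, inner_self_eq_norm_sq_to_K, hx1 k]
    simp
  have hβ0 : ∀ k, 0 ≤ (qf B (x k)).re := by
    intro k
    have := hB.dotProduct_mulVec_nonneg (WithLp.equiv 2 _ (x k))
    exact (Complex.le_def.mp this).1
  -- sign of eigenvalue
  have hμpos : ∀ k, μ k = ‖M (t k)‖ := by
    intro k
    rcases (abs_eq (norm_nonneg (M (t k)))).mp (hμa k) with h | h
    · exact h
    · exfalso
      have hid : (qf A (x k)).re + t k * (qf B (x k)).re = μ k := by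
        have := congrArg Complex.re (hqx k)
        rw [hqfMre] at this
        simpa using this
      have h2 := neg_qf_re_le A (x k)
      rw [hx1 k] at h2
      have h3 := hMgt (t k) (ne_of_gt (ht k))
      nlinarith [hβ0 k, ht k, mul_nonneg (le_of_lt (ht k)) (hβ0 k)]
  -- main identity
  have hid : ∀ k, (qf A (x k)).re + t k * (qf B (x k)).re = ‖M (t k)‖ := by
    intro k
    have := congrArg Complex.re (hqx k)
    rw [hqfMre] at this
    rw [← hμpos k]
    simpa using this
  -- gap bound
  have hgap : ∀ s : ℝ, ‖M (2 * s)‖ - ‖A‖ ≤ 2 * s ^ 2 * c := by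
    intro s
    have h1 := hnorm (2 * s)
    have h2 := hMge (2 * s)
    rw [hcdef, ← mul_div_assoc, le_div_iff₀ hApos]
    nlinarith [sq_nonneg (‖M (2 * s)‖ - ‖A‖)]
  -- bound on the B-form
  have hβle : ∀ k, (qf B (x k)).re ≤ 2 * t k * c := by
    intro k
    have h1 : (qf A (x k)).re + 2 * t k * (qf B (x k)).re ≤ ‖M (2 * t k)‖ := by
      have h0 := qf_re_le (M (2 * t k)) (x k)
      rw [hx1 k, hqfMre] at h0
      have h0' : (qf A (x k)).re + 2 * t k * (qf B (x k)).re ≤ ‖M (2 * t k)‖ * 1 ^ 2 := by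
        linarith [h0]
      simpa using h0'
    have h2 := hgap (t k)
    have h3 := hid k
    have h4 := hMge (t k)
    have h5 : t k * (qf B (x k)).re ≤ t k * (2 * t k * c) := by nlinarith
    exact le_of_mul_le_mul_left h5 (ht k)
  have hαge : ∀ k, ‖A‖ - 2 * (t k) ^ 2 * c ≤ (qf A (x k)).re := by
    intro k
    have h3 := hid k
    have h4 := hMge (t k)
    have h5 := hβle k
    have h6 := hβ0 k
    nlinarith [ht k]
  -- orthogonality to joint eigenvectors
  have hortho : ∀ (k : ℕ) (v : EuclideanSpace ℂ (Fin n)),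
      A *ᵥ (WithLp.equiv 2 _ v) = ((‖A‖ : ℝ) : ℂ) • (WithLp.equiv 2 _ v) →
      B *ᵥ (WithLp.equiv 2 _ v) = 0 →
      (inner ℂ (x k) v : ℂ) = 0 := by
    intro k v hAv hBv
    have h1 : M (t k) *ᵥ (WithLp.equiv 2 _ v) = ((‖A‖ : ℝ) : ℂ) • (WithLp.equiv 2 _ v) := by
      simp only [hMdef, add_mulVec, smul_mulVec, hAv, hBv, smul_zero, add_zero]
    have h2 : star (WithLp.equiv 2 _ (x k)) ⬝ᵥ (M (t k) *ᵥ (WithLp.equiv 2 _ v))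
        = ((‖A‖ : ℝ) : ℂ) * (star (WithLp.equiv 2 _ (x k)) ⬝ᵥ (WithLp.equiv 2 _ v)) := by
      rw [h1, dotProduct_smul, smul_eq_mul]
    have h3 : star (WithLp.equiv 2 _ (x k)) ⬝ᵥ (M (t k) *ᵥ (WithLp.equiv 2 _ v))
        = ((μ k : ℝ) : ℂ) * (star (WithLp.equiv 2 _ (x k)) ⬝ᵥ (WithLp.equiv 2 _ v)) := by
      rw [dotProduct_mulVec]
      have h4 : star (WithLp.equiv 2 _ (x k)) ᵥ* (M (t k))
          = star (M (t k) *ᵥ (WithLp.equiv 2 _ (x k))) := by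
        rw [star_mulVec, (hMherm (t k)).eq]
      rw [h4, hxe k, star_smul, smul_dotProduct]
      simp [Complex.star_def, Complex.conj_ofReal, smul_eq_mul]
    have h6 := h2.symm.trans h3
    have h7 : ((‖A‖ : ℝ) : ℂ) ≠ ((μ k : ℝ) : ℂ) := by
      simp only [ne_eq, Complex.ofReal_inj]
      have := hMgt (t k) (ne_of_gt (ht k))
      rw [hμpos k]
      exact ne_of_lt this
    have h8 : star (WithLp.equiv 2 _ (x k)) ⬝ᵥ (WithLp.equiv 2 _ v) = 0 := by
      by_contra hne
      exact h7 (mul_right_cancel₀ hne h6)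
    rw [EuclideanSpace.inner_eq_star_dotProduct, dotProduct_comm]
    exact h8
  -- pass to a convergent subsequence
  have hmem : ∀ k, x k ∈ Metric.sphere (0 : EuclideanSpace ℂ (Fin n)) 1 := by
    intro k
    rw [mem_sphere_zero_iff_norm]
    exact hx1 k
  obtain ⟨v₀, hv₀mem, φ, hφmono, hconv⟩ :=
    (isCompact_sphere (0 : EuclideanSpace ℂ (Fin n)) 1).tendsto_subseq hmem
  have hv₀ : ‖v₀‖ = 1 := by rwa [mem_sphere_zero_iff_norm] at hv₀mem
  have hxconv : Filter.Tendsto (fun k => x (φ k)) Filter.atTop (nhds v₀) := hconv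
  have htφ : Filter.Tendsto (fun k => t (φ k)) Filter.atTop (nhds 0) :=
    tendsto_one_div_add_atTop_nhds_zero_nat.comp hφmono.tendsto_atTop
  have hαconv : Filter.Tendsto (fun k => (qf A (x (φ k))).re) Filter.atTop (nhds ((qf A v₀).re)) :=
    ((Complex.continuous_re.comp (continuous_qf A)).tendsto v₀).comp hxconv
  have hβconv : Filter.Tendsto (fun k => (qf B (x (φ k))).re) Filter.atTop (nhds ((qf B v₀).re)) :=
    ((Complex.continuous_re.comp (continuous_qf B)).tendsto v₀).comp hxconv
  have hαlim : ‖A‖ ≤ (qf A v₀).re := by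
    have h0 : Filter.Tendsto (fun k => ‖A‖ - 2 * (t (φ k)) ^ 2 * c) Filter.atTop
        (nhds (‖A‖ - 2 * 0 ^ 2 * c)) :=
      tendsto_const_nhds.sub (((htφ.pow 2).const_mul 2).mul_const c)
    have h1 := le_of_tendsto_of_tendsto' h0 hαconv (fun k => hαge (φ k))
    simpa using h1
  have hβlim : (qf B v₀).re ≤ 0 := by
    have h0 : Filter.Tendsto (fun k => 2 * t (φ k) * c) Filter.atTop (nhds (2 * 0 * c)) :=
      (htφ.const_mul 2).mul_const c
    have h1 := le_of_tendsto_of_tendsto' hβconv h0 (fun k => hβle (φ k))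
    simpa using h1
  -- B kills v₀
  have hBq : qf B v₀ = 0 := by
    have h2 : (0 : ℂ) ≤ qf B v₀ := hB.dotProduct_mulVec_nonneg (WithLp.equiv 2 _ v₀)
    rcases Complex.le_def.mp h2 with ⟨hre, him⟩
    simp only [Complex.zero_re, Complex.zero_im] at hre him
    apply Complex.ext
    · simp only [Complex.zero_re]; linarith
    · simp only [Complex.zero_im]; exact him.symm
  have hBv₀ : B *ᵥ (WithLp.equiv 2 _ v₀) = 0 := (hB.dotProduct_mulVec_zero_iff _).mp hBq
  -- A has v₀ as top eigenvector
  set C : Matrix (Fin n) (Fin n) ℂ := ((‖A‖ : ℝ) : ℂ) • 1 - A with hCdef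
  have hCherm : C.IsHermitian := by
    apply Matrix.IsHermitian.sub _ hA
    rw [Matrix.IsHermitian, conjTranspose_smul, conjTranspose_one]
    simp [Complex.star_def, Complex.conj_ofReal]
  have hqfC : ∀ y : EuclideanSpace ℂ (Fin n),
      qf C y = ((‖A‖ : ℝ) : ℂ) * ((‖y‖ : ℝ) : ℂ) ^ 2 - qf A y := by
    intro y
    have h1 : star (WithLp.equiv 2 _ y) ⬝ᵥ (WithLp.equiv 2 _ y) = (inner ℂ y y : ℂ) := by
      rw [EuclideanSpace.inner_eq_star_dotProduct, dotProduct_comm]; rfl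
    simp only [hCdef, qf, sub_mulVec, smul_mulVec, one_mulVec, dotProduct_sub,
      dotProduct_smul, smul_eq_mul, h1]
    rw [inner_self_eq_norm_sq_to_K]
    rfl
  have hCpsd : C.PosSemidef := by
    refine Matrix.posSemidef_iff_dotProduct_mulVec.mpr ⟨hCherm, fun v => ?_⟩
    have h2 : star v ⬝ᵥ C *ᵥ v = qf C ((WithLp.equiv 2 (Fin n → ℂ)).symm v) := rfl
    rw [h2, Complex.le_def]
    refine ⟨?_, (qf_im C hCherm _).symm⟩
    rw [hqfC]
    have h3 := qf_re_le A ((WithLp.equiv 2 (Fin n → ℂ)).symm v)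
    have hcast : ((‖A‖ : ℝ) : ℂ) * ((‖(WithLp.equiv 2 (Fin n → ℂ)).symm v‖ : ℝ) : ℂ) ^ 2
        = (((‖A‖ * ‖(WithLp.equiv 2 (Fin n → ℂ)).symm v‖ ^ 2 : ℝ)) : ℂ) := by
      push_cast
      ring
    rw [hcast]
    simp only [Complex.sub_re, Complex.zero_re, Complex.ofReal_re]
    linarith
  have hCq : qf C v₀ = 0 := by
    have h2 : (0 : ℂ) ≤ qf C v₀ := hCpsd.dotProduct_mulVec_nonneg (WithLp.equiv 2 _ v₀)
    rcases Complex.le_def.mp h2 with ⟨hre, him⟩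
    simp only [Complex.zero_re, Complex.zero_im] at hre him
    have h3 : (qf C v₀).re ≤ 0 := by
      have h4 := congrArg Complex.re (hqfC v₀)
      rw [hv₀] at h4
      have hcast : ((‖A‖ : ℝ) : ℂ) * ((1 : ℝ) : ℂ) ^ 2 = ((‖A‖ : ℝ) : ℂ) := by
        push_cast
        ring
      rw [hcast] at h4
      simp only [Complex.sub_re, Complex.ofReal_re] at h4
      linarith
    apply Complex.ext
    · simp only [Complex.zero_re]; linarith
    · simp only [Complex.zero_im]; exact him.symm
  have hCv₀ : C *ᵥ (WithLp.equiv 2 _ v₀) = 0 := (hCpsd.dotProduct_mulVec_zero_iff _).mp hCq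
  have hAv₀ : A *ᵥ (WithLp.equiv 2 _ v₀) = ((‖A‖ : ℝ) : ℂ) • (WithLp.equiv 2 _ v₀) := by
    have h1 := hCv₀
    rw [hCdef, sub_mulVec, smul_mulVec, one_mulVec, sub_eq_zero] at h1
    exact h1.symm
  -- final contradiction
  have hip : ∀ k, (inner ℂ (x (φ k)) v₀ : ℂ) = 0 := fun k => hortho (φ k) v₀ hAv₀ hBv₀
  have hipconv : Filter.Tendsto (fun k => (inner ℂ (x (φ k)) v₀ : ℂ)) Filter.atTop
      (nhds (inner ℂ v₀ v₀)) :=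
    ((continuous_id.inner continuous_const).tendsto v₀).comp hxconv
  have h0 : (inner ℂ v₀ v₀ : ℂ) = 0 := by
    have h1 : Filter.Tendsto (fun k => (inner ℂ (x (φ k)) v₀ : ℂ)) Filter.atTop (nhds 0) := by
      simp only [funext hip]
      exact tendsto_const_nhds
    exact tendsto_nhds_unique hipconv h1
  have h2 : v₀ = 0 := inner_self_eq_zero.mp h0
  rw [h2] at hv₀
  simpa using hv₀
end

section
/- Let 𝒜 be a commutative unital C*-algebra and let A, B ∈ 𝒜 with ‖A‖ = 1 = ‖B‖ and B positive (so that φ(B) is a nonnegative real number for every character φ of 𝒜). Let S = {(φ(A), Re φ(B)) : φ a character of 𝒜} ⊆ ℂ × ℝ. Then ‖A + λB‖² = 1 + |λ|² holds for all λ ∈ ℂ if and only if S is contained in the unit half-ball {(ζ, t) ∈ ℂ × ℝ : |ζ|² + t² ≤ 1, t ≥ 0} and S contains the hemisphere {(ζ, t) ∈ ℂ × ℝ : |ζ|² + t² = 1, t ≥ 0}. -/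
open WeakDual Complex

private lemma normSq_expand' (z w : ℂ) (s : ℝ) :
    ‖z + w * (s : ℂ)‖ ^ 2 =
      ‖z‖ ^ 2 + ‖w‖ ^ 2 * s ^ 2 + 2 * s * (z * (starRingEnd ℂ) w).re := by
  rw [Complex.sq_norm, Complex.sq_norm, Complex.sq_norm]
  simp only [Complex.normSq_apply, Complex.add_re, Complex.add_im, Complex.mul_re,
    Complex.mul_im, Complex.ofReal_re, Complex.ofReal_im, Complex.conj_re, Complex.conj_im]
  ring

private lemma aux_ball (u t : ℝ) (hu0 : 0 ≤ u) (ht0 : 0 ≤ t) (htle : t ≤ 1)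
    (key : ∀ s : ℝ, 0 ≤ s →
      u ^ 2 + (s ^ 2 * u ^ 2) * t ^ 2 + 2 * t * (s * u ^ 2) ≤ 1 + s ^ 2 * u ^ 2) :
    u ^ 2 + t ^ 2 ≤ 1 := by
  by_contra hcon
  push_neg at hcon
  have hupos : 0 < u := by nlinarith
  rcases lt_or_eq_of_le htle with ht | ht
  · have hd : (0 : ℝ) < 1 - t ^ 2 := by nlinarith
    have keyd := key (t / (1 - t ^ 2)) (by positivity)
    have h3 := mul_le_mul_of_nonneg_right keyd
      (le_of_lt (by positivity : (0:ℝ) < (1 - t ^ 2) ^ 2))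
    have e1 : (u ^ 2 + ((t / (1 - t ^ 2)) ^ 2 * u ^ 2) * t ^ 2
          + 2 * t * ((t / (1 - t ^ 2)) * u ^ 2)) * (1 - t ^ 2) ^ 2 = u ^ 2 := by
      field_simp
      ring
    have e2 : (1 + (t / (1 - t ^ 2)) ^ 2 * u ^ 2) * (1 - t ^ 2) ^ 2
        = (1 - t ^ 2) ^ 2 + t ^ 2 * u ^ 2 := by
      field_simp
    have h4 : u ^ 2 ≤ (1 - t ^ 2) ^ 2 + t ^ 2 * u ^ 2 := by
      rw [e1, e2] at h3; exact h3
    nlinarith [mul_pos hd (show (0:ℝ) < u ^ 2 + t ^ 2 - 1 by linarith)]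
  · subst ht
    have keyd := key (1 / u ^ 2) (by positivity)
    have hx : (1 / u ^ 2) * u ^ 2 = 1 := by field_simp
    nlinarith [keyd, hx, sq_nonneg u]

private lemma aux_main_real (u t' N R t : ℝ)
    (hE : u ^ 2 + N ^ 2 * t' ^ 2 + 2 * t' * R = 1 + N ^ 2)
    (hR : R ≤ u * N) (hball : u ^ 2 + t' ^ 2 ≤ 1) (ht'0 : 0 ≤ t') (hu0 : 0 ≤ u)
    (hN0 : 0 ≤ N) (hN : N ^ 2 * (1 - t ^ 2) = t ^ 2) (ht0 : 0 < t) (htlt : t < 1) :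
    t' = t ∧ R = t ∧ u * N = t := by
  have hd : (0 : ℝ) < 1 - t ^ 2 := by nlinarith
  have hRt := mul_le_mul_of_nonneg_left hR ht'0
  have hsum1 : 1 ≤ u ^ 2 + t' ^ 2 := by nlinarith [sq_nonneg (N * u - t')]
  have hsum : u ^ 2 + t' ^ 2 = 1 := le_antisymm hball hsum1
  have hsq : (N * u - t') ^ 2 ≤ 0 := by nlinarith
  have h0 : (N * u - t') ^ 2 = 0 := le_antisymm hsq (sq_nonneg _)
  have hNut : N * u = t' := by
    have := pow_eq_zero_iff (n := 2) (by norm_num) |>.mp h0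
    linarith
  have hq : N ^ 2 * u ^ 2 = t' ^ 2 := by rw [← hNut]; ring
  have h1N : (0 : ℝ) < 1 + N ^ 2 := by positivity
  have e1 : (1 + N ^ 2) * t' ^ 2 = N ^ 2 := by linear_combination -hq + N ^ 2 * hsum
  have e2 : (1 + N ^ 2) * t ^ 2 = N ^ 2 := by linear_combination -hN
  have ht'2 : t' ^ 2 = t ^ 2 := mul_left_cancel₀ h1N.ne' (e1.trans e2.symm)
  have ht' : t' = t := by
    have hmul : (t' - t) * (t' + t) = 0 := by linear_combination ht'2
    rcases mul_eq_zero.mp hmul with h' | h' <;> [linarith; linarith]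
  have hu2 : u ^ 2 = 1 - t ^ 2 := by rw [← ht']; linarith
  rw [ht'] at hE
  have h2t : (2 * t) * R = (2 * t) * t := by linear_combination hE - hu2 + hN
  have hRfin : R = t := mul_left_cancel₀ (by positivity : (0:ℝ) < 2 * t).ne' h2t
  refine ⟨ht', hRfin, ?_⟩
  rw [mul_comm]
  rw [ht'] at hNut
  exact hNut

private lemma aux_upper (u t' N R : ℝ) (hR : R ≤ u * N) (hb : u ^ 2 + t' ^ 2 ≤ 1)
    (ht'0 : 0 ≤ t') (hu0 : 0 ≤ u) (hN0 : 0 ≤ N) :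
    u ^ 2 + N ^ 2 * t' ^ 2 + 2 * t' * R ≤ 1 + N ^ 2 := by
  nlinarith [sq_nonneg (N * u - t'), mul_le_mul_of_nonneg_left hR ht'0]

set_option maxHeartbeats 1600000 in
/-- Let `𝒜` be a commutative unital C*-algebra, `A, B ∈ 𝒜` with `‖A‖ = 1 = ‖B‖` and `B`
positive, and let `S = {(φ(A), Re φ(B)) : φ a character of 𝒜}`.  Then `A ⊥_P B` iff `S` is
contained in the closed unit half-ball `{(ζ,t) : |ζ|² + t² ≤ 1, t ≥ 0}` and `S` contains
the hemisphere `{(ζ,t) : |ζ|² + t² = 1, t ≥ 0}`. -/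
theorem pythagoras_orthogonal_commutative_iff_joint_spectrum
    {𝒜 : Type*} [NormedCommRing 𝒜] [StarRing 𝒜] [CStarRing 𝒜]
    [NormedAlgebra ℂ 𝒜] [StarModule ℂ 𝒜] [CompleteSpace 𝒜]
    (A B : 𝒜) (hA : ‖A‖ = 1) (hB : ‖B‖ = 1) (hBpos : ∃ C : 𝒜, B = star C * C) :
    (∀ l : ℂ, ‖A + l • B‖ ^ 2 = 1 + ‖l‖ ^ 2) ↔
      ({p : ℂ × ℝ | ∃ φ : WeakDual.characterSpace ℂ 𝒜, p = (φ A, (φ B).re)} ⊆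
          {p : ℂ × ℝ | ‖p.1‖ ^ 2 + p.2 ^ 2 ≤ 1 ∧ 0 ≤ p.2} ∧
        {p : ℂ × ℝ | ‖p.1‖ ^ 2 + p.2 ^ 2 = 1 ∧ 0 ≤ p.2} ⊆
          {p : ℂ × ℝ | ∃ φ : WeakDual.characterSpace ℂ 𝒜, p = (φ A, (φ B).re)}) := by
  have hA0 : A ≠ 0 := by
    intro hz; rw [hz, norm_zero] at hA; exact zero_ne_one hA
  haveI : Nontrivial 𝒜 := nontrivial_of_ne A 0 hA0
  letI : CommCStarAlgebra 𝒜 :=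
    { ‹NormedCommRing 𝒜›, ‹StarRing 𝒜›, ‹CStarRing 𝒜›, ‹NormedAlgebra ℂ 𝒜›,
      ‹StarModule ℂ 𝒜›, ‹CompleteSpace 𝒜› with }
  -- basic facts
  have hsupnorm : ∀ x : 𝒜, ‖x‖ = ⨆ φ : characterSpace ℂ 𝒜, ‖φ x‖ := by
    intro x
    have h1 : ‖gelfandTransform ℂ 𝒜 x‖ = ‖x‖ :=
      (gelfandTransform_isometry 𝒜).norm_map_of_map_zero (map_zero _) x
    rw [← h1, ContinuousMap.norm_eq_iSup_norm]
    rfl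
  have hle : ∀ (x : 𝒜) (φ : characterSpace ℂ 𝒜), ‖φ x‖ ≤ ‖x‖ := fun x φ =>
    AlgHom.norm_apply_le_self φ x
  have hconte : ∀ x : 𝒜, Continuous fun φ : characterSpace ℂ 𝒜 => φ x := fun x =>
    (WeakDual.eval_continuous x).comp continuous_subtype_val
  have hmax : ∀ x : 𝒜, ∃ φ : characterSpace ℂ 𝒜, ‖φ x‖ = ‖x‖ := by
    intro x
    obtain ⟨φ, -, hφ⟩ := isCompact_univ.exists_isMaxOn Set.univ_nonempty
      ((hconte x).norm.continuousOn)
    refine ⟨φ, le_antisymm (hle x φ) ?_⟩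
    rw [hsupnorm]
    exact ciSup_le fun ψ => hφ (Set.mem_univ ψ)
  -- B has nonnegative real values under every character
  have hreal : ∀ φ : characterSpace ℂ 𝒜, φ B = ((φ B).re : ℂ) ∧ 0 ≤ (φ B).re := by
    intro φ
    obtain ⟨C, rfl⟩ := hBpos
    have h1 : φ (star C * C) = ((Complex.normSq (φ C) : ℝ) : ℂ) := by
      rw [map_mul, map_star, ← Complex.mul_conj (φ C)]
      exact mul_comm _ _
    rw [h1]
    constructor
    · norm_num
    · simp only [Complex.ofReal_re]
      exact Complex.normSq_nonneg _
  have ht1 : ∀ φ : characterSpace ℂ 𝒜, (φ B).re ≤ 1 := by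
    intro φ
    calc (φ B).re ≤ ‖φ B‖ := Complex.re_le_norm _
    _ ≤ 1 := by rw [← hB]; exact hle B φ
  have happly : ∀ (φ : characterSpace ℂ 𝒜) (l : ℂ), φ (A + l • B) = φ A + l * ((φ B).re : ℂ) := by
    intro φ l
    rw [map_add, map_smul, smul_eq_mul, ← (hreal φ).1]
  constructor
  · -- forward direction
    intro h
    -- Part 1: S is contained in the half ball
    have part1 : ∀ φ : characterSpace ℂ 𝒜, ‖φ A‖ ^ 2 + (φ B).re ^ 2 ≤ 1 := by
      intro φ
      set u := ‖φ A‖ with hu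
      set t := (φ B).re with htdef
      have ht0 : 0 ≤ t := (hreal φ).2
      have htle : t ≤ 1 := ht1 φ
      have hu0 : 0 ≤ u := norm_nonneg _
      have key : ∀ s : ℝ, 0 ≤ s →
          u ^ 2 + (s ^ 2 * u ^ 2) * t ^ 2 + 2 * t * (s * u ^ 2) ≤ 1 + s ^ 2 * u ^ 2 := by
        intro s hs
        have hl := h ((s : ℂ) * φ A)
        have hle' := hle (A + ((s : ℂ) * φ A) • B) φ
        have hfφ : φ (A + ((s : ℂ) * φ A) • B) = φ A + ((s : ℂ) * φ A) * ((t : ℝ) : ℂ) :=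
          happly φ _
        have hnl : ‖(s : ℂ) * φ A‖ ^ 2 = s ^ 2 * u ^ 2 := by
          rw [norm_mul, mul_pow, Complex.norm_real, Real.norm_eq_abs, _root_.sq_abs]
        have hexp : ‖φ A + ((s : ℂ) * φ A) * ((t : ℝ) : ℂ)‖ ^ 2 =
            u ^ 2 + (s ^ 2 * u ^ 2) * t ^ 2 + 2 * t * (s * u ^ 2) := by
          rw [normSq_expand']
          have hre : (φ A * (starRingEnd ℂ) ((s : ℂ) * φ A)).re = s * u ^ 2 := by
            have e1 : φ A * (starRingEnd ℂ) ((s : ℂ) * φ A)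
                = (s : ℂ) * ((Complex.normSq (φ A) : ℝ) : ℂ) := by
              rw [map_mul, Complex.conj_ofReal, ← Complex.mul_conj]; ring
            rw [e1]
            simp only [← Complex.ofReal_mul, Complex.ofReal_re]
            rw [hu, Complex.sq_norm]
          rw [hre, hnl]
        calc u ^ 2 + (s ^ 2 * u ^ 2) * t ^ 2 + 2 * t * (s * u ^ 2)
            = ‖φ (A + ((s : ℂ) * φ A) • B)‖ ^ 2 := by rw [hfφ, hexp]
          _ ≤ ‖A + ((s : ℂ) * φ A) • B‖ ^ 2 := by
              apply pow_le_pow_left₀ (norm_nonneg _) hle'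
          _ = 1 + s ^ 2 * u ^ 2 := by rw [hl, hnl]
      exact aux_ball u t hu0 ht0 htle key
    -- the key "main" lemma : interior hemisphere points are attained
    have main : ∀ (ζ : ℂ) (t : ℝ), 0 < t → t < 1 → ‖ζ‖ ^ 2 + t ^ 2 = 1 →
        ∃ φ : characterSpace ℂ 𝒜, φ A = ζ ∧ (φ B).re = t := by
      intro ζ t ht0 htlt hζt
      have hd : (0 : ℝ) < 1 - t ^ 2 := by nlinarith
      have habsζ : ‖ζ‖ ^ 2 = 1 - t ^ 2 := by linarith
      have hζ0 : ζ ≠ 0 := by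
        intro hz
        rw [hz] at habsζ
        simp at habsζ
        nlinarith
      have hcpos : 0 < t / (1 - t ^ 2) := by positivity
      set c : ℝ := t / (1 - t ^ 2) with hc
      set l : ℂ := (c : ℂ) * ζ with hl
      have hlne : l ≠ 0 := mul_ne_zero (by exact_mod_cast hcpos.ne') hζ0
      have hN : ‖l‖ ^ 2 * (1 - t ^ 2) = t ^ 2 := by
        have h1 : ‖l‖ = c * ‖ζ‖ := by
          rw [hl, norm_mul, Complex.norm_real, Real.norm_eq_abs,
            _root_.abs_of_pos hcpos]
        rw [h1, mul_pow, habsζ, hc]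
        field_simp
      obtain ⟨φ, hφ⟩ := hmax (A + l • B)
      have hE : ‖φ A‖ ^ 2 + ‖l‖ ^ 2 * (φ B).re ^ 2
          + 2 * (φ B).re * (φ A * (starRingEnd ℂ) l).re = 1 + ‖l‖ ^ 2 := by
        have h1 : ‖φ A + l * (((φ B).re : ℝ) : ℂ)‖ ^ 2 = 1 + ‖l‖ ^ 2 := by
          rw [← happly φ l, hφ, h l]
        rw [normSq_expand'] at h1
        exact h1
      have hR : (φ A * (starRingEnd ℂ) l).re ≤ ‖φ A‖ * ‖l‖ := by
        calc (φ A * (starRingEnd ℂ) l).re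
            ≤ ‖φ A * (starRingEnd ℂ) l‖ := Complex.re_le_norm _
          _ = ‖φ A‖ * ‖l‖ := by
              rw [norm_mul, Complex.norm_conj]
      obtain ⟨ht', hRfin, hNut⟩ := aux_main_real (‖φ A‖) ((φ B).re) ‖l‖
        ((φ A * (starRingEnd ℂ) l).re) t hE hR (part1 φ) (hreal φ).2
        (norm_nonneg _) (norm_nonneg _) hN ht0 htlt
      -- now identify φ A with ζ
      have habsz : ‖φ A * (starRingEnd ℂ) l‖ = t := by
        rw [norm_mul, Complex.norm_conj]
        exact hNut
      have him : (φ A * (starRingEnd ℂ) l).im = 0 := by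
        have h1 : Complex.normSq (φ A * (starRingEnd ℂ) l)
            = ‖φ A * (starRingEnd ℂ) l‖ ^ 2 := (Complex.sq_norm _).symm
        rw [Complex.normSq_apply, habsz] at h1
        have h2 : (φ A * (starRingEnd ℂ) l).im * (φ A * (starRingEnd ℂ) l).im = 0 := by
          nlinarith [hRfin]
        exact mul_self_eq_zero.mp h2
      have hz' : φ A * (starRingEnd ℂ) l = ((t : ℝ) : ℂ) := by
        apply Complex.ext
        · simpa using hRfin
        · simpa using him
      have hzζ : ζ * (starRingEnd ℂ) l = ((t : ℝ) : ℂ) := by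
        rw [hl, map_mul, Complex.conj_ofReal]
        have e1 : ζ * ((c : ℂ) * (starRingEnd ℂ) ζ) = (c : ℂ) * (ζ * (starRingEnd ℂ) ζ) := by
          ring
        rw [e1, Complex.mul_conj]
        have e2 : Complex.normSq ζ = 1 - t ^ 2 := by rw [← Complex.sq_norm, habsζ]
        rw [e2]
        have e3 : c * (1 - t ^ 2) = t := by rw [hc]; exact div_mul_cancel₀ t hd.ne'
        have e4 := congrArg (Complex.ofReal) e3
        push_cast at e4
        push_cast
        exact e4
      have hζ' : φ A = ζ := by
        have hconjne : (starRingEnd ℂ) l ≠ 0 := by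
          simpa using hlne
        exact mul_right_cancel₀ hconjne (hz'.trans hzζ.symm)
      exact ⟨φ, hζ', ht'⟩
    refine ⟨?_, ?_⟩
    · rintro p ⟨φ, rfl⟩
      exact ⟨part1 φ, (hreal φ).2⟩
    · rintro ⟨ζ, t⟩ ⟨hp1, hp2⟩
      simp only [Set.mem_setOf_eq] at hp1 hp2 ⊢
      rcases eq_or_lt_of_le hp2 with ht0 | ht0
      · -- t = 0 : use closedness of S
        have hScl : IsClosed {p : ℂ × ℝ | ∃ φ : characterSpace ℂ 𝒜, p = (φ A, (φ B).re)} := by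
          have hSeq : {p : ℂ × ℝ | ∃ φ : characterSpace ℂ 𝒜, p = (φ A, (φ B).re)}
              = Set.range (fun φ : characterSpace ℂ 𝒜 => ((φ A : ℂ), (φ B).re)) := by
            ext p; simp [eq_comm, Set.mem_setOf_eq]
          rw [hSeq]
          exact (isCompact_range ((hconte A).prodMk
            ((Complex.continuous_re).comp (hconte B)))).isClosed
        have habsζ1 : ‖ζ‖ = 1 := by
          rw [← ht0] at hp1
          nlinarith [norm_nonneg ζ]
        set g : ℝ → ℂ × ℝ := fun s => (((Real.sqrt (1 - s ^ 2) : ℝ) : ℂ) * ζ, s) with hg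
        have hgin : ∀ s : ℝ, 0 < s → s < 1 → g s ∈
            {p : ℂ × ℝ | ∃ φ : characterSpace ℂ 𝒜, p = (φ A, (φ B).re)} := by
          intro s hs0 hs1
          have hd : (0:ℝ) < 1 - s ^ 2 := by nlinarith
          have habs : ‖((Real.sqrt (1 - s ^ 2) : ℝ) : ℂ) * ζ‖ ^ 2 + s ^ 2 = 1 := by
            rw [norm_mul, Complex.norm_real, Real.norm_eq_abs, habsζ1, mul_one,
              _root_.abs_of_pos (Real.sqrt_pos.mpr hd), Real.sq_sqrt hd.le]
            ring
          obtain ⟨φ, hφ1, hφ2⟩ := main _ s hs0 hs1 habs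
          exact ⟨φ, by simp only [hg]; rw [hφ1, hφ2]⟩
        have hcontg : Continuous g := by
          apply Continuous.prodMk
          · exact (Complex.continuous_ofReal.comp
              ((Real.continuous_sqrt).comp (continuous_const.sub (continuous_pow 2)))).mul
              continuous_const
          · exact continuous_id
        have htend : Filter.Tendsto (fun n : ℕ => g (1 / ((n : ℝ) + 2)))
            Filter.atTop (nhds (ζ, 0)) := by
          have h1 : Filter.Tendsto (fun n : ℕ => 1 / ((n : ℝ) + 2)) Filter.atTop (nhds 0) := by
            simp only [one_div]
            apply Filter.Tendsto.comp tendsto_inv_atTop_zero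
            apply Filter.tendsto_atTop_add_const_right
            exact tendsto_natCast_atTop_atTop
          have h2 : g 0 = (ζ, 0) := by
            rw [hg]; simp
          rw [← h2]
          exact (hcontg.tendsto 0).comp h1
        have hmem := hScl.mem_of_tendsto htend ?_
        · rw [← ht0]
          exact hmem
        · apply Filter.Eventually.of_forall
          intro n
          apply hgin
          · positivity
          · rw [div_lt_one (by positivity)]
            nlinarith [Nat.cast_nonneg (α := ℝ) n]
      · rcases eq_or_lt_of_le (show t ≤ 1 by nlinarith [norm_nonneg ζ]) with ht1' | ht1'
        · -- t = 1, ζ = 0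
          have hζ0 : ζ = 0 := by
            have h1 : ‖ζ‖ ^ 2 = 0 := by nlinarith
            have h2 : ‖ζ‖ = 0 := by
              nlinarith [norm_nonneg ζ]
            simpa using h2
          obtain ⟨φ, hφ⟩ := hmax B
          have hBone : (φ B).re = 1 := by
            have h1 : φ B = (((φ B).re : ℝ) : ℂ) := (hreal φ).1
            have h2 : ‖φ B‖ = 1 := by rw [hφ, hB]
            rw [h1, Complex.norm_real, Real.norm_eq_abs, _root_.abs_of_nonneg (hreal φ).2] at h2
            exact h2
          have hφA : φ A = 0 := by
            have hb := part1 φ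
            rw [hBone] at hb
            have h3 : ‖φ A‖ = 0 := by
              nlinarith [norm_nonneg (φ A)]
            simpa using h3
          exact ⟨φ, by rw [hζ0, ht1', hφA, hBone]⟩
        · -- 0 < t < 1
          obtain ⟨φ, hφ1, hφ2⟩ := main ζ t ht0 ht1' hp1
          exact ⟨φ, by rw [hφ1, hφ2]⟩
  · -- converse direction
    rintro ⟨hsub, hsup⟩ l
    have hN0 : 0 ≤ ‖l‖ := norm_nonneg _
    have hupper : ‖A + l • B‖ ^ 2 ≤ 1 + ‖l‖ ^ 2 := by
      have hb : ∀ φ : characterSpace ℂ 𝒜, ‖φ (A + l • B)‖ ≤ Real.sqrt (1 + ‖l‖ ^ 2) := by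
        intro φ
        rw [← Real.sqrt_sq (norm_nonneg _)]
        apply Real.sqrt_le_sqrt
        rw [happly φ l, normSq_expand']
        have hball := hsub ⟨φ, rfl⟩
        simp only [Set.mem_setOf_eq] at hball
        have hR : (φ A * (starRingEnd ℂ) l).re ≤ ‖φ A‖ * ‖l‖ := by
          calc (φ A * (starRingEnd ℂ) l).re
              ≤ ‖φ A * (starRingEnd ℂ) l‖ := Complex.re_le_norm _
            _ = ‖φ A‖ * ‖l‖ := by
                rw [norm_mul, Complex.norm_conj]
        exact aux_upper (‖φ A‖) ((φ B).re) ‖l‖ _ hR hball.1 hball.2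
          (norm_nonneg _) hN0
      have h1 : ‖A + l • B‖ ≤ Real.sqrt (1 + ‖l‖ ^ 2) := by
        rw [hsupnorm]
        exact ciSup_le hb
      calc ‖A + l • B‖ ^ 2 ≤ Real.sqrt (1 + ‖l‖ ^ 2) ^ 2 :=
            pow_le_pow_left₀ (norm_nonneg _) h1 2
        _ = 1 + ‖l‖ ^ 2 := Real.sq_sqrt (by positivity)
    have hlower : 1 + ‖l‖ ^ 2 ≤ ‖A + l • B‖ ^ 2 := by
      rcases eq_or_ne l 0 with hl0 | hl0
      · rw [hl0]
        simp [hA]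
      · have hNpos : 0 < ‖l‖ := norm_pos_iff.mpr hl0
        set N : ℝ := ‖l‖ with hNdef
        set σ : ℝ := Real.sqrt (1 + N ^ 2) with hσ
        have hσpos : 0 < σ := Real.sqrt_pos.mpr (by positivity)
        have hσ2 : σ ^ 2 = 1 + N ^ 2 := Real.sq_sqrt (by positivity)
        set ζ₀ : ℂ := (((N * σ : ℝ) : ℂ))⁻¹ * l with hζ₀
        set t₀ : ℝ := N / σ with ht₀
        have hmem : ‖ζ₀‖ ^ 2 + t₀ ^ 2 = 1 := by
          rw [hζ₀, ht₀, norm_mul, norm_inv, Complex.norm_real, Real.norm_eq_abs,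
            _root_.abs_of_pos (by positivity : (0:ℝ) < N * σ), ← hNdef]
          field_simp
          nlinarith
        have ht₀0 : 0 ≤ t₀ := by positivity
        have hmem' : ((ζ₀, t₀) : ℂ × ℝ) ∈
            {p : ℂ × ℝ | ∃ φ : characterSpace ℂ 𝒜, p = (φ A, (φ B).re)} :=
          hsup ⟨hmem, ht₀0⟩
        obtain ⟨φ, hφ⟩ := hmem'
        have hφA : φ A = ζ₀ := ((Prod.ext_iff.mp hφ).1).symm
        have hφB : (φ B).re = t₀ := ((Prod.ext_iff.mp hφ).2).symm
        have hval : φ (A + l • B) = ζ₀ + l * ((t₀ : ℝ) : ℂ) := by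
          rw [happly φ l, hφA, hφB]
        have hNne : ((N : ℝ) : ℂ) ≠ 0 := by exact_mod_cast hNpos.ne'
        have hσne : ((σ : ℝ) : ℂ) ≠ 0 := by exact_mod_cast hσpos.ne'
        have hσ2C : ((σ : ℝ) : ℂ) ^ 2 = 1 + ((N : ℝ) : ℂ) ^ 2 := by exact_mod_cast hσ2
        have hnval : ‖φ (A + l • B)‖ = σ := by
          rw [hval, hζ₀, ht₀]
          have e : (((N * σ : ℝ) : ℂ))⁻¹ * l + l * ((N / σ : ℝ) : ℂ)
              = l * (((σ / N : ℝ) : ℂ)) := by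
            push_cast
            field_simp
            linear_combination (-1 : ℂ) * hσ2C
          rw [e, norm_mul, Complex.norm_real, Real.norm_eq_abs,
            _root_.abs_of_pos (by positivity : (0:ℝ) < σ / N), ← hNdef]
          field_simp
        have hge := hle (A + l • B) φ
        rw [hnval] at hge
        calc 1 + ‖l‖ ^ 2 = σ ^ 2 := hσ2.symm
          _ ≤ ‖A + l • B‖ ^ 2 := pow_le_pow_left₀ hσpos.le hge 2
    linarith
end

section
/- Let n ≥ 1 and let A, B ∈ Mₙ(ℂ) be nonzero commuting normal matrices (AB = BA, A*A = AA*, B*B = BB*). Then A and B are not Pythagoras orthogonal: there exists λ ∈ ℂ such that ‖A + λB‖² ≠ ‖A‖² + |λ|²‖B‖², where ‖·‖ is the operator norm induced by the Euclidean norm on ℂⁿ. -/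
open scoped Matrix.Norms.L2Operator Matrix

section PythagorasAux

open Complex

lemma aux_eq_zero_of_trace {m : Type*} [Fintype m] [DecidableEq m]
    (X : Matrix m m ℂ) (h : (Xᴴ * X).trace = 0) : X = 0 := by
  have h1 : ∑ j, ∑ k, (Complex.normSq (X k j) : ℂ) = 0 := by
    rw [← h]
    simp only [Matrix.trace, Matrix.diag, Matrix.mul_apply, Matrix.conjTranspose_apply]
    congr 1; ext j; congr 1; ext k
    rw [Complex.normSq_eq_conj_mul_self, Complex.star_def]
  have h2 : ∑ j, ∑ k, Complex.normSq (X k j) = 0 := by exact_mod_cast h1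
  ext k j
  have := (Finset.sum_eq_zero_iff_of_nonneg (fun j _ => Finset.sum_nonneg
    (fun k _ => Complex.normSq_nonneg _))).mp h2 j (Finset.mem_univ _)
  have := (Finset.sum_eq_zero_iff_of_nonneg (fun k _ => Complex.normSq_nonneg _)).mp
    this k (Finset.mem_univ _)
  simpa using Complex.normSq_eq_zero.mp this

/-- Fuglede–Putnam for commuting normal matrices. -/
lemma aux_fuglede {m : Type*} [Fintype m] [DecidableEq m]
    (A B : Matrix m m ℂ) (hA : Aᴴ * A = A * Aᴴ) (hB : Bᴴ * B = B * Bᴴ)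
    (hAB : A * B = B * A) : Aᴴ * B = B * Aᴴ := by
  have key : ((Aᴴ * B - B * Aᴴ)ᴴ * (Aᴴ * B - B * Aᴴ)).trace = 0 := by
    have hXH : (Aᴴ * B - B * Aᴴ)ᴴ = Bᴴ * A - A * Bᴴ := by
      simp [Matrix.conjTranspose_sub, Matrix.conjTranspose_mul]
    rw [hXH, Matrix.sub_mul, Matrix.mul_sub, Matrix.mul_sub, Matrix.trace_sub,
      Matrix.trace_sub, Matrix.trace_sub]
    have e1 : (Bᴴ * A * (Aᴴ * B)).trace = ((B * Bᴴ) * (A * Aᴴ)).trace := by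
      rw [show Bᴴ * A * (Aᴴ * B) = Bᴴ * (A * Aᴴ) * B by noncomm_ring,
        Matrix.trace_mul_cycle, ← Matrix.mul_assoc]
    have e2 : (Bᴴ * A * (B * Aᴴ)).trace = ((B * Bᴴ) * (A * Aᴴ)).trace := by
      rw [show Bᴴ * A * (B * Aᴴ) = Bᴴ * (A * B) * Aᴴ by noncomm_ring, hAB,
        show Bᴴ * (B * A) * Aᴴ = (Bᴴ * B) * (A * Aᴴ) by noncomm_ring, hB]
    have e3 : (A * Bᴴ * (Aᴴ * B)).trace = ((B * Bᴴ) * (A * Aᴴ)).trace := by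
      rw [show A * Bᴴ * (Aᴴ * B) = A * (Bᴴ * Aᴴ * B) by noncomm_ring,
        Matrix.trace_mul_comm,
        show Bᴴ * Aᴴ * B * A = Bᴴ * Aᴴ * (B * A) by noncomm_ring, ← hAB,
        show Bᴴ * Aᴴ * (A * B) = Bᴴ * (Aᴴ * A) * B by noncomm_ring, hA,
        Matrix.trace_mul_cycle, ← Matrix.mul_assoc]
    have e4 : (A * Bᴴ * (B * Aᴴ)).trace = ((B * Bᴴ) * (A * Aᴴ)).trace := by
      rw [show A * Bᴴ * (B * Aᴴ) = A * (Bᴴ * B) * Aᴴ by noncomm_ring, hB,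
        Matrix.trace_mul_cycle, hA, Matrix.trace_mul_comm]
    rw [e1, e2, e3, e4]; ring
  exact sub_eq_zero.mp (aux_eq_zero_of_trace _ key)

/-- Phase alignment: choose `l` on the circle of radius `R` so the absolute values add. -/
lemma aux_align (d e : ℂ) (R : ℝ) (hR : 0 < R) :
    ∃ l : ℂ, ‖l‖ = R ∧ ‖d + l * e‖ = ‖d‖ + R * ‖e‖ := by
  rcases eq_or_ne d 0 with hd | hd
  · refine ⟨(R : ℂ), by simpa using hR.le, ?_⟩
    simp [hd, norm_mul, Complex.norm_real, Real.norm_eq_abs, abs_of_pos hR]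
  rcases eq_or_ne e 0 with he | he
  · refine ⟨(R : ℂ), by simpa using hR.le, ?_⟩
    simp [he, Complex.norm_real, Real.norm_eq_abs, abs_of_pos hR]
  have hd' : (‖d‖ : ℝ) ≠ 0 := by simpa using hd
  have he' : (‖e‖ : ℝ) ≠ 0 := by simpa using he
  have hd2 : ((‖d‖ : ℝ) : ℂ) ≠ 0 := by exact_mod_cast hd'
  have he2 : ((‖e‖ : ℝ) : ℂ) ≠ 0 := by exact_mod_cast he'
  have hmc : (starRingEnd ℂ) e * e = ((‖e‖ : ℝ) : ℂ)^2 := by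
    rw [mul_comm, Complex.mul_conj, Complex.normSq_eq_norm_sq]
    push_cast; ring
  refine ⟨(R : ℂ) * d * (starRingEnd ℂ) e / ((‖d‖ : ℂ) * (‖e‖ : ℂ)), ?_, ?_⟩
  · rw [norm_div, norm_mul, norm_mul, norm_mul, Complex.norm_conj, Complex.norm_of_nonneg hR.le,
      Complex.norm_of_nonneg (norm_nonneg d), Complex.norm_of_nonneg (norm_nonneg e)]
    field_simp
  · have key : (R : ℂ) * d * (starRingEnd ℂ) e / ((‖d‖ : ℂ) * (‖e‖ : ℂ)) * e
        = d * ((R * ‖e‖ / ‖d‖ : ℝ) : ℂ) := by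
      rw [div_mul_eq_mul_div, mul_assoc ((R:ℂ) * d), hmc]
      push_cast
      field_simp
    rw [key]
    have hpos : (0:ℝ) ≤ 1 + R * ‖e‖ / ‖d‖ := by positivity
    have hcomb : d + d * ((R * ‖e‖ / ‖d‖ : ℝ) : ℂ)
        = d * (((1 + R * ‖e‖ / ‖d‖ : ℝ)) : ℂ) := by push_cast; ring
    rw [hcomb, norm_mul, Complex.norm_of_nonneg hpos]
    field_simp

/-- Strict convexity of `R ↦ sqrt (α² + R²β²)`. -/
lemma aux_convex (α β R1 R2 : ℝ) (hα : 0 < α) (hβ : 0 < β) (h1 : 0 < R1) (h12 : R1 < R2) :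
    2 * Real.sqrt (α^2 + ((R1+R2)/2)^2 * β^2)
      < Real.sqrt (α^2 + R1^2 * β^2) + Real.sqrt (α^2 + R2^2 * β^2) := by
  have hR2 : 0 < R2 := h1.trans h12
  set s1 := Real.sqrt (α^2 + R1^2 * β^2) with hs1def
  set s2 := Real.sqrt (α^2 + R2^2 * β^2) with hs2def
  set sm := Real.sqrt (α^2 + ((R1+R2)/2)^2 * β^2) with hsmdef
  have hs1 : s1^2 = α^2 + R1^2 * β^2 := Real.sq_sqrt (by positivity)
  have hs2 : s2^2 = α^2 + R2^2 * β^2 := Real.sq_sqrt (by positivity)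
  have hsm : sm^2 = α^2 + ((R1+R2)/2)^2 * β^2 := Real.sq_sqrt (by positivity)
  have hs1n : 0 ≤ s1 := Real.sqrt_nonneg _
  have hs2n : 0 ≤ s2 := Real.sqrt_nonneg _
  have hsmn : 0 ≤ sm := Real.sqrt_nonneg _
  have hq : 0 < α^2 + β^2 * R1 * R2 := by positivity
  have hne : 0 < (R1-R2)^2 := by
    have : R1 - R2 ≠ 0 := sub_ne_zero.mpr h12.ne
    positivity
  have h5 : α^2 + β^2 * R1 * R2 < s1 * s2 := by
    have hprod : (s1*s2)^2 = (α^2+R1^2*β^2)*(α^2+R2^2*β^2) := by rw [mul_pow, hs1, hs2]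
    by_contra hle
    push_neg at hle
    have h0 : 0 ≤ s1 * s2 := mul_nonneg hs1n hs2n
    have hsq2 : (s1*s2)^2 ≤ (α^2 + β^2*R1*R2)^2 := by nlinarith
    nlinarith [mul_pos (mul_pos (mul_pos hα hα) (mul_pos hβ hβ)) hne]
  have hsq : (2*sm)^2 < (s1+s2)^2 := by nlinarith
  nlinarith [sq_nonneg (s1+s2-2*sm), sq_nonneg (s1+s2+2*sm)]

lemma aux_sym {m : Type*} [Fintype m] [DecidableEq m] (M : Matrix m m ℂ) (h : M.IsHermitian) :
    LinearMap.IsSymmetric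
      ((Matrix.toEuclideanCLM (𝕜 := ℂ) M : EuclideanSpace ℂ m →L[ℂ] EuclideanSpace ℂ m) :
        EuclideanSpace ℂ m →ₗ[ℂ] EuclideanSpace ℂ m) := by
  rw [Matrix.coe_toEuclideanCLM_eq_toEuclideanLin]
  exact Matrix.isHermitian_iff_isSymmetric.mp h

lemma aux_commute {m : Type*} [Fintype m] [DecidableEq m] (M N : Matrix m m ℂ)
    (h : Commute M N) :
    Commute
      ((Matrix.toEuclideanCLM (𝕜 := ℂ) M : EuclideanSpace ℂ m →L[ℂ] EuclideanSpace ℂ m) :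
        EuclideanSpace ℂ m →ₗ[ℂ] EuclideanSpace ℂ m)
      ((Matrix.toEuclideanCLM (𝕜 := ℂ) N : EuclideanSpace ℂ m →L[ℂ] EuclideanSpace ℂ m) :
        EuclideanSpace ℂ m →ₗ[ℂ] EuclideanSpace ℂ m) := by
  have h2 : Commute (Matrix.toEuclideanCLM (𝕜 := ℂ) M) (Matrix.toEuclideanCLM (𝕜 := ℂ) N) := by
    unfold Commute SemiconjBy
    rw [← map_mul, ← map_mul, h.eq]
  refine LinearMap.ext fun x => ?_
  have := congrArg (fun (f : EuclideanSpace ℂ m →L[ℂ] EuclideanSpace ℂ m) => f x) h2.eq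
  simpa using this

lemma aux_herm1 {m : Type*} [Fintype m] [DecidableEq m] (M : Matrix m m ℂ) :
    ((2:ℂ)⁻¹ • (M + Mᴴ)).IsHermitian := by
  have hstar : star ((2:ℂ)⁻¹) = (2:ℂ)⁻¹ := by simp
  rw [Matrix.IsHermitian, Matrix.conjTranspose_smul, hstar, Matrix.conjTranspose_add,
    Matrix.conjTranspose_conjTranspose, add_comm]

lemma aux_herm2 {m : Type*} [Fintype m] [DecidableEq m] (M : Matrix m m ℂ) :
    ((-(2:ℂ)⁻¹ * Complex.I) • (M - Mᴴ)).IsHermitian := by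
  have hstar : star (-(2:ℂ)⁻¹ * Complex.I) = (2:ℂ)⁻¹ * Complex.I := by
    simp [Complex.star_def]
  rw [Matrix.IsHermitian, Matrix.conjTranspose_smul, hstar, Matrix.conjTranspose_sub,
    Matrix.conjTranspose_conjTranspose]
  rw [show (Mᴴ - M) = -(M - Mᴴ) by abel, smul_neg, ← neg_smul]
  congr 1
  ring

end PythagorasAux

set_option maxHeartbeats 1600000 in
/-- Nonzero commuting normal matrices `A, B ∈ Mₙ(ℂ)` are never Pythagoras orthogonal. -/
theorem commuting_normal_not_pythagoras_orthogonal
    {n : ℕ} (hn : 1 ≤ n) (A B : Matrix (Fin n) (Fin n) ℂ)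
    (hA0 : A ≠ 0) (hB0 : B ≠ 0)
    (hcomm : A * B = B * A)
    (hAnormal : Aᴴ * A = A * Aᴴ) (hBnormal : Bᴴ * B = B * Bᴴ) :
    ∃ l : ℂ, ‖A + l • B‖ ^ 2 ≠ ‖A‖ ^ 2 + ‖l‖ ^ 2 * ‖B‖ ^ 2 := by
  classical
  by_contra hcon
  push_neg at hcon
  haveI : Nonempty (Fin n) := ⟨⟨0, hn⟩⟩
  haveI hnt : Nontrivial (EuclideanSpace ℂ (Fin n)) :=
    inferInstance
  -- Fuglede relations
  have hAB' : Aᴴ * B = B * Aᴴ := aux_fuglede A B hAnormal hBnormal hcomm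
  have hBA' : Bᴴ * A = A * Bᴴ := aux_fuglede B A hBnormal hAnormal hcomm.symm
  have hHH : Aᴴ * Bᴴ = Bᴴ * Aᴴ := by
    have := congrArg Matrix.conjTranspose hcomm
    simpa [Matrix.conjTranspose_mul] using this.symm
  -- Hermitian parts
  obtain ⟨H1, hH1⟩ : ∃ M : Matrix (Fin n) (Fin n) ℂ, M = (2:ℂ)⁻¹ • (A + Aᴴ) := ⟨_, rfl⟩
  obtain ⟨K1, hK1⟩ : ∃ M : Matrix (Fin n) (Fin n) ℂ,
    M = (-(2:ℂ)⁻¹ * Complex.I) • (A - Aᴴ) := ⟨_, rfl⟩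
  obtain ⟨H2, hH2⟩ : ∃ M : Matrix (Fin n) (Fin n) ℂ, M = (2:ℂ)⁻¹ • (B + Bᴴ) := ⟨_, rfl⟩
  obtain ⟨K2, hK2⟩ : ∃ M : Matrix (Fin n) (Fin n) ℂ,
    M = (-(2:ℂ)⁻¹ * Complex.I) • (B - Bᴴ) := ⟨_, rfl⟩
  have hsmulI : Complex.I * (-(2:ℂ)⁻¹ * Complex.I) = (2:ℂ)⁻¹ := by
    rw [show Complex.I * (-(2:ℂ)⁻¹ * Complex.I) = -(Complex.I * Complex.I) * (2:ℂ)⁻¹ by ring,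
      Complex.I_mul_I]
    ring
  have hrec : ∀ (M : Matrix (Fin n) (Fin n) ℂ),
      (2:ℂ)⁻¹ • (M + Mᴴ) + Complex.I • ((-(2:ℂ)⁻¹ * Complex.I) • (M - Mᴴ)) = M := by
    intro M
    rw [smul_smul, hsmulI, ← smul_add]
    have : M + Mᴴ + (M - Mᴴ) = M + M := by abel
    rw [this, ← two_smul ℂ M, smul_smul]
    norm_num
  have hArec : A = H1 + Complex.I • K1 := by rw [hH1, hK1]; exact (hrec A).symm
  have hBrec : B = H2 + Complex.I • K2 := by rw [hH2, hK2]; exact (hrec B).symm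
  have hH1h : H1.IsHermitian := by rw [hH1]; exact aux_herm1 A
  have hK1h : K1.IsHermitian := by rw [hK1]; exact aux_herm2 A
  have hH2h : H2.IsHermitian := by rw [hH2]; exact aux_herm1 B
  have hK2h : K2.IsHermitian := by rw [hK2]; exact aux_herm2 B
  -- Pairwise commutation of the four Hermitian parts
  have cAA : Commute A Aᴴ := hAnormal.symm
  have cBB : Commute B Bᴴ := hBnormal.symm
  have cAB : Commute A B := hcomm
  have cABH : Commute A Bᴴ := hBA'.symm
  have cAHB : Commute Aᴴ B := hAB'
  have cAHBH : Commute Aᴴ Bᴴ := hHH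
  have cb1 : Commute (A + Aᴴ) (A - Aᴴ) :=
    ((Commute.refl A).sub_right cAA).add_left ((cAA.symm).sub_right (Commute.refl Aᴴ))
  have cb2 : Commute (B + Bᴴ) (B - Bᴴ) :=
    ((Commute.refl B).sub_right cBB).add_left ((cBB.symm).sub_right (Commute.refl Bᴴ))
  have cb3 : Commute (A + Aᴴ) (B + Bᴴ) :=
    (cAB.add_right cABH).add_left (cAHB.add_right cAHBH)
  have cb4 : Commute (A + Aᴴ) (B - Bᴴ) :=
    (cAB.sub_right cABH).add_left (cAHB.sub_right cAHBH)
  have cb5 : Commute (A - Aᴴ) (B + Bᴴ) :=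
    (cAB.add_right cABH).sub_left (cAHB.add_right cAHBH)
  have cb6 : Commute (A - Aᴴ) (B - Bᴴ) :=
    (cAB.sub_right cABH).sub_left (cAHB.sub_right cAHBH)
  have cH1K1 : Commute H1 K1 := by
    rw [hH1, hK1]; exact (cb1.smul_left _).smul_right _
  have cH2K2 : Commute H2 K2 := by
    rw [hH2, hK2]; exact (cb2.smul_left _).smul_right _
  have cH1H2 : Commute H1 H2 := by
    rw [hH1, hH2]; exact (cb3.smul_left _).smul_right _
  have cH1K2 : Commute H1 K2 := by
    rw [hH1, hK2]; exact (cb4.smul_left _).smul_right _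
  have cK1H2 : Commute K1 H2 := by
    rw [hK1, hH2]; exact (cb5.smul_left _).smul_right _
  have cK1K2 : Commute K1 K2 := by
    rw [hK1, hK2]; exact (cb6.smul_left _).smul_right _
  -- pass to linear maps on Euclidean space
  obtain ⟨T, hT⟩ : ∃ T' : Fin 4 → (EuclideanSpace ℂ (Fin n) →ₗ[ℂ] EuclideanSpace ℂ (Fin n)),
      T' = ![↑(Matrix.toEuclideanCLM (𝕜 := ℂ) H1), ↑(Matrix.toEuclideanCLM (𝕜 := ℂ) K1),
        ↑(Matrix.toEuclideanCLM (𝕜 := ℂ) H2), ↑(Matrix.toEuclideanCLM (𝕜 := ℂ) K2)] :=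
    ⟨_, rfl⟩
  have hTsym : ∀ i, (T i).IsSymmetric := by
    intro i
    rw [hT]
    fin_cases i
    · exact aux_sym _ hH1h
    · exact aux_sym _ hK1h
    · exact aux_sym _ hH2h
    · exact aux_sym _ hK2h
  have h01 : Commute (T 0) (T 1) := by rw [hT]; exact aux_commute _ _ cH1K1
  have h02 : Commute (T 0) (T 2) := by rw [hT]; exact aux_commute _ _ cH1H2
  have h03 : Commute (T 0) (T 3) := by rw [hT]; exact aux_commute _ _ cH1K2
  have h12 : Commute (T 1) (T 2) := by rw [hT]; exact aux_commute _ _ cK1H2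
  have h13 : Commute (T 1) (T 3) := by rw [hT]; exact aux_commute _ _ cK1K2
  have h23 : Commute (T 2) (T 3) := by rw [hT]; exact aux_commute _ _ cH2K2
  have hTcomm : Pairwise (Function.onFun Commute T) := by
    intro i j hij
    fin_cases i <;> fin_cases j <;>
      first
        | exact Commute.refl _
        | exact h01 | exact h01.symm | exact h02 | exact h02.symm
        | exact h03 | exact h03.symm | exact h12 | exact h12.symm
        | exact h13 | exact h13.symm | exact h23 | exact h23.symm
  -- joint eigenspace decomposition
  set W : (Fin 4 → ℂ) → Submodule ℂ (EuclideanSpace ℂ (Fin n)) :=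
    fun χ => ⨅ i, Module.End.eigenspace (T i) (χ i) with hW
  have htop : (⨆ χ, W χ) = ⊤ :=
    LinearMap.IsSymmetric.iSup_iInf_eq_top_of_commute hTsym hTcomm
  have horth := LinearMap.IsSymmetric.orthogonalFamily_iInf_eigenspaces hTsym
  have hfin : {χ | W χ ≠ ⊥}.Finite :=
    Submodule.finite_ne_bot_of_iSupIndep horth.independent
  set P : Finset (Fin 4 → ℂ) := hfin.toFinset with hP
  have hPmem : ∀ χ, χ ∈ P ↔ W χ ≠ ⊥ := fun χ => hfin.mem_toFinset
  have hPne : P.Nonempty := by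
    by_contra h
    rw [Finset.not_nonempty_iff_eq_empty] at h
    have hallbot : ∀ χ, W χ = ⊥ := by
      intro χ
      by_contra hb
      have : χ ∈ P := (hPmem χ).mpr hb
      simp [h] at this
    have : (⊤ : Submodule ℂ (EuclideanSpace ℂ (Fin n))) = ⊥ := by
      rw [← htop]; exact iSup_eq_bot.mpr hallbot
    exact absurd this.symm bot_ne_top
  -- eigenvalue functions
  set dd : (Fin 4 → ℂ) → ℂ := fun χ => χ 0 + χ 1 * Complex.I with hdd
  set ee : (Fin 4 → ℂ) → ℂ := fun χ => χ 2 + χ 3 * Complex.I with hee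
  set cc : ℂ → (Fin 4 → ℂ) → ℂ := fun l χ => dd χ + l * ee χ with hcc
  -- scalar action on joint eigenspaces
  have hact : ∀ χ, ∀ x ∈ W χ, ∀ l : ℂ,
      Matrix.toEuclideanCLM (𝕜 := ℂ) (A + l • B) x = cc l χ • x := by
    intro χ x hx l
    have hxi : ∀ i, T i x = χ i • x := fun i =>
      Module.End.mem_eigenspace_iff.mp ((Submodule.mem_iInf _).mp hx i)
    rw [hT] at hxi
    have h0 : (Matrix.toEuclideanCLM (𝕜 := ℂ) H1) x = χ 0 • x := hxi 0
    have h1 : (Matrix.toEuclideanCLM (𝕜 := ℂ) K1) x = χ 1 • x := hxi 1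
    have h2 : (Matrix.toEuclideanCLM (𝕜 := ℂ) H2) x = χ 2 • x := hxi 2
    have h3 : (Matrix.toEuclideanCLM (𝕜 := ℂ) K2) x = χ 3 • x := hxi 3
    rw [show A + l • B = H1 + Complex.I • K1 + l • (H2 + Complex.I • K2) by
      rw [← hArec, ← hBrec]]
    rw [map_add, map_add, map_smul, map_smul, map_add, map_smul]
    simp only [ContinuousLinearMap.add_apply, ContinuousLinearMap.smul_apply]
    rw [h0, h1, h2, h3]
    show _ = (χ 0 + χ 1 * Complex.I + l * (χ 2 + χ 3 * Complex.I)) • x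
    module
  -- lower bound
  have hLower : ∀ χ ∈ P, ∀ l : ℂ, ‖cc l χ‖ ≤ ‖A + l • B‖ := by
    intro χ hχ l
    obtain ⟨x, hxW, hx0⟩ := Submodule.ne_bot_iff _ |>.mp ((hPmem χ).mp hχ)
    have h1 : Matrix.toEuclideanCLM (𝕜 := ℂ) (A + l • B) x = cc l χ • x := hact χ x hxW l
    have h2 := (Matrix.toEuclideanCLM (𝕜 := ℂ) (A + l • B)).le_opNorm x
    rw [h1, norm_smul] at h2
    have hxpos : 0 < ‖x‖ := norm_pos_iff.mpr hx0
    have h3 := (mul_le_mul_iff_of_pos_right hxpos).mp h2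
    rw [Matrix.cstar_norm_def]
    exact h3
  -- upper bound
  have hUpper : ∀ l : ℂ,
      ‖A + l • B‖ ≤ P.sup' hPne (fun χ => ‖cc l χ‖) := by
    intro l
    set C := P.sup' hPne (fun χ => ‖cc l χ‖) with hC
    have hC0 : 0 ≤ C := by
      obtain ⟨χ0, hχ0⟩ := hPne
      rw [hC]
      exact le_trans (norm_nonneg _) (Finset.le_sup' (fun χ => ‖cc l χ‖) hχ0)
    rw [Matrix.cstar_norm_def]
    apply ContinuousLinearMap.opNorm_le_bound _ hC0
    intro x
    have hx : x ∈ ⨆ χ, W χ := by rw [htop]; exact Submodule.mem_top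
    rw [Submodule.mem_iSup_iff_exists_finsupp] at hx
    obtain ⟨f, hfmem, hfsum⟩ := hx
    have hxs : x = ∑ χ ∈ f.support, f χ := by rw [← hfsum]; rfl
    have hφx : Matrix.toEuclideanCLM (𝕜 := ℂ) (A + l • B) x
        = ∑ χ ∈ f.support, cc l χ • f χ := by
      rw [hxs, map_sum]
      exact Finset.sum_congr rfl fun χ _ => hact χ (f χ) (hfmem χ) l
    have hnx : ‖x‖^2 = ∑ χ ∈ f.support, ‖f χ‖^2 := by
      have h := horth.norm_sum (fun χ => (⟨f χ, hfmem χ⟩ : W χ)) f.support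
      simp only [Submodule.coe_subtypeₗᵢ, Submodule.coe_subtype] at h
      rw [← hxs] at h
      exact h
    have hnφ : ‖Matrix.toEuclideanCLM (𝕜 := ℂ) (A + l • B) x‖^2
        = ∑ χ ∈ f.support, (‖cc l χ‖)^2 * ‖f χ‖^2 := by
      have h := horth.norm_sum
        (fun χ => (⟨cc l χ • f χ, Submodule.smul_mem _ _ (hfmem χ)⟩ : W χ)) f.support
      simp only [Submodule.coe_subtypeₗᵢ, Submodule.coe_subtype] at h
      rw [← hφx] at h
      rw [h]
      refine Finset.sum_congr rfl fun χ _ => ?_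
      rw [show ‖(⟨cc l χ • f χ, Submodule.smul_mem _ _ (hfmem χ)⟩ : W χ)‖
          = ‖cc l χ • f χ‖ from rfl,
        norm_smul, mul_pow]
    have hbound : ‖Matrix.toEuclideanCLM (𝕜 := ℂ) (A + l • B) x‖^2 ≤ C^2 * ‖x‖^2 := by
      rw [hnφ, hnx, Finset.mul_sum]
      refine Finset.sum_le_sum fun χ hχ => ?_
      have hfne : f χ ≠ 0 := Finsupp.mem_support_iff.mp hχ
      have hWne : W χ ≠ ⊥ := by
        intro hbot
        have := hfmem χ
        rw [hbot] at this
        exact hfne (by simpa using this)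
      have hχP : χ ∈ P := (hPmem χ).mpr hWne
      have habs : ‖cc l χ‖ ≤ C := by
        rw [hC]
        exact Finset.le_sup' (fun χ => ‖cc l χ‖) hχP
      have hsq := pow_le_pow_left₀ (norm_nonneg _) habs 2
      exact mul_le_mul_of_nonneg_right hsq (by positivity)
    have hfin2 : ‖Matrix.toEuclideanCLM (𝕜 := ℂ) (A + l • B) x‖^2 ≤ (C * ‖x‖)^2 := by
      rw [mul_pow]; exact hbound
    exact le_of_pow_le_pow_left₀ two_ne_zero (by positivity) hfin2
  -- norms of A and B
  have hαpos : (0:ℝ) < ‖A‖ := norm_pos_iff.mpr hA0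
  have hβpos : (0:ℝ) < ‖B‖ := norm_pos_iff.mpr hB0
  have hEq : ∀ l : ℂ, ‖A + l • B‖ = Real.sqrt (‖A‖^2 + (‖l‖)^2 * ‖B‖^2) := by
    intro l
    have h := hcon l
    rw [show ‖A + l • B‖ = Real.sqrt (‖A + l • B‖^2) from (Real.sqrt_sq (norm_nonneg _)).symm, h]
  -- E1 : pointwise upper bound on joint eigenvalues
  have hE1 : ∀ χ ∈ P, ∀ R : ℝ, 0 < R →
      ‖dd χ‖ + R * ‖ee χ‖ ≤ Real.sqrt (‖A‖^2 + R^2 * ‖B‖^2) := by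
    intro χ hχ R hR
    obtain ⟨l, hlabs, hlalign⟩ := aux_align (dd χ) (ee χ) R hR
    have h := hLower χ hχ l
    rw [hEq l, hlabs] at h
    calc ‖dd χ‖ + R * ‖ee χ‖ = ‖cc l χ‖ := hlalign.symm
      _ ≤ Real.sqrt (‖A‖^2 + R^2 * ‖B‖^2) := h
  -- E2 : for each R > 0 some joint eigenvalue pair nearly attains the norm
  have hE2 : ∀ R : ℝ, 0 < R → ∃ χ ∈ P,
      Real.sqrt (‖A‖^2 + R^2 * ‖B‖^2) ≤ ‖dd χ‖ + R * ‖ee χ‖ := by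
    intro R hR
    have habsR : ‖((R:ℝ) : ℂ)‖ = R := by
      rw [Complex.norm_real]; exact abs_of_pos hR
    have h := hUpper ((R:ℝ) : ℂ)
    rw [hEq, habsR] at h
    obtain ⟨χ, hχP, hχeq⟩ := Finset.exists_mem_eq_sup' hPne (fun χ => ‖cc ((R:ℝ):ℂ) χ‖)
    refine ⟨χ, hχP, ?_⟩
    calc Real.sqrt (‖A‖^2 + R^2 * ‖B‖^2) ≤ ‖cc ((R:ℝ):ℂ) χ‖ := by
          rw [← hχeq]; exact h
      _ ≤ ‖dd χ‖ + R * ‖ee χ‖ := by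
          refine le_trans (norm_add_le _ _) ?_
          rw [norm_mul, habsR]
  -- pigeonhole over R = k+1 for k = 0, ..., P.card
  have hg : ∀ k : ℕ, ∃ χ, χ ∈ P ∧
      Real.sqrt (‖A‖^2 + ((k:ℝ)+1)^2 * ‖B‖^2)
        ≤ ‖dd χ‖ + ((k:ℝ)+1) * ‖ee χ‖ := by
    intro k
    obtain ⟨χ, h1, h2⟩ := hE2 ((k:ℝ)+1) (by positivity)
    exact ⟨χ, h1, h2⟩
  choose g hgP hgle using hg
  obtain ⟨k1, hk1, k2, hk2, hkne, hgeq⟩ :=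
    Finset.exists_ne_map_eq_of_card_lt_of_maps_to
      (s := Finset.range (P.card + 1)) (t := P) (by simp) (fun k _ => hgP k)
  have key : ∀ a b : ℕ, a < b → g a = g b → False := by
    intro a b hab hgab
    have hPa : g a ∈ P := hgP a
    have hR1 : (0:ℝ) < (a:ℝ)+1 := by positivity
    have hR12 : (a:ℝ)+1 < (b:ℝ)+1 := by
      have : (a:ℝ) < (b:ℝ) := by exact_mod_cast hab
      linarith
    have h1 := hgle a
    have h2 := hgle b
    rw [← hgab] at h2
    have hm : (0:ℝ) < (((a:ℝ)+1)+((b:ℝ)+1))/2 := by positivity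
    have h3 := hE1 (g a) hPa ((((a:ℝ)+1)+((b:ℝ)+1))/2) hm
    have hconv := aux_convex ‖A‖ ‖B‖ ((a:ℝ)+1) ((b:ℝ)+1) hαpos hβpos hR1 hR12
    linarith
  rcases hkne.lt_or_gt with h | h
  · exact key k1 k2 h hgeq
  · exact key k2 k1 h hgeq.symm
end

section
/- Let H be a complex Hilbert space and A, B ∈ B(H) with ‖A‖ = 1 = ‖B‖. Let V = {(ω(I − A*A), ω(I − B*B), ω(B*A)) : ω a state on B(H)} (the first two entries are nonnegative real numbers since I − A*A and I − B*B are positive; regard V ⊆ ℝ × ℝ × ℂ). Then ‖A + λB‖² = 1 + |λ|² holds for all λ ∈ ℂ if and only if (i) V is contained in the cone 𝒞 = {(x, y, z) ∈ ℝ × ℝ × ℂ : 0 ≤ x ≤ 1, 0 ≤ y ≤ 1, |z| ≤ √(xy)}, and (ii) for every w ∈ ℂ with |w| = 1 and every s, t ∈ (0, ∞) there exists r ≥ 0 such that (rs, rt, rw√(st)) ∈ V. -/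
open scoped ComplexOrder

namespace PythagorasAux

open Complex Filter Topology

variable {H : Type*} [NormedAddCommGroup H] [InnerProductSpace ℂ H] [CompleteSpace H]

local notation "𝔸" => (H →L[ℂ] H)

lemma pos_decomp {P : 𝔸} (hP : 0 ≤ P) : ∃ C : 𝔸, P = star C * C :=
  ⟨CFC.sqrt P, by
    rw [(IsSelfAdjoint.of_nonneg (CFC.sqrt_nonneg P)).star_eq, CFC.sqrt_mul_sqrt_self P hP]⟩

lemma omega_nonneg {ω : 𝔸 →ₗ[ℂ] ℂ} (hpos : ∀ T : 𝔸, 0 ≤ ω (star T * T))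
    {P : 𝔸} (hP : 0 ≤ P) : 0 ≤ ω P := by
  obtain ⟨C, rfl⟩ := pos_decomp hP; exact hpos C

lemma herm (ω : 𝔸 →ₗ[ℂ] ℂ) (hpos : ∀ T : 𝔸, 0 ≤ ω (star T * T)) (S T : 𝔸) :
    ω (star S * T) = starRingEnd ℂ (ω (star T * S)) := by
  have him : ∀ R : 𝔸, (ω (star R * R)).im = 0 := fun R =>
    ((Complex.le_def.mp (hpos R)).2).symm
  have e1 : ω (star (S + T) * (S + T))
      = ω (star S * S) + ω (star S * T) + ω (star T * S) + ω (star T * T) := by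
    rw [star_add, add_mul, mul_add, mul_add]
    simp only [map_add]; ring
  have e2 : ω (star (S + Complex.I • T) * (S + Complex.I • T))
      = ω (star S * S) + Complex.I * ω (star S * T)
        - Complex.I * ω (star T * S) + ω (star T * T) := by
    have hstar : star (S + Complex.I • T) = star S + (-Complex.I) • star T := by
      rw [star_add, star_smul, RCLike.star_def, Complex.conj_I]
    have : -Complex.I * Complex.I = 1 := by simp [Complex.I_mul_I]
    rw [hstar]
    simp only [add_mul, mul_add, smul_mul_assoc, mul_smul_comm, smul_smul, this, one_smul,
      map_add, map_smul, smul_eq_mul, neg_mul]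
    ring_nf
    simp only [Complex.I_sq]
    ring
  have h1 := him (S + T)
  have h2 := him (S + Complex.I • T)
  rw [e1] at h1
  rw [e2] at h2
  have hS := him S; have hT := him T
  simp only [Complex.add_re, Complex.add_im, Complex.sub_im, Complex.mul_im, Complex.I_re,
    Complex.I_im] at h1 h2
  apply Complex.ext
  · simp only [Complex.conj_re]; linarith
  · simp only [Complex.conj_im]; linarith

lemma expand_re (ω : 𝔸 →ₗ[ℂ] ℂ) (hpos : ∀ T : 𝔸, 0 ≤ ω (star T * T)) (A B : 𝔸) (l : ℂ) :
    (ω (star (A + l • B) * (A + l • B))).re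
      = (ω (star A * A)).re + 2 * (starRingEnd ℂ l * ω (star B * A)).re
        + ‖l‖ ^ 2 * (ω (star B * B)).re := by
  have e : star (A + l • B) * (A + l • B)
      = star A * A + l • (star A * B) + (starRingEnd ℂ l) • (star B * A)
        + (starRingEnd ℂ l * l) • (star B * B) := by
    rw [star_add, star_smul, RCLike.star_def]
    simp only [add_mul, mul_add, smul_mul_assoc, mul_smul_comm, smul_smul, smul_add]
    module
  rw [e]
  simp only [map_add, map_smul, smul_eq_mul]
  rw [herm ω hpos A B]
  have hcl : starRingEnd ℂ l * l = ((‖l‖ ^ 2 : ℝ) : ℂ) := by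
    rw [mul_comm, Complex.mul_conj, Complex.normSq_eq_norm_sq]
  have hconj : (l * starRingEnd ℂ (ω (star B * A))).re
      = (starRingEnd ℂ l * ω (star B * A)).re := by
    rw [← Complex.conj_re (l * starRingEnd ℂ (ω (star B * A))), map_mul]
    simp
  rw [hcl]
  simp only [Complex.add_re, hconj, Complex.re_ofReal_mul]
  ring

lemma state_bound (ω : 𝔸 →ₗ[ℂ] ℂ) (hpos : ∀ T : 𝔸, 0 ≤ ω (star T * T)) (hone : ω 1 = 1)
    (T : 𝔸) : (ω (star T * T)).re ≤ ‖T‖ ^ 2 := by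
  have h0 : (0 : 𝔸) ≤ algebraMap ℝ 𝔸 (‖T‖ ^ 2) - star T * T :=
    sub_nonneg.mpr CStarAlgebra.star_mul_le_algebraMap_norm_sq
  have h1 := omega_nonneg hpos h0
  have h2 : ω (algebraMap ℝ 𝔸 (‖T‖ ^ 2)) = ((‖T‖ ^ 2 : ℝ) : ℂ) := by
    rw [Algebra.algebraMap_eq_smul_one, ← algebraMap_smul ℂ (‖T‖ ^ 2) (1 : 𝔸), map_smul, hone]
    simp [Algebra.algebraMap_eq_smul_one]
  rw [map_sub, h2] at h1
  have := (Complex.le_def.mp h1).1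
  simp only [Complex.zero_re, Complex.sub_re, Complex.ofReal_re] at this
  linarith

lemma coord_nonneg (ω : 𝔸 →ₗ[ℂ] ℂ) (hpos : ∀ T : 𝔸, 0 ≤ ω (star T * T)) (hone : ω 1 = 1)
    {A : 𝔸} (hA : ‖A‖ = 1) :
    0 ≤ (ω (1 - star A * A)).re ∧ (ω (1 - star A * A)).re ≤ 1 := by
  have hP : (0 : 𝔸) ≤ 1 - star A * A := by
    rw [sub_nonneg, ← CStarAlgebra.norm_le_one_iff_of_nonneg _ (star_mul_self_nonneg A),
      CStarRing.norm_star_mul_self, hA]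
    norm_num
  constructor
  · exact (Complex.le_def.mp (omega_nonneg hpos hP)).1
  · have h2 := (Complex.le_def.mp (hpos A)).1
    rw [map_sub, hone]
    simp only [Complex.sub_re, Complex.one_re, Complex.zero_re] at h2 ⊢
    linarith

lemma coord_re (ω : 𝔸 →ₗ[ℂ] ℂ) (hone : ω 1 = 1) (A : 𝔸) :
    (ω (star A * A)).re = 1 - (ω (1 - star A * A)).re := by
  rw [map_sub, hone]; simp

lemma abs_le_sqrt_aux {x y m : ℝ} (hx : 0 ≤ x) (hy : 0 ≤ y) (hm : 0 ≤ m)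
    (h : ∀ μ : ℝ, 0 ≤ μ → 2 * (μ * m) ≤ x + μ ^ 2 * y) : m ≤ Real.sqrt (x * y) := by
  rcases eq_or_lt_of_le hm with h0 | h0
  · rw [← h0]; positivity
  rcases eq_or_lt_of_le hy with hy0 | hy0
  · exfalso
    have hthis := h ((x + 1) / (2 * m)) (by positivity)
    rw [← hy0] at hthis
    have key : (x + 1) / (2 * m) * m = (x + 1) / 2 := by field_simp
    rw [key] at hthis
    linarith
  · have h1 := h (m / y) (by positivity)
    have hm2 : m ^ 2 ≤ x * y := by
      have k1 : (m / y) ^ 2 * y = m ^ 2 / y := by field_simp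
      have k2 : m / y * m = m ^ 2 / y := by field_simp
      rw [k1, k2] at h1
      have hdiv : m ^ 2 / y ≤ x := by linarith
      rw [div_le_iff₀ hy0] at hdiv
      nlinarith
    calc m = Real.sqrt (m ^ 2) := (Real.sqrt_sq hm).symm
      _ ≤ _ := Real.sqrt_le_sqrt hm2


noncomputable def vState (u : H) : StrongDual ℂ 𝔸 :=
  (innerSL ℂ u).comp (ContinuousLinearMap.apply ℂ H u)

lemma vState_apply (u : H) (S : 𝔸) : vState u S = inner ℂ u (S u) := rfl

lemma vState_star_mul_self (u : H) (S : 𝔸) :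
    vState u (star S * S) = ((‖S u‖ ^ 2 : ℝ) : ℂ) := by
  rw [vState_apply, ContinuousLinearMap.mul_apply, ContinuousLinearMap.star_eq_adjoint,
    ContinuousLinearMap.adjoint_inner_right, inner_self_eq_norm_sq_to_K]
  norm_cast

lemma vState_one (u : H) (hu : ‖u‖ = 1) : vState u 1 = 1 := by
  rw [vState_apply, ContinuousLinearMap.one_apply, inner_self_eq_norm_sq_to_K, hu]
  norm_num

lemma vState_pos (u : H) (S : 𝔸) : 0 ≤ vState u (star S * S) := by
  rw [vState_star_mul_self]
  exact Complex.zero_le_real.2 (by positivity)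

lemma vState_norm_le (u : H) (hu : ‖u‖ = 1) : ‖vState u‖ ≤ 1 :=
  ContinuousLinearMap.opNorm_le_bound _ zero_le_one fun S => by
    rw [vState_apply]
    rw [one_mul]
    calc ‖inner ℂ u (S u)‖ ≤ ‖u‖ * ‖S u‖ := norm_inner_le_norm _ _
      _ = ‖S u‖ := by rw [hu, one_mul]
      _ ≤ ‖S‖ * ‖u‖ := S.le_opNorm u
      _ = ‖S‖ := by rw [hu, mul_one]

set_option maxHeartbeats 1000000 in
lemma exists_attaining_state [Nontrivial H] (T : 𝔸) :
    ∃ ω : 𝔸 →ₗ[ℂ] ℂ, (∀ S : 𝔸, 0 ≤ ω (star S * S)) ∧ ω 1 = 1 ∧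
      ω (star T * T) = ((‖T‖ ^ 2 : ℝ) : ℂ) := by
  have hseq : ∀ n : ℕ, ∃ u : H, ‖u‖ = 1 ∧ ‖T‖ - 1 / (n + 1) ≤ ‖T u‖ := by
    intro n
    rcases lt_or_ge (‖T‖ - 1 / (n + 1)) 0 with hneg | hge
    · obtain ⟨u, hu⟩ := exists_norm_eq H (zero_le_one (α := ℝ))
      exact ⟨u, hu, hneg.le.trans (norm_nonneg _)⟩
    · have h' : ‖T‖ - 1 / (n + 1) < ‖T‖ := by
        have h1 : (0 : ℝ) < 1 / (n + 1) := by positivity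
        linarith
      obtain ⟨x, hx1, hx2⟩ := T.exists_lt_apply_of_lt_opNorm h'
      have hx0 : x ≠ 0 := by
        intro h0
        rw [h0, map_zero, norm_zero] at hx2
        exact absurd hx2 (not_lt.mpr hge)
      have hxn : (0 : ℝ) < ‖x‖ := norm_pos_iff.mpr hx0
      refine ⟨((‖x‖ : ℂ))⁻¹ • x, ?_, ?_⟩
      · rw [norm_smul, norm_inv, Complex.norm_real, norm_norm, inv_mul_cancel₀ hxn.ne']
      · rw [map_smul, norm_smul, norm_inv, Complex.norm_real, norm_norm]
        have h1 : 1 ≤ ‖x‖⁻¹ := (one_le_inv₀ hxn).mpr hx1.le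
        nlinarith [norm_nonneg (T x)]
  choose u hu1 hu2 using hseq
  have htend : Filter.Tendsto (fun n : ℕ => ‖T (u n)‖) atTop (𝓝 ‖T‖) := by
    refine tendsto_of_tendsto_of_tendsto_of_le_of_le
      (g := fun n : ℕ => ‖T‖ - 1 / (n + 1)) ?_ tendsto_const_nhds (fun n => hu2 n) (fun n => ?_)
    · have h0 := tendsto_one_div_add_atTop_nhds_zero_nat (𝕜 := ℝ)
      have := (tendsto_const_nhds (x := ‖T‖) (f := atTop)).sub h0
      simpa using this
    · calc ‖T (u n)‖ ≤ ‖T‖ * ‖u n‖ := T.le_opNorm _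
        _ = ‖T‖ := by rw [hu1 n, mul_one]
  set Φ : ℕ → WeakDual ℂ 𝔸 := fun n => StrongDual.toWeakDual (vState (u n)) with hΦ
  have hΦK : ∀ n, Φ n ∈ (WeakDual.toStrongDual ⁻¹' Metric.closedBall 0 1 : Set (WeakDual ℂ 𝔸)) := by
    intro n
    simp only [Set.mem_preimage, Metric.mem_closedBall, dist_zero_right]
    exact vState_norm_le (u n) (hu1 n)
  have hK := WeakDual.isCompact_closedBall (𝕜 := ℂ) (E := 𝔸) 0 1
  have hle : Filter.map Φ atTop ≤ Filter.principal
      (WeakDual.toStrongDual ⁻¹' Metric.closedBall 0 1 : Set (WeakDual ℂ 𝔸)) :=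
    Filter.le_principal_iff.mpr (Filter.mem_map.mpr (Filter.Eventually.of_forall hΦK))
  obtain ⟨ω, -, hω⟩ := hK.exists_clusterPt hle
  have hωm : MapClusterPt ω atTop Φ := hω
  have hev : ∀ S : 𝔸, MapClusterPt (ω S) atTop (fun n => Φ n S) := fun S =>
    hωm.continuousAt_comp (WeakDual.eval_continuous S).continuousAt
  have heqlim : ∀ (g : ℕ → ℂ) (zz c : ℂ), MapClusterPt zz atTop g →
      Filter.Tendsto g atTop (𝓝 c) → zz = c := by
    intro g zz c hc ht
    have hne : (𝓝 zz ⊓ 𝓝 c).NeBot := hc.clusterPt.neBot.mono (inf_le_inf_left _ ht)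
    exact t2_iff_nhds.mp inferInstance hne
  have hmem : ∀ (g : ℕ → ℂ) (zz : ℂ) (C : Set ℂ), IsClosed C → MapClusterPt zz atTop g →
      (∀ n, g n ∈ C) → zz ∈ C := by
    intro g zz C hC hc hg
    have h1 : ClusterPt zz (Filter.principal C) :=
      hc.clusterPt.mono (Filter.le_principal_iff.mpr
        (Filter.mem_map.mpr (Filter.Eventually.of_forall hg)))
    exact hC.closure_eq ▸ mem_closure_iff_clusterPt.mpr h1
  have hposC : IsClosed {z : ℂ | 0 ≤ z} := by
    have he : {z : ℂ | 0 ≤ z} = Complex.re ⁻¹' Set.Ici 0 ∩ Complex.im ⁻¹' {0} := by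
      ext z
      simp [Complex.le_def, eq_comm]
    rw [he]
    exact (isClosed_Ici.preimage Complex.continuous_re).inter
      (isClosed_singleton.preimage Complex.continuous_im)
  refine ⟨(WeakDual.toStrongDual ω).toLinearMap, fun S => ?_, ?_, ?_⟩
  · exact hmem _ _ _ hposC (hev (star S * S)) fun n => vState_pos (u n) S
  · refine heqlim _ _ _ (hev 1) ?_
    have h1 : (fun n => Φ n (1 : 𝔸)) = fun _ => (1 : ℂ) :=
      funext fun n => vState_one (u n) (hu1 n)
    rw [h1]
    exact tendsto_const_nhds
  · refine heqlim _ _ _ (hev (star T * T)) ?_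
    have h1 : (fun n => Φ n (star T * T)) = fun n => ((‖T (u n)‖ ^ 2 : ℝ) : ℂ) :=
      funext fun n => vState_star_mul_self (u n) T
    rw [h1]
    exact (Complex.continuous_ofReal.tendsto _).comp (htend.pow 2)

lemma cone_mem (A B : 𝔸) (hA : ‖A‖ = 1) (hB : ‖B‖ = 1)
    (hpy : ∀ l : ℂ, ‖A + l • B‖ ^ 2 = 1 + ‖l‖ ^ 2)
    (ω : 𝔸 →ₗ[ℂ] ℂ) (hpos : ∀ T : 𝔸, 0 ≤ ω (star T * T)) (hone : ω 1 = 1) :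
    0 ≤ (ω (1 - star A * A)).re ∧ (ω (1 - star A * A)).re ≤ 1 ∧
    0 ≤ (ω (1 - star B * B)).re ∧ (ω (1 - star B * B)).re ≤ 1 ∧
    ‖ω (star B * A)‖ ≤
      Real.sqrt ((ω (1 - star A * A)).re * (ω (1 - star B * B)).re) := by
  obtain ⟨hx0, hx1⟩ := coord_nonneg ω hpos hone hA
  obtain ⟨hy0, hy1⟩ := coord_nonneg ω hpos hone hB
  refine ⟨hx0, hx1, hy0, hy1, ?_⟩
  set x := (ω (1 - star A * A)).re with hxd
  set y := (ω (1 - star B * B)).re with hyd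
  set z := ω (star B * A) with hzd
  have key : ∀ l : ℂ, 2 * (starRingEnd ℂ l * z).re ≤ x + ‖l‖ ^ 2 * y := by
    intro l
    have h1 := state_bound ω hpos hone (A + l • B)
    rw [expand_re ω hpos A B l, hpy l, coord_re ω hone A, coord_re ω hone B] at h1
    rw [← hxd, ← hyd, ← hzd] at h1
    nlinarith [h1]
  rcases eq_or_ne z 0 with h0 | h0
  · rw [h0, norm_zero]
    positivity
  · refine abs_le_sqrt_aux hx0 hy0 (norm_nonneg z) ?_
    intro μ hμ
    have habs : (0 : ℝ) < ‖z‖ := norm_pos_iff.mpr h0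
    have hk := key (((μ / ‖z‖ : ℝ) : ℂ) * z)
    have e1 : starRingEnd ℂ (((μ / ‖z‖ : ℝ) : ℂ) * z) * z
        = ((μ * ‖z‖ : ℝ) : ℂ) := by
      rw [map_mul, Complex.conj_ofReal, mul_assoc, mul_comm (starRingEnd ℂ z) z,
        Complex.mul_conj, Complex.normSq_eq_norm_sq]
      push_cast
      field_simp
    have e2 : ‖(((μ / ‖z‖ : ℝ) : ℂ) * z)‖ = μ := by
      rw [norm_mul, Complex.norm_real, Real.norm_eq_abs,
        _root_.abs_of_nonneg (by positivity : (0:ℝ) ≤ μ / ‖z‖),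
        div_mul_cancel₀ _ habs.ne']
    rw [e1, e2] at hk
    simpa using hk

end PythagorasAux


set_option maxHeartbeats 2000000

open PythagorasAux in
/-- Characterization of Pythagoras orthogonality of norm-one operators `A, B ∈ B(H)` in
terms of the joint algebraic numerical range `V = V(I − A*A, I − B*B, B*A)`:
`A ⊥_P B` iff `V` lies in the cone `{(x,y,z) : 0 ≤ x ≤ 1, 0 ≤ y ≤ 1, |z| ≤ √(xy)}` and
`V` meets every closed ray from `0` in the direction `(s, t, w√(st))` with `s, t > 0`,
`|w| = 1`. -/
theorem pythagoras_orthogonal_iff_numerical_range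
    {H : Type*} [NormedAddCommGroup H] [InnerProductSpace ℂ H] [CompleteSpace H]
    (A B : H →L[ℂ] H) (hA : ‖A‖ = 1) (hB : ‖B‖ = 1) :
    (∀ l : ℂ, ‖A + l • B‖ ^ 2 = 1 + ‖l‖ ^ 2) ↔
      (({p : ℝ × ℝ × ℂ | ∃ ω : (H →L[ℂ] H) →ₗ[ℂ] ℂ,
            (∀ T : H →L[ℂ] H, 0 ≤ ω (star T * T)) ∧ ω 1 = 1 ∧
            p = ((ω (1 - star A * A)).re, (ω (1 - star B * B)).re, ω (star B * A))} ⊆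
          {p : ℝ × ℝ × ℂ | 0 ≤ p.1 ∧ p.1 ≤ 1 ∧ 0 ≤ p.2.1 ∧ p.2.1 ≤ 1 ∧
            ‖p.2.2‖ ≤ Real.sqrt (p.1 * p.2.1)}) ∧
        ∀ w : ℂ, ‖w‖ = 1 → ∀ s t : ℝ, 0 < s → 0 < t →
          ∃ r : ℝ, 0 ≤ r ∧
            (r * s, r * t, (r : ℂ) * w * (Real.sqrt (s * t) : ℝ)) ∈
              {p : ℝ × ℝ × ℂ | ∃ ω : (H →L[ℂ] H) →ₗ[ℂ] ℂ,
                (∀ T : H →L[ℂ] H, 0 ≤ ω (star T * T)) ∧ ω 1 = 1 ∧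
                p = ((ω (1 - star A * A)).re, (ω (1 - star B * B)).re,
                  ω (star B * A))}) := by
  have hH : Nontrivial H := by
    rcases subsingleton_or_nontrivial H with h | h
    · exfalso
      have h0 : ‖A‖ ≤ 0 := A.opNorm_le_bound le_rfl fun x => by
        rw [Subsingleton.elim (A x) 0, norm_zero, zero_mul]
      rw [hA] at h0
      linarith
    · exact h
  constructor
  · intro hpy
    constructor
    · rintro p ⟨ω, hpos, hone, rfl⟩
      exact cone_mem A B hA hB hpy ω hpos hone
    · intro w hw s t hs ht
      set c := Real.sqrt (s / t) with hc
      have hc0 : 0 < c := Real.sqrt_pos.mpr (by positivity)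
      set l : ℂ := (c : ℂ) * w with hl
      have hln : ‖l‖ = c := by
        rw [hl, norm_mul, Complex.norm_real, Real.norm_eq_abs, abs_of_pos hc0,
          hw, mul_one]
      obtain ⟨ω, hpos, hone, hatt⟩ := exists_attaining_state (H := H) (A + l • B)
      obtain ⟨hx0, hx1, hy0, hy1, hzb⟩ := cone_mem A B hA hB hpy ω hpos hone
      set x := (ω (1 - star A * A)).re with hxd
      set y := (ω (1 - star B * B)).re with hyd
      set z := ω (star B * A) with hzd
      have hre : (ω (star (A + l • B) * (A + l • B))).re = 1 + c ^ 2 := by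
        rw [hatt, Complex.ofReal_re, hpy l, hln]
      have hexp := expand_re ω hpos A B l
      rw [coord_re ω hone A, coord_re ω hone B, hln, ← hxd, ← hyd, ← hzd, hre] at hexp
      have heq : x + c ^ 2 * y = 2 * (starRingEnd ℂ l * z).re := by linarith
      have hclz : (starRingEnd ℂ l * z).re = c * (starRingEnd ℂ w * z).re := by
        rw [hl, map_mul, Complex.conj_ofReal, mul_assoc, Complex.re_ofReal_mul]
      have h1 : (starRingEnd ℂ w * z).re ≤ ‖z‖ := by
        calc (starRingEnd ℂ w * z).re ≤ ‖starRingEnd ℂ w * z‖ := Complex.re_le_norm _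
          _ = ‖z‖ := by rw [norm_mul, Complex.norm_conj, hw, one_mul]
      have hsqm : Real.sqrt (x * y) = Real.sqrt x * Real.sqrt y := Real.sqrt_mul hx0 y
      have h3 : 2 * c * Real.sqrt (x * y) ≤ x + c ^ 2 * y := by
        nlinarith [sq_nonneg (Real.sqrt x - c * Real.sqrt y), Real.sq_sqrt hx0, Real.sq_sqrt hy0]
      have hrew : x + c ^ 2 * y = 2 * c * ((starRingEnd ℂ w * z).re) := by
        rw [heq, hclz]; ring
      have hqR : Real.sqrt (x * y) ≤ (starRingEnd ℂ w * z).re := by nlinarith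
      have hE1 : (starRingEnd ℂ w * z).re = ‖z‖ :=
        le_antisymm h1 (hzb.trans hqR)
      have hE2 : ‖z‖ = Real.sqrt (x * y) := le_antisymm hzb (hqR.trans h1)
      have hE3 : x = c ^ 2 * y := by
        have h6 : (Real.sqrt x - c * Real.sqrt y) ^ 2 = 0 := by
          nlinarith [Real.sq_sqrt hx0, Real.sq_sqrt hy0, hrew, hE1, hE2, hsqm]
        have h7 : Real.sqrt x = c * Real.sqrt y := by
          have h7' := sq_eq_zero_iff.mp h6
          linarith
        have h8 : x = Real.sqrt x ^ 2 := (Real.sq_sqrt hx0).symm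
        rw [h8, h7, mul_pow, Real.sq_sqrt hy0]
      have hz_eq : z = ((‖z‖ : ℝ) : ℂ) * w := by
        set ζ := starRingEnd ℂ w * z with hζ
        have hζa : ‖ζ‖ = ‖z‖ := by
          rw [hζ, norm_mul, Complex.norm_conj, hw, one_mul]
        have hζre : ζ.re = ‖ζ‖ := by rw [hζa, ← hE1]
        have hζim : ζ.im = 0 := by
          have h8 : ζ.re ^ 2 + ζ.im ^ 2 = (‖ζ‖) ^ 2 := by
            rw [Complex.sq_norm, Complex.normSq_apply]; ring
          have h9 : ζ.re ^ 2 = (‖ζ‖) ^ 2 := by rw [hζre]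
          have h10 : ζ.im ^ 2 = 0 := by linarith
          exact sq_eq_zero_iff.mp h10
        have hζval : ζ = ((‖z‖ : ℝ) : ℂ) := by
          apply Complex.ext
          · rw [hζre, hζa, Complex.ofReal_re]
          · rw [hζim, Complex.ofReal_im]
        have hw1 : w * starRingEnd ℂ w = 1 := by
          rw [Complex.mul_conj, Complex.normSq_eq_norm_sq, hw]; norm_num
        have hwz : z = w * ζ := by rw [hζ, ← mul_assoc, hw1, one_mul]
        rw [hζval] at hwz
        exact hwz.trans (mul_comm w _)
      refine ⟨y / t, by positivity, ω, hpos, hone, ?_⟩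
      have hct : c * t = Real.sqrt (s * t) := by
        have he : s * t = s / t * t ^ 2 := by field_simp
        rw [he, Real.sqrt_mul (by positivity) (t ^ 2), Real.sqrt_sq ht.le, hc]
      have hc2 : c ^ 2 = s / t := Real.sq_sqrt (by positivity)
      have hrs : y / t * s = x := by
        rw [hE3, hc2]; field_simp
      have hrt : y / t * t = y := by field_simp
      have habsz : ‖z‖ = y / t * Real.sqrt (s * t) := by
        have hxy : x * y = (c * y) ^ 2 := by rw [hE3]; ring
        rw [hE2, hxy, Real.sqrt_sq (by positivity), ← hct]
        field_simp
      refine Prod.ext hrs (Prod.ext hrt ?_)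
      show ((y / t : ℝ) : ℂ) * w * ((Real.sqrt (s * t) : ℝ) : ℂ) = z
      rw [hz_eq, habsz]
      push_cast
      ring
  · rintro ⟨hcone, hray⟩ l
    have hub : ‖A + l • B‖ ^ 2 ≤ 1 + ‖l‖ ^ 2 := by
      have hbound : ‖A + l • B‖ ≤ Real.sqrt (1 + ‖l‖ ^ 2) := by
        refine ContinuousLinearMap.opNorm_le_bound _ (Real.sqrt_nonneg _) fun v => ?_
        rcases eq_or_ne v 0 with rfl | hv0
        · simp
        · have hvn : 0 < ‖v‖ := norm_pos_iff.mpr hv0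
          set u : H := ((‖v‖ : ℂ))⁻¹ • v with hu
          have hun : ‖u‖ = 1 := by
            rw [hu, norm_smul, norm_inv, Complex.norm_real, norm_norm, inv_mul_cancel₀ hvn.ne']
          set ω : (H →L[ℂ] H) →ₗ[ℂ] ℂ := (vState u).toLinearMap with hωd
          have hpos : ∀ S : H →L[ℂ] H, 0 ≤ ω (star S * S) := fun S => vState_pos u S
          have hone : ω 1 = 1 := vState_one u hun
          obtain ⟨hx0, hx1, hy0, hy1, hzb⟩ := hcone ⟨ω, hpos, hone, rfl⟩
          simp only [Prod.fst, Prod.snd] at hx0 hx1 hy0 hy1 hzb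
          set x := (ω (1 - star A * A)).re with hxd
          set y := (ω (1 - star B * B)).re with hyd
          set z := ω (star B * A) with hzd
          have hval : (ω (star (A + l • B) * (A + l • B))).re = ‖(A + l • B) u‖ ^ 2 := by
            have h9 := vState_star_mul_self u (A + l • B)
            rw [show ω (star (A + l • B) * (A + l • B))
                = vState u (star (A + l • B) * (A + l • B)) from rfl, h9, Complex.ofReal_re]
          have hexp := expand_re ω hpos A B l
          rw [coord_re ω hone A, coord_re ω hone B, ← hxd, ← hyd, ← hzd] at hexp
          have h1 : (starRingEnd ℂ l * z).re ≤ ‖l‖ * ‖z‖ := by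
            calc (starRingEnd ℂ l * z).re ≤ ‖starRingEnd ℂ l * z‖ :=
                Complex.re_le_norm _
              _ = ‖l‖ * ‖z‖ := by
                rw [norm_mul, Complex.norm_conj]
          have h3 : 2 * ‖l‖ * Real.sqrt (x * y) ≤ x + ‖l‖ ^ 2 * y := by
            have q := sq_nonneg (Real.sqrt x - ‖l‖ * Real.sqrt y)
            have e1 := Real.sq_sqrt hx0
            have e2 := Real.sq_sqrt hy0
            have e3 : Real.sqrt (x * y) = Real.sqrt x * Real.sqrt y := Real.sqrt_mul hx0 y
            rw [e3]
            nlinarith [q, e1, e2, sq_nonneg ‖l‖]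
          have hTu2 : ‖(A + l • B) u‖ ^ 2 ≤ 1 + ‖l‖ ^ 2 := by
            rw [← hval, hexp]
            have h5 : ‖l‖ * ‖z‖ ≤ ‖l‖ * Real.sqrt (x * y) :=
              mul_le_mul_of_nonneg_left hzb (norm_nonneg l)
            nlinarith [h1, h3, h5]
          have hTu : ‖(A + l • B) v‖ = ‖v‖ * ‖(A + l • B) u‖ := by
            rw [hu, map_smul, norm_smul, norm_inv, Complex.norm_real, norm_norm]
            field_simp
          have hTul : ‖(A + l • B) u‖ ≤ Real.sqrt (1 + ‖l‖ ^ 2) := by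
            rw [← Real.sqrt_sq (norm_nonneg ((A + l • B) u))]
            exact Real.sqrt_le_sqrt hTu2
          rw [hTu, mul_comm]
          exact mul_le_mul_of_nonneg_right hTul hvn.le
      have h2 : ‖A + l • B‖ ^ 2 ≤ (Real.sqrt (1 + ‖l‖ ^ 2)) ^ 2 :=
        pow_le_pow_left₀ (norm_nonneg _) hbound 2
      rwa [Real.sq_sqrt (by positivity)] at h2
    rcases eq_or_ne l 0 with rfl | hl0
    · simp [hA]
    · set w : ℂ := l / (‖l‖ : ℝ) with hwd
      have hln : (0 : ℝ) < ‖l‖ := norm_pos_iff.mpr hl0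
      have hwabs : ‖w‖ = 1 := by
        rw [hwd, norm_div, Complex.norm_real, norm_norm,
          div_self hln.ne']
      obtain ⟨r, hr0, ω, hpos, hone, hp⟩ := hray w hwabs (‖l‖ ^ 2) 1 (by positivity) one_pos
      rw [Prod.ext_iff] at hp
      obtain ⟨hp1, hp23⟩ := hp
      rw [Prod.ext_iff] at hp23
      obtain ⟨hp2, hp3⟩ := hp23
      simp only at hp1 hp2 hp3
      have hsq1 : Real.sqrt (‖l‖ ^ 2 * 1) = ‖l‖ := by
        rw [mul_one, Real.sqrt_sq (norm_nonneg l)]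
      have hz : ω (star B * A) = (r : ℂ) * l := by
        rw [← hp3, hsq1, hwd, mul_assoc,
          div_mul_cancel₀ l (Complex.ofReal_ne_zero.mpr hln.ne')]
      have hexp := expand_re ω hpos A B l
      rw [coord_re ω hone A, coord_re ω hone B, ← hp1, ← hp2, hz] at hexp
      have hclz : (starRingEnd ℂ l * ((r : ℂ) * l)).re = r * ‖l‖ ^ 2 := by
        have e1 : starRingEnd ℂ l * l = ((‖l‖ ^ 2 : ℝ) : ℂ) := by
          rw [mul_comm, Complex.mul_conj, Complex.normSq_eq_norm_sq]
        have e : starRingEnd ℂ l * ((r : ℂ) * l) = ((r * ‖l‖ ^ 2 : ℝ) : ℂ) := by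
          rw [mul_comm ((r : ℂ)) l, ← mul_assoc, e1]
          push_cast
          ring
        rw [e, Complex.ofReal_re]
      rw [hclz] at hexp
      have hlow := state_bound ω hpos hone (A + l • B)
      rw [hexp] at hlow
      have hge : 1 + ‖l‖ ^ 2 ≤ ‖A + l • B‖ ^ 2 := by nlinarith [hlow]
      linarith
end

section
/- Let K be a complex Hilbert space and let C₀, …, C_m ∈ B(K) satisfy Σ_{j=0}^m CⱼCⱼ* ≤ I in the Loewner order. If ω is a state on B(K) such that ω(Cⱼ*Cⱼ) = 1 for all j = 0, …, m, then ω(Cₖ*Cⱼ) = 0 whenever k ≠ j. -/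
open scoped ComplexOrder

section Aux

variable {K : Type*} [NormedAddCommGroup K] [InnerProductSpace ℂ K] [CompleteSpace K]
  (ω : (K →L[ℂ] K) →ₗ[ℂ] ℂ)

/-- Positivity on `star T * T` extends to all nonnegative operators. -/
lemma aux_state_nonneg (hpos : ∀ T : K →L[ℂ] K, 0 ≤ ω (star T * T))
    {a : K →L[ℂ] K} (ha : 0 ≤ a) : 0 ≤ ω a := by
  have h1 := hpos (CFC.sqrt a)
  rwa [(IsSelfAdjoint.of_nonneg (CFC.sqrt_nonneg a)).star_eq, CFC.sqrt_mul_sqrt_self a ha] at h1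

lemma aux_state_star (hpos : ∀ T : K →L[ℂ] K, 0 ≤ ω (star T * T))
    (a : K →L[ℂ] K) : ω (star a) = (starRingEnd ℂ) (ω a) := by
  have him : ∀ T : K →L[ℂ] K, (ω (star T * T)).im = 0 :=
    fun T => ((Complex.le_def.mp (hpos T)).2).symm
  have h1im : (ω 1).im = 0 := by simpa using him 1
  have haim := him a
  have e1 : star (1 + a) * (1 + a) = star a * a + 1 + a + star a := by
    rw [star_add, star_one]; noncomm_ring
  have h1 := him (1 + a)
  rw [e1] at h1
  simp only [map_add, Complex.add_im, haim, h1im, zero_add] at h1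
  have e2 : star (1 + Complex.I • a) * (1 + Complex.I • a)
      = star a * a + 1 + Complex.I • a - Complex.I • star a := by
    rw [star_add, star_one, star_smul]
    simp only [RCLike.star_def, Complex.conj_I, add_mul, mul_add, one_mul, mul_one,
      neg_smul, neg_mul, smul_mul_smul_comm, Complex.I_mul_I, neg_neg, one_smul]
    abel
  have h2 := him (1 + Complex.I • a)
  rw [e2] at h2
  simp only [map_add, map_sub, map_smul, smul_eq_mul, Complex.add_im, Complex.sub_im,
    Complex.mul_im, Complex.I_re, Complex.I_im, haim, h1im, zero_add, zero_mul, one_mul,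
    add_zero, mul_zero] at h2
  apply Complex.ext
  · simpa using (sub_eq_zero.mp h2).symm
  · simp only [Complex.conj_im]
    linarith [h1]

/-- Cauchy–Schwarz with `S = 1`. -/
lemma aux_state_cs (hpos : ∀ T : K →L[ℂ] K, 0 ≤ ω (star T * T)) (hone : ω 1 = 1)
    (X : K →L[ℂ] K) : ((‖ω X‖ ^ 2 : ℝ) : ℂ) ≤ ω (star X * X) := by
  have h := hpos (X - ω X • 1)
  have hexp : star (X - ω X • 1) * (X - ω X • 1)
      = star X * X - ω X • star X - (starRingEnd ℂ) (ω X) • X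
        + (ω X * (starRingEnd ℂ) (ω X)) • 1 := by
    simp only [star_sub, star_smul, star_one, RCLike.star_def, sub_mul, mul_sub, smul_sub,
      smul_mul_assoc, mul_smul_comm, smul_smul, one_mul, mul_one]
    abel
  rw [hexp] at h
  simp only [map_add, map_sub, map_smul, smul_eq_mul, hone, mul_one,
    aux_state_star ω hpos X, RCLike.mul_conj, RCLike.conj_mul] at h
  ring_nf at h
  exact_mod_cast sub_nonneg.mp h

end Aux

/-- If `C₀, …, C_m ∈ B(K)` satisfy `Σ CⱼCⱼ* ≤ I` and `ω` is a state on `B(K)` with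
`ω(Cⱼ*Cⱼ) = 1` for all `j`, then `ω(Cₖ*Cⱼ) = 0` for `k ≠ j`. -/
theorem state_orthogonality_of_column_contraction
    {K : Type*} [NormedAddCommGroup K] [InnerProductSpace ℂ K] [CompleteSpace K]
    (m : ℕ) (C : Fin (m + 1) → K →L[ℂ] K)
    (hcol : ((1 : K →L[ℂ] K) - ∑ j, C j * star (C j)).IsPositive)
    (ω : (K →L[ℂ] K) →ₗ[ℂ] ℂ)
    (hpos : ∀ T : K →L[ℂ] K, 0 ≤ ω (star T * T)) (hone : ω 1 = 1)
    (hnorm : ∀ j, ω (star (C j) * C j) = 1) :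
    ∀ j k, j ≠ k → ω (star (C k) * C j) = 0 := by
  intro j k hjk
  have hP : (0 : K →L[ℂ] K) ≤ 1 - ∑ i, C i * star (C i) :=
    (ContinuousLinearMap.nonneg_iff_isPositive _).mpr hcol
  set Y : Fin (m + 1) → (K →L[ℂ] K) := fun i => star (C i) * C j with hY
  have hop : star (C j) * (1 - ∑ i, C i * star (C i)) * C j
      = star (C j) * C j - ∑ i, star (Y i) * Y i := by
    rw [mul_sub, sub_mul, mul_one, Finset.mul_sum, Finset.sum_mul]
    congr 1
    exact Finset.sum_congr rfl fun i _ => by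
      simp only [hY, star_mul, star_star]; noncomm_ring
  have hge : 0 ≤ ω (star (C j) * (1 - ∑ i, C i * star (C i)) * C j) :=
    aux_state_nonneg ω hpos (star_left_conjugate_nonneg hP (C j))
  rw [hop, map_sub, map_sum, hnorm j] at hge
  have hsum : ∑ i, ω (star (Y i) * Y i) ≤ 1 := sub_nonneg.mp hge
  have hterm : ∀ i, 0 ≤ ω (star (Y i) * Y i) := fun i => hpos (Y i)
  have hj1 : (1 : ℂ) ≤ ω (star (Y j) * Y j) := by
    have hcsj := aux_state_cs ω hpos hone (Y j)
    have hYj : ω (Y j) = 1 := hnorm j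
    rw [hYj] at hcsj
    simpa using hcsj
  have hsplit : ∑ i, ω (star (Y i) * Y i)
      = ω (star (Y j) * Y j) + ∑ i ∈ Finset.univ.erase j, ω (star (Y i) * Y i) :=
    (Finset.add_sum_erase _ _ (Finset.mem_univ j)).symm
  have hk_mem : k ∈ Finset.univ.erase j := Finset.mem_erase.mpr ⟨Ne.symm hjk, Finset.mem_univ k⟩
  have hk_le : ω (star (Y k) * Y k) ≤ ∑ i ∈ Finset.univ.erase j, ω (star (Y i) * Y i) :=
    Finset.single_le_sum (fun i _ => hterm i) hk_mem
  have hrest : ∑ i ∈ Finset.univ.erase j, ω (star (Y i) * Y i) ≤ 0 := by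
    rw [hsplit] at hsum
    have h1 : ∑ i ∈ Finset.univ.erase j, ω (star (Y i) * Y i)
        ≤ 1 - ω (star (Y j) * Y j) := le_sub_iff_add_le'.mpr hsum
    exact h1.trans (sub_nonpos.mpr hj1)
  have hYk0 : ω (star (Y k) * Y k) = 0 := le_antisymm (hk_le.trans hrest) (hterm k)
  have hcs := aux_state_cs ω hpos hone (Y k)
  rw [hYk0] at hcs
  have hsq : (‖ω (Y k)‖ ^ 2 : ℝ) ≤ 0 := by exact_mod_cast hcs
  have hn : ‖ω (Y k)‖ = 0 := by nlinarith [norm_nonneg (ω (Y k))]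
  exact norm_eq_zero.mp hn
end

section
/- Let 𝒜 be a C*-algebra and A, B ∈ 𝒜. Then B*B ≤ A*A (in the Loewner order of 𝒜) if and only if ‖BX‖ ≤ ‖AX‖ for all X ∈ 𝒜. -/
/-- In a unital C⋆-algebra, `‖sqrt (star v * v) * x‖ = ‖v * x‖`. -/
lemma aux_norm_sqrt_mul {A : Type*} [CStarAlgebra A] [PartialOrder A] [StarOrderedRing A]
    (v x : A) : ‖CFC.sqrt (star v * v) * x‖ = ‖v * x‖ := by
  have h1 : ‖CFC.sqrt (star v * v) * x‖ ^ 2 = ‖v * x‖ ^ 2 := by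
    rw [sq, sq, ← CStarRing.norm_star_mul_self, ← CStarRing.norm_star_mul_self (x := v * x)]
    congr 1
    rw [star_mul, star_mul, IsSelfAdjoint.of_nonneg (CFC.sqrt_nonneg (star v * v))]
    calc star x * CFC.sqrt (star v * v) * (CFC.sqrt (star v * v) * x)
        = star x * (CFC.sqrt (star v * v) * CFC.sqrt (star v * v)) * x := by
          simp only [mul_assoc]
      _ = star x * star v * (v * x) := by
          rw [CFC.sqrt_mul_sqrt_self _ (star_mul_self_nonneg v)]; simp only [mul_assoc]
  nlinarith [norm_nonneg (CFC.sqrt (star v * v) * x), norm_nonneg (v * x)]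

/-- The unital case of the hard direction. -/
lemma aux_unital {A : Type*} [CStarAlgebra A] [PartialOrder A] [StarOrderedRing A]
    (u v : A) (h : ∀ x : A, ‖v * x‖ ≤ ‖u * x‖) : star v * v ≤ star u * u := by
  have key : ∀ ε : ℝ, 0 < ε → star v * v ≤ star u * u + ε • 1 := by
    intro ε hε
    set c := star u * u + ε • (1:A) with hc_def
    have hε1 : (0:A) ≤ ε • 1 := smul_nonneg hε.le zero_le_one
    have hc : (0:A) ≤ c := add_nonneg (star_mul_self_nonneg u) hε1
    have hcu : IsUnit c := by
      refine CStarAlgebra.isUnit_of_le (ε • (1:A)) ?_ (IsStrictlyPositive.smul hε isStrictlyPositive_one)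
      · exact le_add_of_nonneg_left (star_mul_self_nonneg u)
    have h1 : star u * u ≤ c := le_add_of_nonneg_right hε1
    rw [le_iff_norm_sqrt_mul_rpow _ _ (star_mul_self_nonneg u) (hcu.isStrictlyPositive hc)] at h1
    rw [le_iff_norm_sqrt_mul_rpow _ _ (star_mul_self_nonneg v) (hcu.isStrictlyPositive hc)]
    refine le_trans ?_ h1
    rw [aux_norm_sqrt_mul, aux_norm_sqrt_mul]
    exact h _
  have tend : Filter.Tendsto (fun ε : ℝ => star u * u + ε • (1:A))
      (nhdsWithin 0 (Set.Ioi 0)) (nhds (star u * u)) := by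
    have h2 : Filter.Tendsto (fun ε : ℝ => star u * u + ε • (1:A)) (nhds 0)
        (nhds (star u * u + (0:ℝ) • (1:A))) :=
      Filter.Tendsto.const_add _ ((continuous_id.smul continuous_const).tendsto 0)
    simpa using h2.mono_left nhdsWithin_le_nhds
  exact ge_of_tendsto tend (by filter_upwards [self_mem_nhdsWithin] with ε hε using key ε hε)

/-- In a C*-algebra, `B*B ≤ A*A` in the Loewner order iff `‖BX‖ ≤ ‖AX‖` for all `X`. -/
theorem star_mul_le_iff_norm_mul_le
    {𝒜 : Type*} [NonUnitalNormedRing 𝒜] [StarRing 𝒜] [CStarRing 𝒜]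
    [PartialOrder 𝒜] [StarOrderedRing 𝒜] [CompleteSpace 𝒜]
    [NormedSpace ℂ 𝒜] [StarModule ℂ 𝒜] [SMulCommClass ℂ 𝒜 𝒜] [IsScalarTower ℂ 𝒜 𝒜]
    (A B : 𝒜) :
    star B * B ≤ star A * A ↔ ∀ X : 𝒜, ‖B * X‖ ≤ ‖A * X‖ := by
  letI : NonUnitalCStarAlgebra 𝒜 := { }
  constructor
  · intro h X
    have h1 : star X * (star B * B) * X ≤ star X * (star A * A) * X :=
      star_left_conjugate_le_conjugate h X
    have e : ∀ C : 𝒜, star X * (star C * C) * X = star (C * X) * (C * X) := fun C => by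
      rw [star_mul]; simp only [mul_assoc]
    rw [e B, e A] at h1
    have h3 := CStarAlgebra.norm_le_norm_of_nonneg_of_le (star_mul_self_nonneg (B * X)) h1
    rw [CStarRing.norm_star_mul_self, CStarRing.norm_star_mul_self] at h3
    nlinarith [norm_nonneg (B * X), norm_nonneg (A * X)]
  · intro h
    have h' : ∀ Y : Unitization ℂ 𝒜,
        ‖(B : Unitization ℂ 𝒜) * Y‖ ≤ ‖(A : Unitization ℂ 𝒜) * Y‖ := by
      intro Y
      set w := (B : Unitization ℂ 𝒜) * Y with hw
      rcases eq_or_ne w 0 with h0 | h0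
      · rw [h0, norm_zero]; positivity
      have hwfst : w.fst = 0 := by simp [hw]
      set u := Y * star w with hu
      have hufst : u.fst = 0 := by simp [hu, hwfst]
      have hu_inr : u = (u.snd : Unitization ℂ 𝒜) := by
        conv_lhs => rw [← Unitization.inl_fst_add_inr_snd_eq u]
        rw [hufst]; simp
      have key : ‖w‖ * ‖w‖ ≤ ‖(A : Unitization ℂ 𝒜) * Y‖ * ‖w‖ := by
        calc ‖w‖ * ‖w‖ = ‖w * star w‖ := (CStarRing.norm_self_mul_star).symm
          _ = ‖(B : Unitization ℂ 𝒜) * u‖ := by rw [hu, hw, mul_assoc]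
          _ = ‖B * u.snd‖ := by
              rw [hu_inr, ← Unitization.inr_mul ℂ, Unitization.norm_inr, Unitization.snd_inr]
          _ ≤ ‖A * u.snd‖ := h _
          _ = ‖(A : Unitization ℂ 𝒜) * u‖ := by
              rw [hu_inr, ← Unitization.inr_mul ℂ, Unitization.norm_inr, Unitization.snd_inr]
          _ = ‖((A : Unitization ℂ 𝒜) * Y) * star w‖ := by rw [hu, mul_assoc]
          _ ≤ ‖(A : Unitization ℂ 𝒜) * Y‖ * ‖star w‖ := norm_mul_le _ _
          _ = ‖(A : Unitization ℂ 𝒜) * Y‖ * ‖w‖ := by rw [norm_star]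
      exact le_of_mul_le_mul_right key (norm_pos_iff.mpr h0)
    have hle := aux_unital (A := Unitization ℂ 𝒜)
      (A : Unitization ℂ 𝒜) (B : Unitization ℂ 𝒜) h'
    rw [← Unitization.inr_le_iff _ _ (IsSelfAdjoint.star_mul_self B)
      (IsSelfAdjoint.star_mul_self A)]
    simpa [Unitization.inr_mul, Unitization.inr_star] using hle
end

section
/- Let 𝒜 be a C*-algebra and A, B ∈ 𝒜. Then A*B = 0 if and only if ‖AX‖ ≤ ‖AX + BY‖ for all X, Y ∈ 𝒜. -/
section Helpers

variable {U : Type*} [CStarAlgebra U] [PartialOrder U] [StarOrderedRing U]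

private lemma my_smul_nonneg {x : U} (hx : 0 ≤ x) {κ : ℝ} (hκ : 0 ≤ κ) : 0 ≤ κ • x := by
  have hxsa : IsSelfAdjoint x := .of_nonneg hx
  rw [← cfc_smul_id (R := ℝ) κ x]
  refine cfc_nonneg fun t ht => ?_
  have ht0 : (0:ℝ) ≤ t := spectrum_nonneg_of_nonneg hx ht
  simpa [smul_eq_mul] using mul_nonneg hκ ht0

/-- The key localization lemma: if compressing `r + q` by spectral cutoffs of `q`
never increases the norm beyond that of the compression of `r`, then `q = 0`. -/
private lemma lemL (r q : U) (hr : 0 ≤ r) (hq : 0 ≤ q)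
    (H : ∀ c : ℝ, 0 < c →
      ‖cfc (fun x : ℝ => max (x - c) 0) q * (r + q) * cfc (fun x : ℝ => max (x - c) 0) q‖ ≤
      ‖cfc (fun x : ℝ => max (x - c) 0) q * r * cfc (fun x : ℝ => max (x - c) 0) q‖) :
    q = 0 := by
  by_contra hq0
  have hqpos : 0 < ‖q‖ := norm_pos_iff.mpr hq0
  set c : ℝ := ‖q‖ / 2 with hc_def
  have hc : 0 < c := by positivity
  have hqsa : IsSelfAdjoint q := .of_nonneg hq
  have hrsa : IsSelfAdjoint r := .of_nonneg hr
  have hgc : Continuous (fun x : ℝ => max (x - c) 0) := by fun_prop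
  set E : U := cfc (fun x : ℝ => max (x - c) 0) q with hE_def
  have hEsa : IsSelfAdjoint E := cfc_predicate _ q
  have hEE : (0 : U) ≤ E * E := by
    simpa [hEsa.star_eq] using star_mul_self_nonneg E
  have hP : (0 : U) ≤ E * r * E := by
    simpa [hEsa.star_eq] using star_left_conjugate_nonneg hr E
  have hQeq : cfc (fun x : ℝ => (max (x - c) 0) * x * (max (x - c) 0)) q = E * q * E := by
    rw [cfc_mul (fun x : ℝ => (max (x - c) 0) * x) (fun x : ℝ => max (x - c) 0) q
        (by fun_prop) hgc.continuousOn,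
      cfc_mul (fun x : ℝ => max (x - c) 0) (fun x : ℝ => x) q hgc.continuousOn (by fun_prop),
      cfc_id' ℝ q]
  have hcEE : cfc (fun x : ℝ => c * ((max (x - c) 0) * (max (x - c) 0))) q = c • (E * E) := by
    rw [cfc_const_mul c (fun x : ℝ => (max (x - c) 0) * (max (x - c) 0)) q (by fun_prop),
      cfc_mul (fun x : ℝ => max (x - c) 0) (fun x : ℝ => max (x - c) 0) q
        hgc.continuousOn hgc.continuousOn]
  have hA : c • (E * E) ≤ E * q * E := by
    rw [← hcEE, ← hQeq]
    refine cfc_mono (fun x hx => ?_) (by fun_prop) (by fun_prop)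
    have hx0 : (0:ℝ) ≤ x := spectrum_nonneg_of_nonneg hq hx
    rcases le_or_gt x c with hxc | hxc
    · rw [max_eq_right (by linarith : x - c ≤ (0:ℝ))]
      simp
    · rw [max_eq_left (by linarith : (0:ℝ) ≤ x - c)]
      nlinarith [sq_nonneg (x - c)]
  have hB : E * r * E ≤ ‖r‖ • (E * E) := by
    have hcls := CStarAlgebra.star_left_conjugate_le_norm_smul (a := E) (b := r) hrsa
    rwa [hEsa.star_eq] at hcls
  have hB' : E * r * E ≤ (‖r‖ + 1) • (E * E) := by
    refine hB.trans ?_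
    calc ‖r‖ • (E * E) ≤ ‖r‖ • (E * E) + E * E := le_add_of_nonneg_right hEE
      _ = (‖r‖ + 1) • (E * E) := by rw [add_smul, one_smul]
  set κ : ℝ := c / (‖r‖ + 1) with hκ_def
  have hκpos : 0 < κ := by positivity
  have hκP : κ • (E * r * E) ≤ c • (E * E) := by
    have h1 : 0 ≤ κ • ((‖r‖ + 1) • (E * E) - E * r * E) :=
      my_smul_nonneg (sub_nonneg.mpr hB') hκpos.le
    rw [smul_sub] at h1
    have h2 : κ • (E * r * E) ≤ κ • ((‖r‖ + 1) • (E * E)) := sub_nonneg.mp h1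
    rw [smul_smul] at h2
    have h3 : κ * (‖r‖ + 1) = c := by
      rw [hκ_def]
      field_simp
    rwa [h3] at h2
  have hsum : (1 + κ) • (E * r * E) ≤ E * r * E + E * q * E := by
    rw [add_smul, one_smul]
    exact add_le_add_right (hκP.trans hA) _
  have hnorm1 : (1 + κ) * ‖E * r * E‖ ≤ ‖E * r * E + E * q * E‖ := by
    have h4 : ‖(1 + κ) • (E * r * E)‖ ≤ ‖E * r * E + E * q * E‖ :=
      CStarAlgebra.norm_le_norm_of_nonneg_of_le (my_smul_nonneg hP (by positivity)) hsum
    rwa [norm_smul, Real.norm_eq_abs, abs_of_pos (by positivity)] at h4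
  have htop : ‖E * r * E + E * q * E‖ ≤ ‖E * r * E‖ := by
    have h5 := H c hc
    rw [← hE_def] at h5
    have h6 : E * (r + q) * E = E * r * E + E * q * E := by noncomm_ring
    rwa [h6] at h5
  have hPz : ‖E * r * E‖ = 0 := by
    have h7 := hnorm1.trans htop
    nlinarith [norm_nonneg (E * r * E)]
  have hP0 : E * r * E = 0 := norm_eq_zero.mp hPz
  have hQ0 : E * q * E = 0 := by
    have h7 : ‖E * r * E + E * q * E‖ = 0 :=
      le_antisymm (htop.trans_eq hPz) (norm_nonneg _)
    have h8 := norm_eq_zero.mp h7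
    rwa [hP0, zero_add] at h8
  have hEE0 : E * E = 0 := by
    have h9 : c • (E * E) = 0 :=
      le_antisymm (by rw [← hQ0]; exact hA) (my_smul_nonneg hEE hc.le)
    have h10 : E * E = c⁻¹ • (c • (E * E)) := by
      rw [smul_smul, inv_mul_cancel₀ hc.ne', one_smul]
    rw [h10, h9, smul_zero]
  have hE0 : E = 0 := by
    have h10 := CStarRing.star_mul_self_eq_zero_iff E
    rw [hEsa.star_eq] at h10
    exact h10.mp hEE0
  have hid : (fun x : ℝ => min x c + max (x - c) 0) = id := by
    funext x
    simp only [id_eq]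
    rcases le_total x c with hxc | hxc
    · rw [min_eq_left hxc, max_eq_right (by linarith : x - c ≤ (0:ℝ)), add_zero]
    · rw [min_eq_right hxc, max_eq_left (by linarith : (0:ℝ) ≤ x - c)]
      ring
  have hsplit : q = cfc (fun x : ℝ => min x c) q + E := by
    conv_lhs => rw [← cfc_id ℝ q hqsa, ← hid]
    rw [cfc_add q (fun x : ℝ => min x c) (fun x : ℝ => max (x - c) 0) (by fun_prop)
      hgc.continuousOn]
  have hqle : ‖q‖ ≤ c := by
    calc ‖q‖ = ‖cfc (fun x : ℝ => min x c) q + E‖ := by rw [← hsplit]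
      _ = ‖cfc (fun x : ℝ => min x c) q‖ := by rw [hE0, add_zero]
      _ ≤ c := by
          refine norm_cfc_le hc.le fun x hx => ?_
          have hx0 : (0:ℝ) ≤ x := spectrum_nonneg_of_nonneg hq hx
          rw [Real.norm_eq_abs, abs_of_nonneg (le_min hx0 hc.le)]
          exact min_le_right x c
  rw [hc_def] at hqle
  linarith

end Helpers

set_option maxHeartbeats 1000000 in
/-- In a C*-algebra, `A*B = 0` iff `‖AX‖ ≤ ‖AX + BY‖` for all `X, Y`. -/
theorem star_mul_eq_zero_iff_norm_ineq
    {𝒜 : Type*} [NonUnitalNormedRing 𝒜] [StarRing 𝒜] [CStarRing 𝒜]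
    [CompleteSpace 𝒜]
    [NormedSpace ℂ 𝒜] [StarModule ℂ 𝒜] [SMulCommClass ℂ 𝒜 𝒜] [IsScalarTower ℂ 𝒜 𝒜]
    (A B : 𝒜) :
    star A * B = 0 ↔ ∀ X Y : 𝒜, ‖A * X‖ ≤ ‖A * X + B * Y‖ := by
  letI : NonUnitalCStarAlgebra 𝒜 := {}
  letI : PartialOrder (Unitization ℂ 𝒜) := CStarAlgebra.spectralOrder _
  letI : StarOrderedRing (Unitization ℂ 𝒜) := CStarAlgebra.spectralOrderedRing _
  constructor
  · -- forward direction
    intro h X Y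
    have hBA : star B * A = 0 := by
      have h' := congrArg star h
      rwa [star_mul, star_star, star_zero] at h'
    have z1 : star (A * X) * (B * Y) = 0 := by
      rw [star_mul]
      have : star X * star A * (B * Y) = star X * (star A * B * Y) := by noncomm_ring
      rw [this, h, zero_mul, mul_zero]
    have z2 : star (B * Y) * (A * X) = 0 := by
      rw [star_mul]
      have : star Y * star B * (A * X) = star Y * (star B * A * X) := by noncomm_ring
      rw [this, hBA, zero_mul, mul_zero]
    set u : Unitization ℂ 𝒜 := ((A * X : 𝒜) : Unitization ℂ 𝒜) with hu_def
    set w : Unitization ℂ 𝒜 := ((B * Y : 𝒜) : Unitization ℂ 𝒜) with hw_def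
    have cu : star u * w = 0 := by
      have e : star u * w = ((star (A * X) * (B * Y) : 𝒜) : Unitization ℂ 𝒜) := by
        rw [Unitization.inr_mul, Unitization.inr_star]
      rw [e, z1, Unitization.inr_zero]
    have cw : star w * u = 0 := by
      have e : star w * u = ((star (B * Y) * (A * X) : 𝒜) : Unitization ℂ 𝒜) := by
        rw [Unitization.inr_mul, Unitization.inr_star]
      rw [e, z2, Unitization.inr_zero]
    have expand : star (u + w) * (u + w) = star u * u + star w * w := by
      rw [star_add, add_mul, mul_add, mul_add, cu, cw, add_zero, zero_add]
    have le1 : star u * u ≤ star (u + w) * (u + w) := by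
      rw [expand]
      exact le_add_of_nonneg_right (star_mul_self_nonneg w)
    have le2 : ‖star u * u‖ ≤ ‖star (u + w) * (u + w)‖ :=
      CStarAlgebra.norm_le_norm_of_nonneg_of_le (star_mul_self_nonneg u) le1
    have n1 : ‖star u * u‖ = ‖A * X‖ * ‖A * X‖ := by
      rw [CStarRing.norm_star_mul_self, hu_def, Unitization.norm_inr]
    have n2 : ‖star (u + w) * (u + w)‖ = ‖A * X + B * Y‖ * ‖A * X + B * Y‖ := by
      have e : u + w = ((A * X + B * Y : 𝒜) : Unitization ℂ 𝒜) := by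
        rw [Unitization.inr_add]
      rw [CStarRing.norm_star_mul_self, e, Unitization.norm_inr]
    rw [n1, n2] at le2
    nlinarith [norm_nonneg (A * X), norm_nonneg (A * X + B * Y), norm_nonneg (A * X + B * Y - A * X)]
  · -- reverse direction
    intro h
    set t : ℝ := (‖B‖ ^ 2 + 1)⁻¹ with ht_def
    have ht : 0 < t := by positivity
    set c₀ : ℂ := (Real.sqrt t : ℂ) with hc₀_def
    have hc₀ : c₀ ≠ 0 := by
      simp only [hc₀_def, ne_eq, Complex.ofReal_eq_zero]
      positivity
    set B' : 𝒜 := c₀ • B with hB'_def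
    -- work in the unitization
    set aU : Unitization ℂ 𝒜 := (A : Unitization ℂ 𝒜) with haU_def
    set bU : Unitization ℂ 𝒜 := ((B' : 𝒜) : Unitization ℂ 𝒜) with hbU_def
    set b' : Unitization ℂ 𝒜 := bU * star bU with hb'_def
    have hb'0 : 0 ≤ b' := mul_star_self_nonneg bU
    have hb'sa : IsSelfAdjoint b' := .of_nonneg hb'0
    have hb'norm : ‖b'‖ ≤ 1 := by
      have e1 : ‖b'‖ = ‖bU‖ * ‖bU‖ := CStarRing.norm_self_mul_star
      have e2 : ‖bU‖ = Real.sqrt t * ‖B‖ := by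
        rw [hbU_def, Unitization.norm_inr, hB'_def, norm_smul, hc₀_def]
        simp [Real.sqrt_nonneg, abs_of_nonneg]
      rw [e1, e2]
      have e3 : Real.sqrt t * ‖B‖ * (Real.sqrt t * ‖B‖) = t * ‖B‖ ^ 2 := by
        rw [show Real.sqrt t * ‖B‖ * (Real.sqrt t * ‖B‖)
            = (Real.sqrt t * Real.sqrt t) * (‖B‖ * ‖B‖) by ring,
          Real.mul_self_sqrt ht.le, sq]
      rw [e3, ht_def]
      have h4 : ‖B‖ ^ 2 ≤ ‖B‖ ^ 2 + 1 := by linarith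
      calc (‖B‖ ^ 2 + 1)⁻¹ * ‖B‖ ^ 2 ≤ (‖B‖ ^ 2 + 1)⁻¹ * (‖B‖ ^ 2 + 1) := by
            have : (0:ℝ) ≤ (‖B‖ ^ 2 + 1)⁻¹ := by positivity
            exact mul_le_mul_of_nonneg_left h4 this
        _ = 1 := inv_mul_cancel₀ (by positivity)
    have hspec : ∀ x ∈ spectrum ℝ b', (0:ℝ) ≤ x ∧ x ≤ 1 := by
      intro x hx
      refine ⟨spectrum_nonneg_of_nonneg hb'0 hx, ?_⟩
      have h5 := spectrum.norm_le_norm_of_mem hx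
      rw [Real.norm_eq_abs] at h5
      calc x ≤ |x| := le_abs_self x
        _ ≤ ‖b'‖ := h5
        _ ≤ 1 := hb'norm
    have key1 : 0 ≤ b' - b' * b' := by
      have e : cfc (fun x : ℝ => x - x * x) b' = b' - b' * b' := by
        rw [cfc_sub (fun x : ℝ => x) (fun x : ℝ => x * x) b' (by fun_prop) (by fun_prop),
          cfc_mul (fun x : ℝ => x) (fun x : ℝ => x) b' (by fun_prop) (by fun_prop),
          cfc_id' ℝ b']
      rw [← e]
      refine cfc_nonneg fun x hx => ?_
      obtain ⟨h1, h2⟩ := hspec x hx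
      nlinarith
    have hub : 0 ≤ 1 - b' := by
      have e : cfc (fun x : ℝ => 1 - x) b' = 1 - b' := by
        rw [cfc_sub (fun _ : ℝ => (1:ℝ)) (fun x : ℝ => x) b' (by fun_prop) (by fun_prop),
          cfc_const (1:ℝ) b', cfc_id' ℝ b', map_one]
      rw [← e]
      refine cfc_nonneg fun x hx => ?_
      obtain ⟨h1, h2⟩ := hspec x hx
      linarith
    set s : Unitization ℂ 𝒜 := star aU * aU with hs_def
    set q : Unitization ℂ 𝒜 := star aU * b' * aU with hq_def
    have hq0 : 0 ≤ q := star_left_conjugate_nonneg hb'0 aU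
    have hs0 : 0 ≤ s := star_mul_self_nonneg aU
    have hqs : q ≤ s := by
      have h1 : 0 ≤ star aU * (1 - b') * aU := star_left_conjugate_nonneg hub aU
      have h2 : star aU * (1 - b') * aU = s - q := by
        rw [hs_def, hq_def]; noncomm_ring
      rw [h2] at h1
      exact sub_nonneg.mp h1
    set r : Unitization ℂ 𝒜 := s - q with hr_def
    have hr0 : 0 ≤ r := sub_nonneg.mpr hqs
    have hrq : r + q = s := by rw [hr_def]; abel
    -- the key inequality, obtained from the hypothesis
    have HL : ∀ z : 𝒜, ‖star ((z : Unitization ℂ 𝒜)) * s * (z : Unitization ℂ 𝒜)‖ ≤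
        ‖star ((z : Unitization ℂ 𝒜)) * r * (z : Unitization ℂ 𝒜)‖ := by
      intro z
      set Y : 𝒜 := -(c₀ • (star B' * (A * z))) with hY_def
      have h0 : ‖A * z‖ ≤ ‖A * z + B * Y‖ := h z Y
      have hBY : B * Y = -(B' * (star B' * (A * z))) := by
        rw [hY_def, mul_neg, mul_smul_comm, ← smul_mul_assoc, ← hB'_def]
      set v : Unitization ℂ 𝒜 := aU * (z : Unitization ℂ 𝒜) with hv_def
      have e1 : ((A * z : 𝒜) : Unitization ℂ 𝒜) = v := by
        rw [hv_def, haU_def, Unitization.inr_mul]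
      have e2 : ((A * z + B * Y : 𝒜) : Unitization ℂ 𝒜) = v - b' * v := by
        rw [Unitization.inr_add, hBY, Unitization.inr_neg, Unitization.inr_mul,
          Unitization.inr_mul, Unitization.inr_mul, Unitization.inr_star, e1,
          ← hbU_def, hb'_def]
        have : bU * (star bU * v) = bU * star bU * v := by noncomm_ring
        rw [this]
        abel
      have h𝒰 : ‖v‖ ≤ ‖v - b' * v‖ := by
        calc ‖v‖ = ‖A * z‖ := by rw [← e1, Unitization.norm_inr]
          _ ≤ ‖A * z + B * Y‖ := h0
          _ = ‖v - b' * v‖ := by rw [← e2, Unitization.norm_inr]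
      have n1 : star ((z : Unitization ℂ 𝒜)) * s * (z : Unitization ℂ 𝒜) = star v * v := by
        rw [hv_def, hs_def, star_mul]; noncomm_ring
      have n2 : star ((z : Unitization ℂ 𝒜)) * r * (z : Unitization ℂ 𝒜)
          = star v * v - star v * (b' * v) := by
        rw [hr_def, hs_def, hq_def, hv_def, star_mul]; noncomm_ring
      rw [n1, n2]
      have sub1 : star (v - b' * v) * (v - b' * v) ≤ star v * v - star v * (b' * v) := by
        have hdiffall : ∀ vv : Unitization ℂ 𝒜, star vv * vv - star vv * (b' * vv)
            - star (vv - b' * vv) * (vv - b' * vv) = star vv * (b' - b' * b') * vv := by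
          intro vv
          simp only [star_sub, star_mul, hb'sa.star_eq]
          noncomm_ring
        have hdiff := hdiffall v
        have hpos : 0 ≤ star v * (b' - b' * b') * v := star_left_conjugate_nonneg key1 v
        rw [← hdiff] at hpos
        exact sub_nonneg.mp hpos
      calc ‖star v * v‖ = ‖v‖ * ‖v‖ := CStarRing.norm_star_mul_self
        _ ≤ ‖v - b' * v‖ * ‖v - b' * v‖ :=
            mul_self_le_mul_self (norm_nonneg v) h𝒰
        _ = ‖star (v - b' * v) * (v - b' * v)‖ := CStarRing.norm_star_mul_self.symm
        _ ≤ ‖star v * v - star v * (b' * v)‖ :=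
            CStarAlgebra.norm_le_norm_of_nonneg_of_le (star_mul_self_nonneg _) sub1
    -- transfer to the element level and apply the localization lemma
    set q₀ : 𝒜 := star A * (B' * (star B' * A)) with hq₀_def
    have hq_coe : ((q₀ : 𝒜) : Unitization ℂ 𝒜) = q := by
      rw [hq₀_def, Unitization.inr_mul, Unitization.inr_mul, Unitization.inr_mul,
        Unitization.inr_star, Unitization.inr_star, ← haU_def, ← hbU_def, hq_def, hb'_def]
      noncomm_ring
    have hq₀sa : IsSelfAdjoint q₀ := by
      have := (Unitization.isSelfAdjoint_inr (R := ℂ) (a := q₀))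
      rw [hq_coe] at this
      exact this.mp (IsSelfAdjoint.of_nonneg hq0)
    have Hcfc : ∀ c : ℝ, 0 < c →
        ‖cfc (fun x : ℝ => max (x - c) 0) q * (r + q) * cfc (fun x : ℝ => max (x - c) 0) q‖ ≤
        ‖cfc (fun x : ℝ => max (x - c) 0) q * r * cfc (fun x : ℝ => max (x - c) 0) q‖ := by
      intro c hcpos
      have hg0 : max ((0:ℝ) - c) 0 = 0 := by
        rw [max_eq_right (by linarith)]
      set e₀ : 𝒜 := cfcₙ (fun x : ℝ => max (x - c) 0) q₀ with he₀_def
      have hEcoe : ((e₀ : 𝒜) : Unitization ℂ 𝒜) = cfc (fun x : ℝ => max (x - c) 0) q := by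
        rw [he₀_def, Unitization.real_cfcₙ_eq_cfc_inr q₀ (fun x : ℝ => max (x - c) 0) hg0, hq_coe]
      have hEsa' : IsSelfAdjoint (cfc (fun x : ℝ => max (x - c) 0) q) := cfc_predicate _ q
      have h6 := HL e₀
      rw [hEcoe, hEsa'.star_eq] at h6
      rw [← hrq] at h6
      exact h6
    have hqzero : q = 0 := lemL r q hr0 hq0 Hcfc
    have hq₀zero : q₀ = 0 := by
      apply Unitization.inr_injective (R := ℂ)
      rw [hq_coe, hqzero, Unitization.inr_zero]
    -- unfold the scalars
    have hm : star A * (B * (star B * A)) = 0 := by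
      have e : q₀ = (c₀ * star c₀) • (star A * (B * (star B * A))) := by
        rw [hq₀_def, hB'_def]
        simp only [star_smul, smul_mul_assoc, mul_smul_comm, smul_smul]
        rw [mul_comm (star c₀) c₀]
      have hne : c₀ * star c₀ ≠ 0 := mul_ne_zero hc₀ (star_ne_zero.mpr hc₀)
      have : (c₀ * star c₀) • (star A * (B * (star B * A))) = 0 := by rw [← e, hq₀zero]
      calc star A * (B * (star B * A))
          = (c₀ * star c₀)⁻¹ • ((c₀ * star c₀) • (star A * (B * (star B * A)))) := by
            rw [smul_smul, inv_mul_cancel₀ hne, one_smul]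
        _ = 0 := by rw [this, smul_zero]
    have hfin : (star A * B) * star (star A * B) = 0 := by
      rw [star_mul, star_star]
      calc star A * B * (star B * A) = star A * (B * (star B * A)) := by noncomm_ring
        _ = 0 := hm
    have := CStarRing.star_mul_self_eq_zero_iff (star (star A * B))
    rw [star_star] at this
    exact star_eq_zero.mp (this.mp hfin)
end

section
/- Let 𝒜 be a C*-algebra, let P₀, …, P_m ∈ 𝒜 be positive elements, and let A₀, …, A_m ∈ 𝒜. Then the identity ‖Σ_{j=0}^m AⱼXⱼ‖² = ‖Σ_{j=0}^m Xⱼ*PⱼXⱼ‖ holds for all X₀, …, X_m ∈ 𝒜 if and only if Aⱼ*Aⱼ = Pⱼ for all j and Aₖ*Aⱼ = 0 whenever k ≠ j. -/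
set_option synthInstance.maxHeartbeats 1000000
set_option maxHeartbeats 1000000
set_option linter.unusedSectionVars false

open scoped CStarAlgebra

section Aux

variable {𝒜 : Type*} [NonUnitalNormedRing 𝒜] [StarRing 𝒜] [CStarRing 𝒜]
    [PartialOrder 𝒜] [StarOrderedRing 𝒜] [CompleteSpace 𝒜]
    [NormedSpace ℂ 𝒜] [StarModule ℂ 𝒜] [SMulCommClass ℂ 𝒜 𝒜] [IsScalarTower ℂ 𝒜 𝒜]

/-- If `D` is self-adjoint and all conjugates `x* D x` vanish, then `D = 0`. -/
lemma aux_eq_zero_of_forall_conj_eq_zero {D : 𝒜} (hD : IsSelfAdjoint D)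
    (h : ∀ x : 𝒜, star x * D * x = 0) : D = 0 := by
  have h3 : D * D * D = 0 := by simpa [hD.star_eq] using h D
  have h4 : (D * D) * (D * D) = 0 := by
    calc (D * D) * (D * D) = (D * D * D) * D := by noncomm_ring
    _ = 0 := by rw [h3, zero_mul]
  have h5 : D * D = 0 := by
    have : ‖D * D‖ * ‖D * D‖ = 0 := by
      rw [← CStarRing.norm_star_mul_self (x := D * D)]
      rw [star_mul, hD.star_eq, h4, norm_zero]
    rcases mul_self_eq_zero.mp this with h
    exact norm_eq_zero.mp h
  have : ‖D‖ * ‖D‖ = 0 := by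
    rw [← CStarRing.norm_star_mul_self (x := D), hD.star_eq, h5, norm_zero]
  exact norm_eq_zero.mp (mul_self_eq_zero.mp this)

/-- If `0 ≤ B`, `0 ≤ C` and `‖x* B x‖ ≤ ‖x* C x‖` for all `x`, then `B ≤ C`. -/
lemma aux_le_of_forall_norm_conj_le {B C : 𝒜} (hB : 0 ≤ B) (hC : 0 ≤ C)
    (h : ∀ x : 𝒜, ‖star x * B * x‖ ≤ ‖star x * C * x‖) : B ≤ C := by
  letI : NonUnitalCStarAlgebra 𝒜 :=
    { ‹NonUnitalNormedRing 𝒜›, ‹StarRing 𝒜›, ‹CStarRing 𝒜›, ‹CompleteSpace 𝒜›,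
      ‹NormedSpace ℂ 𝒜›, ‹IsScalarTower ℂ 𝒜 𝒜›, ‹SMulCommClass ℂ 𝒜 𝒜›, ‹StarModule ℂ 𝒜› with }
  have hBsa : IsSelfAdjoint B := .of_nonneg hB
  have hCsa : IsSelfAdjoint C := .of_nonneg hC
  have hBi : (0:𝒜⁺¹) ≤ (B : 𝒜⁺¹) := Unitization.inr_nonneg_iff.2 hB
  have hCi : (0:𝒜⁺¹) ≤ (C : 𝒜⁺¹) := Unitization.inr_nonneg_iff.2 hC
  rw [← Unitization.inr_le_iff B C hBsa hCsa]
  have key : ∀ ε : ℝ, 0 < ε → (B : 𝒜⁺¹) ≤ (C : 𝒜⁺¹) + ε • 1 := by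
    intro ε hε
    set b : 𝒜⁺¹ := (C : 𝒜⁺¹) + ε • 1 with hb_def
    have hsm1 : (0:𝒜⁺¹) ≤ ε • 1 := by
      have h0 := star_mul_self_nonneg ((Real.sqrt ε) • (1:𝒜⁺¹))
      rwa [star_smul, star_one, star_trivial, smul_mul_smul_comm, one_mul,
        Real.mul_self_sqrt hε.le] at h0
    have hb0 : (0:𝒜⁺¹) ≤ b := add_nonneg hCi hsm1
    have hCb : (C : 𝒜⁺¹) ≤ b := le_add_of_nonneg_right hsm1
    have hbu : IsUnit b := by
      refine CStarAlgebra.isUnit_of_le (ε • (1:𝒜⁺¹)) (h := IsStrictlyPositive.iff_of_unital.mpr ⟨hsm1, ?_⟩) ?_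
      swap
      · rw [← Algebra.algebraMap_eq_smul_one]
        exact (isUnit_iff_ne_zero.mpr hε.ne').map (algebraMap ℝ 𝒜⁺¹)
      · rw [hb_def]
        exact le_add_of_nonneg_left hCi
    rw [le_iff_norm_sqrt_mul_rpow (B : 𝒜⁺¹) b hBi (IsStrictlyPositive.iff_of_unital.mpr ⟨hb0, hbu⟩)]
    set r : 𝒜⁺¹ := b ^ (-(1/2) : ℝ) with hr_def
    have hr0 : (0:𝒜⁺¹) ≤ r := CFC.rpow_nonneg
    have hrsa : IsSelfAdjoint r := .of_nonneg hr0
    have hrbr : r * b * r = 1 := CFC.conjugate_rpow_neg_one_half b (IsStrictlyPositive.iff_of_unital.mpr ⟨hb0, hbu⟩)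
    set s : 𝒜⁺¹ := CFC.sqrt (B : 𝒜⁺¹) with hs_def
    have hs0 : (0:𝒜⁺¹) ≤ s := CFC.sqrt_nonneg _
    have hss : s * s = (B : 𝒜⁺¹) := CFC.sqrt_mul_sqrt_self _ hBi
    rw [← sq_le_one_iff₀ (norm_nonneg _), sq, ← CStarRing.norm_star_mul_self, star_mul,
      hrsa.star_eq, (IsSelfAdjoint.of_nonneg hs0).star_eq]
    have hy_eq : r * s * (s * r) = r * (B : 𝒜⁺¹) * r := by rw [← hss]; noncomm_ring
    rw [hy_eq]
    set y : 𝒜⁺¹ := r * (B : 𝒜⁺¹) * r with hy_def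
    have hy0 : (0:𝒜⁺¹) ≤ y := by
      have := star_left_conjugate_nonneg hBi r
      rwa [hrsa.star_eq] at this
    set w : 𝒜 := y.snd with hw_def
    have hyw : (w : 𝒜⁺¹) = y := by
      have hfst : y.fst = 0 := by
        simp [hy_def, Unitization.fst_mul, Unitization.fst_inr]
      conv_rhs => rw [← Unitization.inl_fst_add_inr_snd_eq y]
      rw [hfst, Unitization.inl_zero, zero_add]
    have hw0 : (0:𝒜) ≤ w := by
      rw [← Unitization.inr_nonneg_iff (a := w), hyw]; exact hy0
    set q : 𝒜⁺¹ := r * (C : 𝒜⁺¹) * r with hq_def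
    have hq0 : (0:𝒜⁺¹) ≤ q := by
      have := star_left_conjugate_nonneg hCi r
      rwa [hrsa.star_eq] at this
    have hq1 : q ≤ 1 := by
      calc q ≤ r * b * r := by
              have := star_left_conjugate_le_conjugate hCb r
              rwa [hrsa.star_eq] at this
        _ = 1 := hrbr
    have hqn : ‖q‖ ≤ 1 := (CStarAlgebra.norm_le_one_iff_of_nonneg q hq0).2 hq1
    -- the key estimate coming from the hypothesis
    have key2 : ∀ z : 𝒜, ‖star z * w * z‖ ≤ ‖z‖ * ‖z‖ := by
      intro z
      set x : 𝒜 := (r * (z : 𝒜⁺¹)).snd with hx_def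
      have hxe : (x : 𝒜⁺¹) = r * (z : 𝒜⁺¹) := by
        have hfst : (r * (z : 𝒜⁺¹)).fst = 0 := by
          simp [Unitization.fst_mul, Unitization.fst_inr]
        conv_rhs => rw [← Unitization.inl_fst_add_inr_snd_eq (r * (z : 𝒜⁺¹))]
        rw [hfst, Unitization.inl_zero, zero_add]
      have he1 : ((star x * B * x : 𝒜) : 𝒜⁺¹) = star (z : 𝒜⁺¹) * y * (z : 𝒜⁺¹) := by
        rw [Unitization.inr_mul, Unitization.inr_mul, Unitization.inr_star, hxe, star_mul,
          hrsa.star_eq, hy_def]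
        noncomm_ring
      have he2 : ((star x * C * x : 𝒜) : 𝒜⁺¹) = star (z : 𝒜⁺¹) * q * (z : 𝒜⁺¹) := by
        rw [Unitization.inr_mul, Unitization.inr_mul, Unitization.inr_star, hxe, star_mul,
          hrsa.star_eq, hq_def]
        noncomm_ring
      have hzw : star z * w * z = star x * B * x := by
        apply Unitization.inr_injective (R := ℂ)
        rw [he1, Unitization.inr_mul, Unitization.inr_mul, Unitization.inr_star, hyw]
      calc ‖star z * w * z‖ = ‖star x * B * x‖ := by rw [hzw]
        _ ≤ ‖star x * C * x‖ := h x
        _ = ‖star (z : 𝒜⁺¹) * q * (z : 𝒜⁺¹)‖ := by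
            rw [← Unitization.norm_inr (𝕜 := ℂ) (star x * C * x), he2]
        _ ≤ ‖star (z : 𝒜⁺¹) * q‖ * ‖(z : 𝒜⁺¹)‖ := norm_mul_le _ _
        _ ≤ ‖star (z : 𝒜⁺¹)‖ * ‖q‖ * ‖(z : 𝒜⁺¹)‖ := by
            gcongr
            exact norm_mul_le _ _
        _ ≤ ‖star (z : 𝒜⁺¹)‖ * 1 * ‖(z : 𝒜⁺¹)‖ := by gcongr
        _ = ‖z‖ * ‖z‖ := by rw [norm_star, Unitization.norm_inr, mul_one]
    -- apply it with `z = sqrt w` to get `‖w‖ ≤ 1`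
    have hwn : ‖w‖ ≤ 1 := by
      set u : 𝒜 := CFC.sqrt w with hu_def
      have hu0 : (0:𝒜) ≤ u := CFC.sqrt_nonneg _
      have husa : star u = u := (IsSelfAdjoint.of_nonneg hu0).star_eq
      have huw : u * u = w := CFC.sqrt_mul_sqrt_self _ hw0
      have h5 := key2 u
      have e1 : star u * w * u = w * w := by rw [husa, ← huw]; noncomm_ring
      have e2 : ‖w * w‖ = ‖w‖ * ‖w‖ := by
        rw [← CStarRing.norm_star_mul_self (x := w), (IsSelfAdjoint.of_nonneg hw0).star_eq]
      have e3 : ‖u‖ * ‖u‖ = ‖w‖ := by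
        rw [← CStarRing.norm_star_mul_self (x := u), husa, huw]
      rw [e1, e2, e3] at h5
      nlinarith [norm_nonneg w]
    show ‖y‖ ≤ 1
    rwa [← hyw, Unitization.norm_inr]
  -- let `ε → 0`
  have htend : Filter.Tendsto (fun ε : ℝ => (C : 𝒜⁺¹) + ε • 1) (nhdsWithin 0 (Set.Ioi 0))
      (nhds ((C : 𝒜⁺¹))) := by
    have hcont : Continuous fun ε : ℝ => (C : 𝒜⁺¹) + ε • 1 := by fun_prop
    have h1 : Filter.Tendsto (fun ε : ℝ => (C : 𝒜⁺¹) + ε • 1) (nhdsWithin 0 (Set.Ioi 0))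
        (nhds ((C : 𝒜⁺¹) + (0:ℝ) • 1)) :=
      (hcont.tendsto 0).mono_left nhdsWithin_le_nhds
    simpa using h1
  exact ge_of_tendsto htend (by
    filter_upwards [self_mem_nhdsWithin] with ε hε
    exact key ε hε)


lemma aux_eq_of_forall_norm_conj_eq {B C : 𝒜} (hB : 0 ≤ B) (hC : 0 ≤ C)
    (h : ∀ x : 𝒜, ‖star x * B * x‖ = ‖star x * C * x‖) : B = C :=
  le_antisymm (aux_le_of_forall_norm_conj_le hB hC fun x => (h x).le)
    (aux_le_of_forall_norm_conj_le hC hB fun x => (h x).ge)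

lemma aux_mul_eq_zero_of_forall_conj {F : 𝒜} (h : ∀ x y : 𝒜, star x * F * y = 0) : F = 0 := by
  have hG : ∀ y : 𝒜, (star F * F) * y = 0 := by
    intro y
    exact h F y
  have hGsa : IsSelfAdjoint (star F * F) := IsSelfAdjoint.star_mul_self F
  have hGG : (star F * F) * (star F * F) = 0 := hG _
  have hG0 : star F * F = 0 := by
    have : ‖star F * F‖ * ‖star F * F‖ = 0 := by
      rw [← CStarRing.norm_star_mul_self (x := star F * F), hGsa.star_eq, hGG, norm_zero]
    exact norm_eq_zero.mp (mul_self_eq_zero.mp this)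
  have : ‖F‖ * ‖F‖ = 0 := by rw [← CStarRing.norm_star_mul_self (x := F), hG0, norm_zero]
  exact norm_eq_zero.mp (mul_self_eq_zero.mp this)

end Aux

/-- For positive elements `P₀, …, P_m` of a C*-algebra `𝒜`, elements `A₀, …, A_m ∈ 𝒜`
satisfy `‖Σⱼ AⱼXⱼ‖² = ‖Σⱼ Xⱼ*PⱼXⱼ‖` for all `X₀, …, X_m ∈ 𝒜` iff `Aⱼ*Aⱼ = Pⱼ` for
all `j` and `Aₖ*Aⱼ = 0` for `k ≠ j`. -/
theorem norm_identity_iff_partial_isometries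
    {𝒜 : Type*} [NonUnitalNormedRing 𝒜] [StarRing 𝒜] [CStarRing 𝒜]
    [PartialOrder 𝒜] [StarOrderedRing 𝒜] [CompleteSpace 𝒜]
    [NormedSpace ℂ 𝒜] [StarModule ℂ 𝒜] [SMulCommClass ℂ 𝒜 𝒜] [IsScalarTower ℂ 𝒜 𝒜]
    (m : ℕ) (P : Fin (m + 1) → 𝒜) (hP : ∀ j, 0 ≤ P j) (A : Fin (m + 1) → 𝒜) :
    (∀ X : Fin (m + 1) → 𝒜,
        ‖∑ j, A j * X j‖ ^ 2 = ‖∑ j, star (X j) * P j * X j‖) ↔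
      ((∀ j, star (A j) * A j = P j) ∧ ∀ j k, j ≠ k → star (A k) * A j = 0) := by
  constructor
  · intro h
    -- Step 1: upgrade the norm identity to an algebraic identity
    have hkey : ∀ X : Fin (m+1) → 𝒜, star (∑ j, A j * X j) * (∑ j, A j * X j)
        = ∑ j, star (X j) * P j * X j := by
      intro X
      refine aux_eq_of_forall_norm_conj_eq (star_mul_self_nonneg _)
        (Finset.sum_nonneg fun j _ => star_left_conjugate_nonneg (hP j) (X j)) fun z => ?_
      have hz := h (fun j => X j * z)
      have e1 : ∑ j, A j * (X j * z) = (∑ j, A j * X j) * z := by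
        rw [Finset.sum_mul]
        exact Finset.sum_congr rfl fun j _ => (mul_assoc _ _ _).symm
      have e2 : ∑ j, star (X j * z) * P j * (X j * z)
          = star z * (∑ j, star (X j) * P j * X j) * z := by
        rw [Finset.mul_sum, Finset.sum_mul]
        refine Finset.sum_congr rfl fun j _ => ?_
        rw [star_mul]
        noncomm_ring
      rw [e1, e2] at hz
      calc ‖star z * (star (∑ j, A j * X j) * (∑ j, A j * X j)) * z‖
          = ‖star ((∑ j, A j * X j) * z) * ((∑ j, A j * X j) * z)‖ := by
            congr 1
            rw [star_mul]
            noncomm_ring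
        _ = ‖(∑ j, A j * X j) * z‖ ^ 2 := by rw [CStarRing.norm_star_mul_self, sq]
        _ = ‖star z * (∑ j, star (X j) * P j * X j) * z‖ := hz
    -- Step 2: diagonal conditions
    have hsingle : ∀ (j : Fin (m+1)) (x : 𝒜),
        ∑ i, A i * (if i = j then x else 0) = A j * x := by
      intro j x
      simp [mul_ite]
    have hsingle2 : ∀ (j : Fin (m+1)) (x : 𝒜),
        ∑ i, star (if i = j then x else 0) * P i * (if i = j then x else 0)
          = star x * P j * x := by
      intro j x
      have hterm : ∀ i : Fin (m+1), star (if i = j then x else 0) * P i * (if i = j then x else 0)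
          = if i = j then star x * P j * x else 0 := by
        intro i
        rcases eq_or_ne i j with rfl | hij
        · simp
        · simp [hij]
      rw [Finset.sum_congr rfl fun i _ => hterm i]
      simp
    have hdiag : ∀ j, star (A j) * A j = P j := by
      intro j
      have hDsa : IsSelfAdjoint (star (A j) * A j - P j) :=
        (IsSelfAdjoint.star_mul_self (A j)).sub (IsSelfAdjoint.of_nonneg (hP j))
      have hzero : ∀ x : 𝒜, star x * (star (A j) * A j - P j) * x = 0 := by
        intro x
        have hk := hkey (fun i => if i = j then x else 0)
        rw [hsingle j x, hsingle2 j x, star_mul] at hk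
        have e : star x * (star (A j) * A j) * x = star x * P j * x := by
          rw [← hk]; noncomm_ring
        rw [mul_sub, sub_mul, e, sub_self]
      have := aux_eq_zero_of_forall_conj_eq_zero hDsa hzero
      exact sub_eq_zero.mp this
    refine ⟨hdiag, fun j k hjk => ?_⟩
    -- Step 3: cross conditions
    have hcross : ∀ x y : 𝒜,
        star x * (star (A j) * A k) * y + star y * (star (A k) * A j) * x = 0 := by
      intro x y
      set X : Fin (m+1) → 𝒜 :=
        fun i => (if i = j then x else 0) + (if i = k then y else 0) with hX
      have hk := hkey X
      have e1 : ∑ i, A i * X i = A j * x + A k * y := by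
        simp only [hX, mul_add, Finset.sum_add_distrib, hsingle]
      have e2 : ∑ i, star (X i) * P i * X i = star x * P j * x + star y * P k * y := by
        have hterm : ∀ i, star (X i) * P i * X i
            = (if i = j then star x * P j * x else 0)
              + (if i = k then star y * P k * y else 0) := by
          intro i
          rcases eq_or_ne i j with rfl | hij
          · have : ¬ (i = k) := hjk
            simp [hX, this]
          · rcases eq_or_ne i k with rfl | hik
            · simp [hX, hij]
            · simp [hX, hij, hik]
        rw [Finset.sum_congr rfl fun i _ => hterm i, Finset.sum_add_distrib]
        simp
      rw [e1, e2] at hk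
      have expand : star (A j * x + A k * y) * (A j * x + A k * y)
          = star x * P j * x + star y * P k * y
            + (star x * (star (A j) * A k) * y + star y * (star (A k) * A j) * x) := by
        rw [← hdiag j, ← hdiag k]
        simp only [star_add, star_mul]
        noncomm_ring
      rw [expand] at hk
      rwa [add_eq_left] at hk
    have hsingle0 : ∀ x y : 𝒜, star x * (star (A j) * A k) * y = 0 := by
      intro x y
      set a := star x * (star (A j) * A k) * y with ha
      set b := star y * (star (A k) * A j) * x with hb
      have h1 : a + b = 0 := hcross x y
      have h2 := hcross x ((Complex.I : ℂ) • y)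
      rw [mul_smul_comm, star_smul, smul_mul_assoc, smul_mul_assoc, Complex.star_def,
        Complex.conj_I, neg_smul] at h2
      -- h2 : I • a + -(I • b) = 0
      have h3 : a - b = 0 := by
        have h4 : (Complex.I : ℂ) • (a - b) = 0 := by
          rw [smul_sub, sub_eq_add_neg]
          exact h2
        have h5 := congrArg (fun t => (-Complex.I : ℂ) • t) h4
        simpa [smul_smul, Complex.I_mul_I] using h5
      have : a + a = 0 := by
        have := sub_eq_zero.mp h3
        rw [← this] at h1
        exact h1
      have h6 : (2 : ℂ) • a = 0 := by rw [two_smul]; exact this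
      have h7 := congrArg (fun t => ((2:ℂ)⁻¹ : ℂ) • t) h6
      simpa [smul_smul] using h7
    have hF : star (A j) * A k = 0 := aux_mul_eq_zero_of_forall_conj hsingle0
    have := congrArg star hF
    rwa [star_mul, star_star, star_zero] at this
  · rintro ⟨h1, h2⟩ X
    have hS : star (∑ j, A j * X j) * (∑ j, A j * X j) = ∑ j, star (X j) * P j * X j := by
      rw [star_sum]
      simp only [star_mul]
      rw [Finset.sum_mul_sum]
      refine Finset.sum_congr rfl fun k _ => ?_
      rw [Finset.sum_eq_single k]
      · rw [← h1 k]; noncomm_ring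
      · intro j _ hjk
        have h0 := h2 j k hjk
        calc star (X k) * star (A k) * (A j * X j)
            = star (X k) * ((star (A k) * A j) * X j) := by noncomm_ring
          _ = 0 := by rw [h0, zero_mul, mul_zero]
      · intro hk
        exact absurd (Finset.mem_univ k) hk
    calc ‖∑ j, A j * X j‖ ^ 2 = ‖star (∑ j, A j * X j) * (∑ j, A j * X j)‖ := by
          rw [CStarRing.norm_star_mul_self, sq]
      _ = ‖∑ j, star (X j) * P j * X j‖ := by rw [hS]
end

section
/- Let 𝒜 be a unital C*-algebra and let A, B ∈ 𝒜 be nonzero elements with A*B = 0. Then ‖A + λB‖² = ‖A‖² + |λ|²‖B‖² holds for all λ ∈ ℂ if and only if there exists a state ω on 𝒜 such that ω(A*A) = ‖A‖² and ω(B*B) = ‖B‖². -/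
open scoped ComplexOrder

section Aux

variable {𝒜 : Type*} [CStarAlgebra 𝒜]

/-- A norm-one unital functional sends selfadjoint elements to reals. -/
lemma aux_im_eq_zero [Nontrivial 𝒜] (g : 𝒜 →L[ℂ] ℂ) (hg : ‖g‖ ≤ 1) (hg1 : g 1 = 1)
    {a : 𝒜} (ha : IsSelfAdjoint a) : (g a).im = 0 := by
  have key : ∀ n : ℝ, 2 * n * (g a).im ≤ ‖a‖ ^ 2 := by
    intro n
    set c : ℂ := (n : ℂ) * Complex.I with hc
    set x : 𝒜 := a + c • 1 with hx
    have hstarx : star x = a - c • 1 := by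
      rw [hx, star_add, ha.star_eq, star_smul, star_one]
      rw [sub_eq_add_neg, ← neg_smul]
      congr 1
      congr 1
      simp [hc, Complex.ext_iff]
    have hcc : c * c = -((n : ℂ) ^ 2) := by
      have : c * c = (n : ℂ) ^ 2 * Complex.I ^ 2 := by rw [hc]; ring
      rw [this, Complex.I_sq, mul_neg_one]
    have hmul : star x * x = a * a + ((n : ℝ) ^ 2 : ℂ) • 1 := by
      have h1 : a * (c • (1 : 𝒜)) = c • a := by rw [mul_smul_comm, mul_one]
      have h2 : (c • (1 : 𝒜)) * a = c • a := by rw [smul_mul_assoc, one_mul]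
      have h3 : (c • (1 : 𝒜)) * (c • (1 : 𝒜)) = (c * c) • (1 : 𝒜) := by
        rw [smul_mul_assoc, mul_smul_comm, smul_smul, one_mul]
      rw [hstarx, hx, sub_mul, mul_add, mul_add, h1, h2, h3, hcc]
      push_cast
      rw [neg_smul]
      abel
    have hxnorm : ‖x‖ ^ 2 ≤ ‖a‖ ^ 2 + n ^ 2 := by
      have hsq : ‖x‖ ^ 2 = ‖star x * x‖ := by
        rw [CStarRing.norm_star_mul_self, sq]
      rw [hsq, hmul]
      calc ‖a * a + ((n : ℝ) ^ 2 : ℂ) • 1‖ ≤ ‖a * a‖ + ‖((n : ℝ) ^ 2 : ℂ) • (1 : 𝒜)‖ :=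
            norm_add_le _ _
        _ = ‖a‖ ^ 2 + n ^ 2 := by
            have hnaa : ‖a * a‖ = ‖a‖ ^ 2 := by
              conv_lhs => rw [show a * a = star a * a from by rw [ha.star_eq]]
              rw [CStarRing.norm_star_mul_self, sq]
            rw [hnaa, norm_smul, norm_one, mul_one, norm_pow, Complex.norm_real, Real.norm_eq_abs, sq_abs]
    have hgx : g x = g a + c := by
      rw [hx, map_add, map_smul, hg1, smul_eq_mul, mul_one]
    have habs : ‖g a + c‖ ≤ ‖x‖ := by
      rw [← hgx]
      calc ‖g x‖ = ‖g x‖ := rfl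
        _ ≤ ‖g‖ * ‖x‖ := g.le_opNorm x
        _ ≤ 1 * ‖x‖ := by gcongr
        _ = ‖x‖ := one_mul _
    have habs2 : ‖g a + c‖ ^ 2 ≤ ‖a‖ ^ 2 + n ^ 2 := by
      calc ‖g a + c‖ ^ 2 ≤ ‖x‖ ^ 2 := by
            gcongr
        _ ≤ ‖a‖ ^ 2 + n ^ 2 := hxnorm
    have hexp : ‖g a + c‖ ^ 2
        = (g a).re ^ 2 + (g a).im ^ 2 + 2 * n * (g a).im + n ^ 2 := by
      rw [Complex.sq_norm, Complex.normSq_apply]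
      simp [hc]
      try ring
    nlinarith [sq_nonneg ((g a).re), sq_nonneg ((g a).im)]
  by_contra hq
  have hn := key ((‖a‖ ^ 2 + 1) / (2 * (g a).im))
  have h2 : 2 * ((‖a‖ ^ 2 + 1) / (2 * (g a).im)) * (g a).im = ‖a‖ ^ 2 + 1 := by
    field_simp
  rw [h2] at hn
  linarith

/-- A norm-one unital functional is positive. -/
lemma aux_pos [Nontrivial 𝒜] (g : 𝒜 →L[ℂ] ℂ) (hg : ‖g‖ ≤ 1) (hg1 : g 1 = 1)
    (C : 𝒜) : 0 ≤ g (star C * C) := by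
  letI : PartialOrder 𝒜 := CStarAlgebra.spectralOrder 𝒜
  haveI : StarOrderedRing 𝒜 := CStarAlgebra.spectralOrderedRing 𝒜
  set b : 𝒜 := star C * C with hbdef
  set r : ℝ := ‖b‖ with hrdef
  have hb : IsSelfAdjoint b := IsSelfAdjoint.star_mul_self C
  have hb0 : (0 : 𝒜) ≤ b := star_mul_self_nonneg C
  have hble : b ≤ algebraMap ℝ 𝒜 r := hb.le_algebraMap_norm_self
  set d : 𝒜 := algebraMap ℝ 𝒜 r - b with hddef
  have halgsa : IsSelfAdjoint (algebraMap ℝ 𝒜 r) := IsSelfAdjoint.algebraMap 𝒜 (by rfl)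
  have hdsa : IsSelfAdjoint d := halgsa.sub hb
  have hd0 : (0 : 𝒜) ≤ d := sub_nonneg.mpr hble
  have hdle : d ≤ algebraMap ℝ 𝒜 r := by
    rw [hddef]
    exact sub_le_self _ hb0
  have hdnorm : ‖d‖ ≤ r := by
    rw [CStarAlgebra.norm_le_iff_le_algebraMap d (norm_nonneg b) hd0]
    exact hdle
  have him_b : (g b).im = 0 := aux_im_eq_zero g hg hg1 hb
  have him_d : (g d).im = 0 := aux_im_eq_zero g hg hg1 hdsa
  have hgalg : g (algebraMap ℝ 𝒜 r) = (r : ℂ) := by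
    rw [IsScalarTower.algebraMap_apply ℝ ℂ 𝒜, Algebra.algebraMap_eq_smul_one, map_smul,
      hg1, smul_eq_mul, mul_one]
    exact congrFun Complex.coe_algebraMap r
  have hgb : g b = (r : ℂ) - g d := by
    have : g d = g (algebraMap ℝ 𝒜 r) - g b := by rw [hddef, map_sub]
    rw [this, hgalg]; ring
  have habsd : ‖g d‖ ≤ r := by
    calc ‖g d‖ = ‖g d‖ := rfl
      _ ≤ ‖g‖ * ‖d‖ := g.le_opNorm d
      _ ≤ 1 * r := by gcongr
      _ = r := one_mul r
  rw [Complex.nonneg_iff]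
  constructor
  · have : (g b).re = r - (g d).re := by rw [hgb]; simp
    rw [this]
    have : (g d).re ≤ ‖g d‖ := Complex.re_le_norm _
    linarith
  · rw [him_b]

/-- there exists a norm-one unital functional attaining the norm at `Z`. -/
lemma aux_exists [Nontrivial 𝒜] (Z : 𝒜) (hZ : IsSelfAdjoint Z)
    (hmem : (‖Z‖ : ℂ) ∈ spectrum ℂ Z) :
    ∃ g : 𝒜 →L[ℂ] ℂ, ‖g‖ ≤ 1 ∧ g 1 = 1 ∧ g Z = (‖Z‖ : ℂ) := by
  haveI := hZ.isStarNormal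
  set S := StarAlgebra.elemental ℂ Z with hSdef
  haveI : IsClosed (S : Set 𝒜) := StarAlgebra.elemental.isClosed ℂ Z
  haveI : Nontrivial S := ⟨1, 0, fun h => one_ne_zero (congrArg Subtype.val h : (1 : 𝒜) = 0)⟩
  have hmem' : (‖Z‖ : ℂ) ∈ spectrum ℂ (⟨Z, StarAlgebra.elemental.self_mem ℂ Z⟩ : S) := by
    rw [StarSubalgebra.spectrum_eq]
    exact hmem
  obtain ⟨φ, hφ⟩ := WeakDual.CharacterSpace.mem_spectrum_iff_exists.mp hmem'
  have hbd : ∀ x : S, ‖φ x‖ ≤ ‖x‖ := fun x =>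
    spectrum.norm_le_norm_of_mem (AlgHom.apply_mem_spectrum φ x)
  set p : Submodule ℂ 𝒜 := Subalgebra.toSubmodule S.toSubalgebra with hpdef
  have hmemp : ∀ y : 𝒜, y ∈ p ↔ y ∈ S := fun y => Iff.rfl
  let f₀ : p →ₗ[ℂ] ℂ :=
    { toFun := fun y => φ ⟨y.1, (hmemp y.1).mp y.2⟩
      map_add' := fun y z => by
        rw [← map_add φ]
        congr 1
      map_smul' := fun m y => by
        rw [← map_smul φ]
        congr 1 }
  have hf₀bd : ∀ y : p, ‖f₀ y‖ ≤ 1 * ‖y‖ := fun y => by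
    rw [one_mul]
    exact hbd ⟨y.1, (hmemp y.1).mp y.2⟩
  let f : p →L[ℂ] ℂ := f₀.mkContinuous 1 hf₀bd
  obtain ⟨g, hgext, hgnorm⟩ := exists_extension_norm_eq p f
  have h1p : (1 : 𝒜) ∈ p := (hmemp 1).mpr (one_mem S)
  have hZp : Z ∈ p := (hmemp Z).mpr (StarAlgebra.elemental.self_mem ℂ Z)
  refine ⟨g, ?_, ?_, ?_⟩
  · rw [hgnorm]
    exact f₀.mkContinuous_norm_le zero_le_one hf₀bd
  · have := hgext ⟨1, h1p⟩
    simp only [f] at this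
    rw [this]
    show φ ⟨(1 : 𝒜), _⟩ = 1
    have : (⟨(1 : 𝒜), (hmemp 1).mp h1p⟩ : S) = 1 := rfl
    rw [this, map_one]
  · have := hgext ⟨Z, hZp⟩
    simp only [f] at this
    rw [this]
    exact hφ

end Aux

/-- Let `A, B` be nonzero elements of a unital C*-algebra with `A*B = 0`.  Then
`‖A + λB‖² = ‖A‖² + |λ|²‖B‖²` for all `λ ∈ ℂ` iff there is a state `ω` with
`ω(A*A) = ‖A‖²` and `ω(B*B) = ‖B‖²`. -/
theorem pythagoras_orthogonal_of_orthogonal_ranges_iff_state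
    {𝒜 : Type*} [NormedRing 𝒜] [StarRing 𝒜] [CStarRing 𝒜] [CompleteSpace 𝒜]
    [NormedAlgebra ℂ 𝒜] [StarModule ℂ 𝒜]
    (A B : 𝒜) (hA0 : A ≠ 0) (hB0 : B ≠ 0) (hAB : star A * B = 0) :
    (∀ l : ℂ, ‖A + l • B‖ ^ 2 = ‖A‖ ^ 2 + ‖l‖ ^ 2 * ‖B‖ ^ 2) ↔
      ∃ ω : 𝒜 →ₗ[ℂ] ℂ, (∀ C : 𝒜, 0 ≤ ω (star C * C)) ∧ ω 1 = 1 ∧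
        ω (star A * A) = (‖A‖ ^ 2 : ℝ) ∧ ω (star B * B) = (‖B‖ ^ 2 : ℝ) := by
  letI : CStarAlgebra 𝒜 := { }
  haveI : Nontrivial 𝒜 := ⟨A, 0, hA0⟩
  have hBA : star B * A = 0 := by
    have h := congrArg star hAB
    rwa [star_mul, star_star, star_zero] at h
  have hXsa : IsSelfAdjoint (star A * A) := IsSelfAdjoint.star_mul_self A
  have hYsa : IsSelfAdjoint (star B * B) := IsSelfAdjoint.star_mul_self B
  have hXnorm : ‖star A * A‖ = ‖A‖ ^ 2 := by rw [CStarRing.norm_star_mul_self, sq]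
  have hYnorm : ‖star B * B‖ = ‖B‖ ^ 2 := by rw [CStarRing.norm_star_mul_self, sq]
  have hmulkey : ∀ l : ℂ, star (A + l • B) * (A + l • B)
      = star A * A + ((‖l‖ ^ 2 : ℝ) : ℂ) • (star B * B) := by
    intro l
    have e1 : star A * (l • B) = l • (star A * B) := mul_smul_comm l (star A) B
    have e2 : (star l • star B) * A = star l • (star B * A) := smul_mul_assoc _ _ _
    have e3 : (star l • star B) * (l • B) = (star l * l) • (star B * B) := by
      rw [smul_mul_assoc, mul_smul_comm, smul_smul]
    have hconj : star l * l = ((‖l‖ ^ 2 : ℝ) : ℂ) := by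
      have h' : star l * l = l * starRingEnd ℂ l := mul_comm _ _
      rw [h', Complex.mul_conj]
      norm_cast
      rw [Complex.normSq_eq_norm_sq]
    rw [star_add, star_smul, add_mul, mul_add, mul_add, e1, e2, e3, hAB, hBA, hconj,
      smul_zero, smul_zero, add_zero, zero_add]
  have hnorm2 : ∀ l : ℂ, ‖A + l • B‖ ^ 2
      = ‖star A * A + ((‖l‖ ^ 2 : ℝ) : ℂ) • (star B * B)‖ := by
    intro l
    rw [← hmulkey l, CStarRing.norm_star_mul_self, sq]
  constructor
  · intro hpyth
    set Z : 𝒜 := star A * A + ((1 : ℝ) : ℂ) • (star B * B) with hZdef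
    have hZsa : IsSelfAdjoint Z := hXsa.add (IsSelfAdjoint.smul (show star ((1:ℝ):ℂ) = ((1:ℝ):ℂ) from Complex.conj_ofReal 1) hYsa)
    have hZnorm : ‖Z‖ = ‖A‖ ^ 2 + ‖B‖ ^ 2 := by
      have h1 := hpyth 1
      have h2 := hnorm2 1
      rw [norm_one, one_pow] at h1 h2
      rw [← h2, h1, one_mul]
    have hZmem : ((‖Z‖ : ℝ) : ℂ) ∈ spectrum ℂ Z := by
      letI : PartialOrder 𝒜 := CStarAlgebra.spectralOrder 𝒜
      haveI : StarOrderedRing 𝒜 := CStarAlgebra.spectralOrderedRing 𝒜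
      have hY0 : (0 : 𝒜) ≤ ((1 : ℝ) : ℂ) • (star B * B) := by
        have : ((1 : ℝ) : ℂ) • (star B * B) = star B * B := by norm_num
        rw [this]
        exact star_mul_self_nonneg B
      have hZ0 : (0 : 𝒜) ≤ Z := add_nonneg (star_mul_self_nonneg A) hY0
      exact (IsSelfAdjoint.coe_mem_spectrum_complex hZsa).mpr
        (CStarAlgebra.norm_mem_spectrum_of_nonneg hZ0)
    obtain ⟨g, hg, hg1, hgZ⟩ := aux_exists Z hZsa hZmem
    have himX : (g (star A * A)).im = 0 := aux_im_eq_zero g hg hg1 hXsa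
    have himY : (g (star B * B)).im = 0 := aux_im_eq_zero g hg hg1 hYsa
    have habs : ∀ v : 𝒜, ‖g v‖ ≤ ‖v‖ := by
      intro v
      calc ‖g v‖ = ‖g v‖ := rfl
        _ ≤ ‖g‖ * ‖v‖ := g.le_opNorm v
        _ ≤ 1 * ‖v‖ := by gcongr
        _ = ‖v‖ := one_mul _
    have hreX : (g (star A * A)).re ≤ ‖A‖ ^ 2 := by
      calc (g (star A * A)).re ≤ ‖g (star A * A)‖ := Complex.re_le_norm _
        _ ≤ ‖star A * A‖ := habs _
        _ = ‖A‖ ^ 2 := hXnorm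
    have hreY : (g (star B * B)).re ≤ ‖B‖ ^ 2 := by
      calc (g (star B * B)).re ≤ ‖g (star B * B)‖ := Complex.re_le_norm _
        _ ≤ ‖star B * B‖ := habs _
        _ = ‖B‖ ^ 2 := hYnorm
    have hsum : g (star A * A) + g (star B * B) = ((‖A‖ ^ 2 + ‖B‖ ^ 2 : ℝ) : ℂ) := by
      have hz1 : Z = star A * A + star B * B := by
        rw [hZdef]; norm_num
      have : g (star A * A) + g (star B * B) = g Z := by rw [hz1, map_add]
      rw [this, hgZ, hZnorm]
    have hre : (g (star A * A)).re + (g (star B * B)).re = ‖A‖ ^ 2 + ‖B‖ ^ 2 := by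
      have := congrArg Complex.re hsum
      rw [Complex.add_re, Complex.ofReal_re] at this
      exact this
    have heX : (g (star A * A)).re = ‖A‖ ^ 2 := by linarith
    have heY : (g (star B * B)).re = ‖B‖ ^ 2 := by linarith
    refine ⟨g.toLinearMap, fun C => aux_pos g hg hg1 C, hg1, ?_, ?_⟩
    · show g (star A * A) = ((‖A‖ ^ 2 : ℝ) : ℂ)
      exact Complex.ext (by rw [Complex.ofReal_re]; exact heX)
        (by rw [Complex.ofReal_im]; exact himX)
    · show g (star B * B) = ((‖B‖ ^ 2 : ℝ) : ℂ)
      exact Complex.ext (by rw [Complex.ofReal_re]; exact heY)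
        (by rw [Complex.ofReal_im]; exact himY)
  · rintro ⟨ω, hpos, hω1, hωA, hωB⟩ l
    letI : PartialOrder 𝒜 := CStarAlgebra.spectralOrder 𝒜
    haveI : StarOrderedRing 𝒜 := CStarAlgebra.spectralOrderedRing 𝒜
    have hωnonneg : ∀ v : 𝒜, 0 ≤ v → 0 ≤ ω v := by
      intro v hv
      rw [StarOrderedRing.nonneg_iff] at hv
      induction hv using AddSubmonoid.closure_induction with
      | mem x hx =>
        obtain ⟨u, rfl⟩ := hx
        exact hpos u
      | zero => rw [map_zero]
      | add x y _ _ hx hy =>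
        rw [map_add]
        exact add_nonneg hx hy
    set W : 𝒜 := star A * A + ((‖l‖ ^ 2 : ℝ) : ℂ) • (star B * B) with hWdef
    have hWnorm : ‖A + l • B‖ ^ 2 = ‖W‖ := hnorm2 l
    have hupper : ‖W‖ ≤ ‖A‖ ^ 2 + ‖l‖ ^ 2 * ‖B‖ ^ 2 := by
      calc ‖W‖ ≤ ‖star A * A‖ + ‖((‖l‖ ^ 2 : ℝ) : ℂ) • (star B * B)‖ := norm_add_le _ _
        _ = ‖A‖ ^ 2 + ‖l‖ ^ 2 * ‖B‖ ^ 2 := by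
            rw [hXnorm, norm_smul, Complex.norm_real, Real.norm_eq_abs,
              abs_of_nonneg (by positivity : (0 : ℝ) ≤ ‖l‖ ^ 2), hYnorm]
    have hωW : ω W = ((‖A‖ ^ 2 + ‖l‖ ^ 2 * ‖B‖ ^ 2 : ℝ) : ℂ) := by
      rw [hWdef, map_add, map_smul, hωA, hωB, smul_eq_mul]
      push_cast
      ring
    have hWsa : IsSelfAdjoint W := hXsa.add (IsSelfAdjoint.smul (show star ((‖l‖^2:ℝ):ℂ) = ((‖l‖^2:ℝ):ℂ) from Complex.conj_ofReal _) hYsa)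
    have hWle : W ≤ algebraMap ℝ 𝒜 ‖W‖ := hWsa.le_algebraMap_norm_self
    have h0 : 0 ≤ ω (algebraMap ℝ 𝒜 ‖W‖ - W) := hωnonneg _ (sub_nonneg.mpr hWle)
    have hωalg : ω (algebraMap ℝ 𝒜 ‖W‖) = ((‖W‖ : ℝ) : ℂ) := by
      rw [IsScalarTower.algebraMap_apply ℝ ℂ 𝒜, Algebra.algebraMap_eq_smul_one, map_smul,
        hω1, smul_eq_mul, mul_one]
      exact congrFun Complex.coe_algebraMap _
    have hlower : ‖A‖ ^ 2 + ‖l‖ ^ 2 * ‖B‖ ^ 2 ≤ ‖W‖ := by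
      rw [map_sub, hωalg, hωW, Complex.nonneg_iff] at h0
      have := h0.1
      simp only [Complex.sub_re, Complex.ofReal_re] at this
      linarith
    rw [hWnorm]
    exact le_antisymm hupper hlower
end
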